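/- arXiv:1407.4734 — 9 statements merged into one kernel-verified Lean document; each statement's English description precedes it below -/
import Mathlib

section
/- Let g : ℤ → ℤ satisfy g(k) ≤ 1 for all k. Fix b ∈ ℤ with g(b) < 0, and suppose there exists k < b with ∑_{n=k}^{b} g(n) ≥ 0; let a be the largest such k. For each k with a ≤ k ≤ b, the set {n ≥ k : ∑_{j=k}^{n} g(j) ≤ 0} is nonempty and contains an element ≤ b; define τ(k) to be its minimum. Then for every z with a ≤ z ≤ b, the number of indices k with a ≤ k ≤ b, g(k) = 1 and τ(k) = z equals max(−g(z), 0). -/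
/-- **Pathwise allocation lemma** (Lemma 3.2, rescaled integer form).
Let `g : ℤ → ℤ` with `g k ≤ 1` for all `k`, let `b` satisfy `g b < 0`, and let `a` be the
largest `k < b` with `∑_{n=k}^{b} g n ≥ 0` (assumed to exist).  For `a ≤ k ≤ b` the set
`{n ≥ k : ∑_{j=k}^{n} g j ≤ 0}` is nonempty with an element `≤ b`; if `τ k` denotes its
minimum, then for every `a ≤ z ≤ b` the number of `k ∈ [a,b]` with `g k = 1` and
`τ k = z` equals `max (-g z) 0`. -/
theorem pathwise_allocation (g : ℤ → ℤ) (hg : ∀ k, g k ≤ 1) (b : ℤ) (hb : g b < 0)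
    (a : ℤ) (ha : IsGreatest {k : ℤ | k < b ∧ 0 ≤ ∑ n ∈ Finset.Icc k b, g n} a)
    (τ : ℤ → ℤ)
    (hτ : ∀ k, a ≤ k → k ≤ b →
      IsLeast {n : ℤ | k ≤ n ∧ ∑ j ∈ Finset.Icc k n, g j ≤ 0} (τ k)) :
    (∀ k, a ≤ k → k ≤ b →
      ∃ n, k ≤ n ∧ n ≤ b ∧ ∑ j ∈ Finset.Icc k n, g j ≤ 0) ∧
    (∀ z, a ≤ z → z ≤ b →
      (((Finset.Icc a b).filter (fun k => g k = 1 ∧ τ k = z)).card : ℤ)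
        = max (-g z) 0) := by
  obtain ⟨⟨hab, hSab⟩, hamax⟩ := ha
  set F : ℤ → ℤ := fun n => ∑ j ∈ Finset.Ioc (a - 1) n, g j with hFdef
  have hIccIoc : ∀ k n : ℤ, Finset.Icc k n = Finset.Ioc (k - 1) n := by
    intro k n; ext x; simp only [Finset.mem_Icc, Finset.mem_Ioc]; omega
  have hS : ∀ k n : ℤ, a ≤ k → k ≤ n + 1 →
      ∑ j ∈ Finset.Icc k n, g j = F n - F (k - 1) := by
    intro k n hk hkn
    have hdisj : Disjoint (Finset.Ioc (a - 1) (k - 1)) (Finset.Ioc (k - 1) n) := by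
      rw [Finset.disjoint_left]
      intro x hx hx'
      simp only [Finset.mem_Ioc] at hx hx'
      omega
    have hun : Finset.Ioc (a - 1) (k - 1) ∪ Finset.Ioc (k - 1) n = Finset.Ioc (a - 1) n :=
      Finset.Ioc_union_Ioc_eq_Ioc (by omega) (by omega)
    have h := Finset.sum_union (f := g) hdisj
    rw [hun] at h
    rw [hIccIoc]
    simp only [hFdef]
    linarith
  have hFa1 : F (a - 1) = 0 := by simp [hFdef]
  have hstep : ∀ n : ℤ, a - 1 ≤ n → F (n + 1) = F n + g (n + 1) := by
    intro n hn
    have h := hS (n + 1) (n + 1) (by omega) (by omega)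
    have h' : n + 1 - 1 = n := by ring
    rw [Finset.Icc_self, Finset.sum_singleton, h'] at h
    omega
  have hFa : F a = g a := by
    have h := hstep (a - 1) le_rfl
    have h' : a - 1 + 1 = a := by ring
    rw [h'] at h
    omega
  have hFbnn : 0 ≤ F b := by
    have h := hS a b le_rfl (by omega)
    rw [show a - 1 = a - 1 from rfl] at h
    omega
  have hFm : ∀ m : ℤ, a ≤ m → m ≤ b - 1 → F b < F m := by
    intro m h1 h2
    rcases eq_or_lt_of_le h2 with h3 | h3
    · have hst := hstep (b - 1) (by omega)
      have h' : b - 1 + 1 = b := by ring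
      rw [h'] at hst
      rw [h3]
      omega
    · by_contra h
      push_neg at h
      have hmem : m + 1 ∈ {k : ℤ | k < b ∧ 0 ≤ ∑ n ∈ Finset.Icc k b, g n} := by
        refine ⟨by omega, ?_⟩
        rw [hS (m + 1) b (by omega) (by omega)]
        have h' : m + 1 - 1 = m := by ring
        rw [h']
        omega
      have := hamax hmem
      omega
  have hFb : F b = 0 := by
    have h := hFm a le_rfl (by omega)
    have := hg a
    omega
  have hFnn : ∀ m : ℤ, a - 1 ≤ m → m ≤ b → 0 ≤ F m := by
    intro m h1 h2
    rcases eq_or_lt_of_le h1 with h3 | h3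
    · rw [← h3, hFa1]
    · rcases eq_or_lt_of_le h2 with h4 | h4
      · rw [h4, hFb]
      · have := hFm m (by omega) (by omega)
        omega
  have part1 : ∀ k, a ≤ k → k ≤ b →
      ∃ n, k ≤ n ∧ n ≤ b ∧ ∑ j ∈ Finset.Icc k n, g j ≤ 0 := by
    intro k h1 h2
    refine ⟨b, h2, le_refl b, ?_⟩
    rw [hS k b h1 (by omega)]
    have := hFnn (k - 1) (by omega) (by omega)
    omega
  refine ⟨part1, ?_⟩
  intro z hz1 hz2
  have hmemA : ∀ k, k ∈ (Finset.Icc a b).filter (fun k => g k = 1 ∧ τ k = z) →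
      a ≤ k ∧ k < z ∧ F z ≤ F (k - 1) ∧ ∀ n, k ≤ n → n ≤ z - 1 → F (k - 1) < F n := by
    intro k hk
    simp only [Finset.mem_filter, Finset.mem_Icc] at hk
    obtain ⟨⟨hka, hkb⟩, hgk, hτk⟩ := hk
    obtain ⟨⟨hkτ, hSτ⟩, hmin⟩ := hτ k hka hkb
    rw [hτk] at hkτ hSτ
    have hFz : F z ≤ F (k - 1) := by
      rw [hS k z hka (by omega)] at hSτ
      omega
    have hchain : ∀ n, k ≤ n → n ≤ z - 1 → F (k - 1) < F n := by
      intro n hn1 hn2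
      by_contra h
      push_neg at h
      have hmem : n ∈ {n : ℤ | k ≤ n ∧ ∑ j ∈ Finset.Icc k n, g j ≤ 0} := by
        refine ⟨hn1, ?_⟩
        rw [hS k n hka (by omega)]
        omega
      have := hmin hmem
      rw [hτk] at this
      omega
    have hklt : k < z := by
      rcases lt_or_eq_of_le hkτ with h | h
      · exact h
      · exfalso
        subst h
        have hst := hstep (k - 1) (by omega)
        have h' : k - 1 + 1 = k := by ring
        rw [h'] at hst
        omega
    exact ⟨hka, hklt, hFz, hchain⟩
  have hcard : ((Finset.Icc a b).filter (fun k => g k = 1 ∧ τ k = z)).card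
      = (Finset.Ico (F z) (F (z - 1))).card := by
    apply Finset.card_bij (fun k _ => F (k - 1))
    · intro k hk
      obtain ⟨hka, hklt, hFz, hchain⟩ := hmemA k hk
      simp only [Finset.mem_Ico]
      exact ⟨hFz, hchain (z - 1) (by omega) le_rfl⟩
    · intro k hk k' hk' heq
      obtain ⟨hka, hklt, hFz, hchain⟩ := hmemA k hk
      obtain ⟨hka', hklt', hFz', hchain'⟩ := hmemA k' hk'
      by_contra hne
      rcases lt_trichotomy k k' with h | h | h
      · have := hchain (k' - 1) (by omega) (by omega)
        omega
      · exact hne h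
      · have := hchain' (k - 1) (by omega) (by omega)
        omega
    · intro ℓ hℓ
      simp only [Finset.mem_Ico] at hℓ
      obtain ⟨hℓ1, hℓ2⟩ := hℓ
      have hℓ0 : 0 ≤ ℓ := le_trans (hFnn z (by omega) hz2) hℓ1
      set T := (Finset.Icc (a - 1) (z - 1)).filter (fun m => F m ≤ ℓ) with hT
      have hTne : T.Nonempty := by
        refine ⟨a - 1, Finset.mem_filter.mpr ⟨Finset.mem_Icc.mpr ⟨le_rfl, by omega⟩, ?_⟩⟩
        rw [hFa1]
        omega
      set m := T.max' hTne with hm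
      have hmT := T.max'_mem hTne
      have hmmax : ∀ x ∈ T, x ≤ m := fun x hx => T.le_max' x hx
      rw [← hm] at hmT
      simp only [hT, Finset.mem_filter, Finset.mem_Icc] at hmT
      obtain ⟨⟨hm1, hm2⟩, hm3⟩ := hmT
      have hmne : m ≠ z - 1 := by
        intro h
        rw [h] at hm3
        omega
      have hchain : ∀ n, m + 1 ≤ n → n ≤ z - 1 → ℓ < F n := by
        intro n h1 h2
        by_contra h
        push_neg at h
        have hnT : n ∈ T :=
          Finset.mem_filter.mpr ⟨Finset.mem_Icc.mpr ⟨by omega, h2⟩, h⟩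
        have := hmmax n hnT
        omega
      have hFk : F (m + 1) = F m + g (m + 1) := hstep m hm1
      have hgk1 : g (m + 1) = 1 := by
        have h1 := hchain (m + 1) le_rfl (by omega)
        have := hg (m + 1)
        omega
      have hFm_eq : F m = ℓ := by
        have h1 := hchain (m + 1) le_rfl (by omega)
        omega
      refine ⟨m + 1, ?_, ?_⟩
      · simp only [Finset.mem_filter, Finset.mem_Icc]
        refine ⟨⟨by omega, by omega⟩, hgk1, ?_⟩
        obtain ⟨⟨hkτ, hSτ⟩, hmin⟩ := hτ (m + 1) (by omega) (by omega)
        have hup : τ (m + 1) ≤ z := by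
          refine hmin ⟨by omega, ?_⟩
          rw [hS (m + 1) z (by omega) (by omega)]
          have h' : m + 1 - 1 = m := by ring
          rw [h', hFm_eq]
          omega
        by_contra hne
        have hlt : τ (m + 1) ≤ z - 1 := by omega
        have hch := hchain (τ (m + 1)) hkτ hlt
        rw [hS (m + 1) (τ (m + 1)) (by omega) (by omega)] at hSτ
        have h' : m + 1 - 1 = m := by ring
        rw [h', hFm_eq] at hSτ
        omega
      · have h' : m + 1 - 1 = m := by ring
        rw [h', hFm_eq]
  rw [hcard, Int.card_Ico]
  have hstz : F z = F (z - 1) + g z := by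
    have h := hstep (z - 1) (by omega)
    have h' : z - 1 + 1 = z := by ring
    rw [h'] at h
    exact h
  rw [Int.toNat_eq_max]
  have h1 : F (z - 1) - F z = -g z := by omega
  rw [h1]
end

section
/- Let n ≥ 1 and let ξ₁, …, ξₙ be integers with ξᵢ ≤ 1 for all i. Set S₀ = 0 and Sₖ = ξ₁ + ⋯ + ξₖ. Then the number of indices j ∈ {1, …, n} such that S_{j−1} < Sₖ for all k ∈ {j, …, n} equals Sₙ − min{S₀, S₁, …, Sₙ}. -/
/-- **Deterministic path identity for skip-free walks** (core of Lemma 4.1(a)).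
Let `n ≥ 1` and `ξ 1, …, ξ n` be integers with `ξ i ≤ 1`.  With
`S k = ξ 1 + ⋯ + ξ k` (so `S 0 = 0`), the number of indices `j ∈ {1, …, n}` such that
`S (j-1) < S k` for all `k ∈ {j, …, n}` equals `S n - min {S 0, S 1, …, S n}`. -/
theorem skip_free_path_identity (n : ℕ) (hn : 1 ≤ n) (ξ : ℕ → ℤ)
    (hξ : ∀ i, 1 ≤ i → i ≤ n → ξ i ≤ 1)
    (S : ℕ → ℤ) (hS : ∀ k, S k = ∑ i ∈ Finset.Icc 1 k, ξ i) :
    (((Finset.Icc 1 n).filter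
        (fun j => ∀ k ∈ Finset.Icc j n, S (j - 1) < S k)).card : ℤ)
      = S n - (Finset.Icc 0 n).inf' ⟨0, by simp⟩ S := by
  have key : ∀ d t (h : t + d = n),
      (((Finset.Icc (t+1) n).filter
          (fun j => ∀ k ∈ Finset.Icc j n, S (j - 1) < S k)).card : ℤ)
        = S n - (Finset.Icc t n).inf' ⟨n, by simp; omega⟩ S := by
    intro d
    induction d with
    | zero =>
      intro t ht
      have : t = n := by omega
      subst this
      rw [Finset.Icc_eq_empty (by omega)]
      simp
    | succ d ih =>
      intro t ht
      have h1 : t + 1 ≤ n := by omega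
      have hne : (Finset.Icc (t+1) n).Nonempty := ⟨t+1, by simp [h1]⟩
      have hIH := ih (t+1) (by omega)
      set M := (Finset.Icc (t+1) n).inf' hne S with hM
      have hinf : (Finset.Icc t n).inf' ⟨n, by simp; omega⟩ S = S t ⊓ M := by
        apply le_antisymm
        · refine le_inf (Finset.inf'_le _ (by simp; omega)) ?_
          apply Finset.le_inf'
          intro b hb
          simp [Finset.mem_Icc] at hb
          exact Finset.inf'_le _ (by simp [Finset.mem_Icc]; omega)
        · apply Finset.le_inf'
          intro b hb
          simp [Finset.mem_Icc] at hb
          rcases eq_or_lt_of_le hb.1 with h | h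
          · exact inf_le_left.trans (by rw [h])
          · exact inf_le_right.trans (Finset.inf'_le _ (by simp [Finset.mem_Icc]; omega))
      have hstep : S (t+1) ≤ S t + 1 := by
        rw [hS (t+1), hS t, Finset.sum_Icc_succ_top (by omega)]
        have := hξ (t+1) (by omega) (by omega)
        linarith
      have hMle : M ≤ S (t+1) := Finset.inf'_le _ (by simp [Finset.mem_Icc]; omega)
      have hins2 : Finset.Icc (t+1) n = insert (t+1) (Finset.Icc (t+2) n) := by
        ext x; simp [Finset.mem_Icc, Finset.mem_insert]; omega
      have hPiff : (∀ k ∈ Finset.Icc (t+1) n, S ((t+1) - 1) < S k) ↔ S t < M := by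
        simp only [Nat.add_sub_cancel]
        exact (Finset.lt_inf'_iff hne).symm
      rw [hins2, Finset.filter_insert]
      by_cases hP : ∀ k ∈ Finset.Icc (t+1) n, S ((t+1) - 1) < S k
      · rw [if_pos hP, Finset.card_insert_of_notMem (by simp)]
        have hlt : S t < M := hPiff.mp hP
        have hEq : S t ⊓ M = S t := min_eq_left hlt.le
        rw [hinf, hEq]
        push_cast
        rw [show (((Finset.Icc (t+1+1) n).filter
            (fun j => ∀ k ∈ Finset.Icc j n, S (j - 1) < S k)).card : ℤ) = S n - M from hIH]
        omega
      · rw [if_neg hP]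
        have hge : M ≤ S t := by
          by_contra h
          exact hP (hPiff.mpr (by omega))
        have hEq : S t ⊓ M = M := min_eq_right hge
        rw [hinf, hEq]
        exact hIH
  simpa using key n 0 (by omega)
end

section
/- Let ξ, ξ₁, ξ₂, … be independent identically distributed integer-valued random variables with P(ξ > 1) = 0. Let Sₙ = ξ₁ + ⋯ + ξₙ and N = min{n ≥ 1 : Sₙ ≤ 0} (with N = ∞ if no such n exists). Then for every n ≥ 1, E[min(N, n)] ≥ E[max(Sₙ, 0)]. -/
open MeasureTheory ProbabilityTheory Finset
open scoped Classical ENNReal NNReal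

lemma count_claim (x : ℕ → ℤ) (n : ℕ) (hx : ∀ i < n, x i ≤ 1) :
    ∀ m, m ≤ n → ∀ k, k < m →
      (∑ i ∈ Finset.range k, x i) + 1 ≤
        (((Finset.range m).filter
          (fun k => ∀ i < k, ∑ j ∈ Finset.range i, x j < ∑ j ∈ Finset.range k, x j)).card : ℤ) := by
  intro m
  induction m with
  | zero => intro _ k hk; omega
  | succ m ih =>
    intro hm k hk
    have hm' : m ≤ n := by omega
    have hsplit : ((Finset.range (m+1)).filter
          (fun k => ∀ i < k, ∑ j ∈ Finset.range i, x j < ∑ j ∈ Finset.range k, x j)).card =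
        ((Finset.range m).filter
          (fun k => ∀ i < k, ∑ j ∈ Finset.range i, x j < ∑ j ∈ Finset.range k, x j)).card +
        (if (∀ i < m, ∑ j ∈ Finset.range i, x j < ∑ j ∈ Finset.range m, x j) then 1 else 0) := by
      rw [Finset.range_add_one, Finset.filter_insert]
      split_ifs with h
      · rw [Finset.card_insert_of_notMem (by simp)]
      · simp
    by_cases hPm : ∀ i < m, ∑ j ∈ Finset.range i, x j < ∑ j ∈ Finset.range m, x j
    · rw [if_pos hPm] at hsplit
      rcases Nat.lt_succ_iff_lt_or_eq.mp hk with hk' | rfl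
      · have := ih hm' k hk'; omega
      · rcases Nat.eq_zero_or_pos k with rfl | hm0
        · simp only [Finset.range_zero, Finset.filter_empty, Finset.card_empty,
            Finset.sum_range_zero, Finset.sum_empty] at hsplit ⊢
          omega
        · have h1 := ih hm' (k-1) (by omega)
          have h2 : ∑ i ∈ Finset.range k, x i = (∑ i ∈ Finset.range (k-1), x i) + x (k-1) := by
            have hh : k - 1 + 1 = k := by omega
            rw [← hh, Finset.sum_range_succ, hh]
          have h3 : x (k-1) ≤ 1 := hx _ (by omega)
          omega
    · rw [if_neg hPm] at hsplit
      rcases Nat.lt_succ_iff_lt_or_eq.mp hk with hk' | rfl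
      · have := ih hm' k hk'; omega
      · push_neg at hPm
        obtain ⟨i, hi, hle⟩ := hPm
        have := ih hm' i hi
        omega

lemma sInf_union_eq_card (x : ℕ → ℤ) (n : ℕ) (hn : 1 ≤ n) :
    sInf ({m : ℕ | 1 ≤ m ∧ ∑ i ∈ Finset.range m, x i ≤ 0} ∪ {n})
      = ((Finset.range n).filter
          (fun k => ∀ m, 1 ≤ m → m ≤ k → 0 < ∑ i ∈ Finset.range m, x i)).card := by
  set T : Set ℕ := {m : ℕ | 1 ≤ m ∧ ∑ i ∈ Finset.range m, x i ≤ 0} ∪ {n} with hT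
  have hnT : n ∈ T := Or.inr rfl
  have hle : sInf T ≤ n := Nat.sInf_le hnT
  have hmemT := Nat.sInf_mem ⟨n, hnT⟩
  have hfe : (Finset.range n).filter
      (fun k => ∀ m, 1 ≤ m → m ≤ k → 0 < ∑ i ∈ Finset.range m, x i) = Finset.range (sInf T) := by
    ext k
    simp only [Finset.mem_filter, Finset.mem_range]
    constructor
    · rintro ⟨hkn, hpos⟩
      by_contra hc
      push_neg at hc
      rcases hmemT with ⟨h1, h2⟩ | h3
      · exact absurd h2 (not_le.mpr (hpos _ h1 hc))
      · simp only [Set.mem_singleton_iff] at h3; omega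
    · intro hk
      have hkn : k < n := lt_of_lt_of_le hk hle
      refine ⟨hkn, fun m h1 h2 => ?_⟩
      have hmT : m ∉ T := Nat.notMem_of_lt_sInf (lt_of_le_of_lt h2 hk)
      rw [hT] at hmT
      simp only [Set.mem_union, Set.mem_setOf_eq, Set.mem_singleton_iff, not_or, not_and_or] at hmT
      rcases hmT.1 with h | h
      · omega
      · omega
  rw [hfe, Finset.card_range]

lemma joint_law {Ω : Type*} [MeasurableSpace Ω] (μ : Measure Ω) [IsProbabilityMeasure μ]
    (ξ : ℕ → Ω → ℤ) (hmeas : ∀ i, Measurable (ξ i))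
    (hindep : iIndepFun ξ μ)
    (hident : ∀ i, IdentDistrib (ξ i) (ξ 0) μ μ)
    {k : ℕ} (e : Fin k → ℕ) (he : Function.Injective e) :
    μ.map (fun ω (i : Fin k) => ξ (e i) ω) = Measure.pi (fun _ => μ.map (ξ 0)) := by
  have hpm : IsProbabilityMeasure (μ.map (ξ 0)) :=
    Measure.isProbabilityMeasure_map (hmeas 0).aemeasurable
  refine (Measure.pi_eq fun s hs => ?_).symm
  have hf : Measurable (fun ω (i : Fin k) => ξ (e i) ω) :=
    measurable_pi_lambda _ fun i => hmeas (e i)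
  rw [Measure.map_apply hf (MeasurableSet.univ_pi hs)]
  set sets : ℕ → Set ℤ := fun j => ⋃ (i : Fin k) (_ : e i = j), s i with hsets
  have hsets_e : ∀ i : Fin k, sets (e i) = s i := by
    intro i
    apply subset_antisymm
    · intro z hz
      simp only [hsets, Set.mem_iUnion] at hz
      obtain ⟨i', hi', hz⟩ := hz
      rwa [he hi'] at hz
    · intro z hz
      simp only [hsets, Set.mem_iUnion]
      exact ⟨i, rfl, hz⟩
  have hpre : (fun ω (i : Fin k) => ξ (e i) ω) ⁻¹' (Set.pi Set.univ s)
      = ⋂ j ∈ Finset.image e Finset.univ, ξ j ⁻¹' sets j := by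
    ext ω
    simp only [Set.mem_preimage, Set.mem_pi, Set.mem_univ, forall_true_left,
      Set.mem_iInter, Finset.mem_image, Finset.mem_univ, true_and]
    constructor
    · rintro h j ⟨i, rfl⟩
      rw [hsets_e i]; exact h i
    · intro h i
      rw [← hsets_e i]; exact h _ ⟨i, rfl⟩
  rw [hpre, hindep.measure_inter_preimage_eq_mul _ (fun j _ => MeasurableSet.of_discrete),
    Finset.prod_image (fun i _ i' _ h => he h)]
  refine Finset.prod_congr rfl fun i _ => ?_
  rw [hsets_e i, ← Measure.map_apply (hmeas (e i)) MeasurableSet.of_discrete,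
    (hident (e i)).map_eq]

lemma sum_ite_lt (f : ℕ → ℤ) {m k : ℕ} (hmk : m ≤ k) :
    (∑ i : Fin k, if (i : ℕ) < m then f i else 0) = ∑ i ∈ Finset.range m, f i := by
  rw [Fin.sum_univ_eq_sum_range (fun i => if i < m then f i else 0) k, ← Finset.sum_filter]
  congr 1
  ext a
  simp only [Finset.mem_filter, Finset.mem_range]
  omega

lemma dual_measure {Ω : Type*} [MeasurableSpace Ω] (μ : Measure Ω) [IsProbabilityMeasure μ]
    (ξ : ℕ → Ω → ℤ) (hmeas : ∀ i, Measurable (ξ i))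
    (hindep : iIndepFun ξ μ)
    (hident : ∀ i, IdentDistrib (ξ i) (ξ 0) μ μ)
    (hjoint : ∀ {k : ℕ} (e : Fin k → ℕ), Function.Injective e →
      μ.map (fun ω (i : Fin k) => ξ (e i) ω) = Measure.pi (fun _ => μ.map (ξ 0)))
    (k : ℕ) :
    μ {ω | ∀ m, 1 ≤ m → m ≤ k → 0 < ∑ i ∈ Finset.range m, ξ i ω}
      = μ {ω | ∀ i < k, ∑ j ∈ Finset.range i, ξ j ω < ∑ j ∈ Finset.range k, ξ j ω} := by
  set C : Set (Fin k → ℤ) :=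
    {x | ∀ m, 1 ≤ m → m ≤ k → 0 < ∑ i : Fin k, if (i : ℕ) < m then x i else 0} with hC
  have hCm : MeasurableSet C := by
    have : C = ⋂ m : ℕ, {x : Fin k → ℤ | 1 ≤ m → m ≤ k →
        0 < ∑ i : Fin k, if (i : ℕ) < m then x i else 0} := by
      ext x; simp [hC]
    rw [this]
    refine MeasurableSet.iInter fun m => ?_
    by_cases h1 : 1 ≤ m ∧ m ≤ k
    · have : {x : Fin k → ℤ | 1 ≤ m → m ≤ k →
          0 < ∑ i : Fin k, if (i : ℕ) < m then x i else 0}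
          = (fun x : Fin k → ℤ => ∑ i : Fin k, if (i : ℕ) < m then x i else 0) ⁻¹' {z | 0 < z} := by
        ext x; simp [h1.1, h1.2]
      rw [this]
      have hg : Measurable (fun x : Fin k → ℤ => ∑ i : Fin k, if (i : ℕ) < m then x i else 0) := by
        refine Finset.measurable_sum _ fun i _ => ?_
        by_cases hi : (i : ℕ) < m
        · simpa [hi] using measurable_pi_apply i
        · simpa [hi] using measurable_const
      exact hg MeasurableSet.of_discrete
    · have : {x : Fin k → ℤ | 1 ≤ m → m ≤ k →
          0 < ∑ i : Fin k, if (i : ℕ) < m then x i else 0} = Set.univ := by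
        ext x; simp only [Set.mem_setOf_eq, Set.mem_univ, iff_true]; intro a b; omega
      rw [this]; exact MeasurableSet.univ
  have hid : (fun ω (i : Fin k) => ξ ((i : ℕ)) ω) ⁻¹' C
      = {ω | ∀ m, 1 ≤ m → m ≤ k → 0 < ∑ i ∈ Finset.range m, ξ i ω} := by
    ext ω
    simp only [Set.mem_preimage, hC, Set.mem_setOf_eq]
    refine forall_congr' fun m => imp_congr_right fun _ => imp_congr_right fun hm => ?_
    rw [sum_ite_lt (fun i => ξ i ω) hm]
  have hrevsum : ∀ ω, ∀ m, 1 ≤ m → m ≤ k →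
      (∑ i ∈ Finset.range m, ξ (k - 1 - i) ω)
        = (∑ j ∈ Finset.range k, ξ j ω) - ∑ j ∈ Finset.range (k - m), ξ j ω := by
    intro ω m h1 h2
    have hbij : (∑ i ∈ Finset.range m, ξ (k - 1 - i) ω)
        = ∑ j ∈ Finset.Ico (k - m) k, ξ j ω := by
      refine Finset.sum_nbij' (fun i => k - 1 - i) (fun j => k - 1 - j) ?_ ?_ ?_ ?_ ?_
      · intro a ha; simp only [Finset.mem_range] at ha; simp only [Finset.mem_Ico]; omega
      · intro a ha; simp only [Finset.mem_Ico] at ha; simp only [Finset.mem_range]; omega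
      · intro a ha; simp only [Finset.mem_range] at ha; omega
      · intro a ha; simp only [Finset.mem_Ico] at ha; omega
      · intro a ha; rfl
    have hsplit : (∑ j ∈ Finset.range (k - m), ξ j ω) + ∑ j ∈ Finset.Ico (k - m) k, ξ j ω
        = ∑ j ∈ Finset.range k, ξ j ω := by
      rw [Finset.range_eq_Ico, Finset.range_eq_Ico]
      exact Finset.sum_Ico_consecutive (fun j => ξ j ω) (m := 0) (n := k - m) (k := k) (by omega) (by omega)
    omega
  have hrev : (fun ω (i : Fin k) => ξ (k - 1 - (i : ℕ)) ω) ⁻¹' C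
      = {ω | ∀ i < k, ∑ j ∈ Finset.range i, ξ j ω < ∑ j ∈ Finset.range k, ξ j ω} := by
    ext ω
    simp only [Set.mem_preimage, hC, Set.mem_setOf_eq]
    constructor
    · intro h i hi
      have hm := h (k - i) (by omega) (by omega)
      rw [sum_ite_lt (fun j => ξ (k - 1 - j) ω) (by omega : k - i ≤ k)] at hm
      rw [hrevsum ω (k - i) (by omega) (by omega)] at hm
      have hkk : k - (k - i) = i := by omega
      rw [hkk] at hm
      omega
    · intro h m h1 h2
      rw [sum_ite_lt (fun j => ξ (k - 1 - j) ω) h2, hrevsum ω m h1 h2]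
      have := h (k - m) (by omega)
      omega
  have h1 : μ {ω | ∀ m, 1 ≤ m → m ≤ k → 0 < ∑ i ∈ Finset.range m, ξ i ω}
      = Measure.pi (fun _ : Fin k => μ.map (ξ 0)) C := by
    have hmf : Measurable (fun ω (i : Fin k) => ξ (i : ℕ) ω) :=
      measurable_pi_lambda _ fun i => hmeas i
    rw [← hjoint (fun i : Fin k => (i : ℕ)) Fin.val_injective, Measure.map_apply hmf hCm, hid]
  have h2 : μ {ω | ∀ i < k, ∑ j ∈ Finset.range i, ξ j ω < ∑ j ∈ Finset.range k, ξ j ω}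
      = Measure.pi (fun _ : Fin k => μ.map (ξ 0)) C := by
    have hmf : Measurable (fun ω (i : Fin k) => ξ (k - 1 - (i : ℕ)) ω) :=
      measurable_pi_lambda _ fun i => hmeas _
    rw [← hjoint (fun i : Fin k => k - 1 - (i : ℕ))
        (fun a b hab => by have := a.isLt; have := b.isLt; simp only [] at hab; exact Fin.ext (by omega)),
      Measure.map_apply hmf hCm, hrev]
  rw [h1, h2]

/-- **Intermediate inequality in Lemma 4.1(a)**.
Let `ξ 0, ξ 1, …` be i.i.d. integer-valued random variables that are skip-free to the
right, i.e. `P(ξ > 1) = 0`.  Let `S n = ξ 0 + ⋯ + ξ (n-1)` and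
`N = min {n ≥ 1 : S n ≤ 0}` (`N = ∞` if there is no such `n`).  Then for every `n ≥ 1`,
`E[min (N, n)] ≥ E[max (S n, 0)]`, where `min (N ω, n)` is encoded as
`sInf ({m : 1 ≤ m ∧ S m ω ≤ 0} ∪ {n})`. -/
theorem min_firstPassage_ge_positive_part
    {Ω : Type*} [MeasurableSpace Ω] (μ : Measure Ω) [IsProbabilityMeasure μ]
    (ξ : ℕ → Ω → ℤ) (hmeas : ∀ i, Measurable (ξ i))
    (hindep : iIndepFun ξ μ)
    (hident : ∀ i, IdentDistrib (ξ i) (ξ 0) μ μ)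
    (hskip : μ {ω | 1 < ξ 0 ω} = 0)
    (n : ℕ) (hn : 1 ≤ n) :
    ∫⁻ ω, ENNReal.ofReal ((max (∑ i ∈ Finset.range n, ξ i ω) 0 : ℤ)) ∂μ
      ≤ ∫⁻ ω,
          ((sInf ({m : ℕ | 1 ≤ m ∧ ∑ i ∈ Finset.range m, ξ i ω ≤ 0} ∪ {n}) : ℕ)
            : ENNReal) ∂μ := by
  have hSmeas : ∀ m : ℕ, Measurable (fun ω => ∑ i ∈ Finset.range m, ξ i ω) :=
    fun m => Finset.measurable_sum _ fun i _ => hmeas i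
  set A : ℕ → Set Ω := fun k => {ω | ∀ m, 1 ≤ m → m ≤ k → 0 < ∑ i ∈ Finset.range m, ξ i ω}
    with hA
  set B : ℕ → Set Ω :=
    fun k => {ω | ∀ i < k, ∑ j ∈ Finset.range i, ξ j ω < ∑ j ∈ Finset.range k, ξ j ω} with hB
  have hAm : ∀ k, MeasurableSet (A k) := by
    intro k
    have h : A k = ⋂ m : ℕ, {ω | 1 ≤ m → m ≤ k → 0 < ∑ i ∈ Finset.range m, ξ i ω} := by
      ext ω; simp [hA]
    rw [h]
    refine MeasurableSet.iInter fun m => ?_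
    by_cases h1 : 1 ≤ m ∧ m ≤ k
    · have h2 : {ω | 1 ≤ m → m ≤ k → 0 < ∑ i ∈ Finset.range m, ξ i ω}
          = (fun ω => ∑ i ∈ Finset.range m, ξ i ω) ⁻¹' {z | 0 < z} := by
        ext ω; simp [h1.1, h1.2]
      rw [h2]; exact (hSmeas m) MeasurableSet.of_discrete
    · have h2 : {ω | 1 ≤ m → m ≤ k → 0 < ∑ i ∈ Finset.range m, ξ i ω} = Set.univ := by
        ext ω; simp only [Set.mem_setOf_eq, Set.mem_univ, iff_true]; intro a b; omega
      rw [h2]; exact MeasurableSet.univ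
  have hBm : ∀ k, MeasurableSet (B k) := by
    intro k
    have h : B k = ⋂ i : ℕ,
        {ω | i < k → 0 < (∑ j ∈ Finset.range k, ξ j ω) - ∑ j ∈ Finset.range i, ξ j ω} := by
      ext ω; simp only [hB, Set.mem_setOf_eq, Set.mem_iInter, sub_pos]
    rw [h]
    refine MeasurableSet.iInter fun i => ?_
    by_cases h1 : i < k
    · have h2 : {ω | i < k → 0 < (∑ j ∈ Finset.range k, ξ j ω) - ∑ j ∈ Finset.range i, ξ j ω}
          = (fun ω => (∑ j ∈ Finset.range k, ξ j ω) - ∑ j ∈ Finset.range i, ξ j ω)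
            ⁻¹' {z | 0 < z} := by
        ext ω; simp [h1]
      rw [h2]; exact ((hSmeas k).sub (hSmeas i)) MeasurableSet.of_discrete
    · have h2 : {ω | i < k → 0 < (∑ j ∈ Finset.range k, ξ j ω) - ∑ j ∈ Finset.range i, ξ j ω}
          = Set.univ := by
        ext ω; simp only [Set.mem_setOf_eq, Set.mem_univ, iff_true]; intro a; omega
      rw [h2]; exact MeasurableSet.univ
  -- RHS
  have hRHS : ∫⁻ ω, ((sInf ({m : ℕ | 1 ≤ m ∧ ∑ i ∈ Finset.range m, ξ i ω ≤ 0} ∪ {n}) : ℕ)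
      : ENNReal) ∂μ = ∑ k ∈ Finset.range n, μ (A k) := by
    have hpt : ∀ ω, ((sInf ({m : ℕ | 1 ≤ m ∧ ∑ i ∈ Finset.range m, ξ i ω ≤ 0} ∪ {n}) : ℕ)
        : ENNReal) = ∑ k ∈ Finset.range n, (A k).indicator (fun _ => (1 : ℝ≥0∞)) ω := by
      intro ω
      rw [sInf_union_eq_card (fun i => ξ i ω) n hn, Finset.card_filter, Nat.cast_sum]
      refine Finset.sum_congr rfl fun k _ => ?_
      by_cases h : ∀ m, 1 ≤ m → m ≤ k → 0 < ∑ i ∈ Finset.range m, ξ i ω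
      · simp [Set.indicator_apply, hA, h, Set.mem_setOf_eq]
      · simp [Set.indicator_apply, hA, h, Set.mem_setOf_eq]
    rw [lintegral_congr hpt,
      lintegral_finset_sum _ fun k _ => measurable_const.indicator (hAm k)]
    refine Finset.sum_congr rfl fun k _ => ?_
    rw [lintegral_indicator_const (hAm k), one_mul]
  -- a.e. bound
  have hnull : ∀ i, μ {ω | 1 < ξ i ω} = 0 := by
    intro i
    have h1 : μ {ω | 1 < ξ i ω} = μ.map (ξ i) {z | 1 < z} := by
      rw [Measure.map_apply (hmeas i) MeasurableSet.of_discrete]; rfl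
    rw [h1, (hident i).map_eq, Measure.map_apply (hmeas 0) MeasurableSet.of_discrete]
    exact hskip
  have hae : ∀ᵐ ω ∂μ, ∀ i < n, ξ i ω ≤ 1 := by
    have h0 : μ (⋃ i : ℕ, {ω | i < n ∧ 1 < ξ i ω}) = 0 := by
      refine measure_iUnion_null fun i => measure_mono_null ?_ (hnull i)
      intro ω hω; exact hω.2
    rw [ae_iff]
    refine measure_mono_null ?_ h0
    intro ω hω
    simp only [Set.mem_setOf_eq, not_forall] at hω
    obtain ⟨i, hi, hgt⟩ := hω
    exact Set.mem_iUnion.mpr ⟨i, hi, by omega⟩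
  have hle : ∀ᵐ ω ∂μ, ENNReal.ofReal ((max (∑ i ∈ Finset.range n, ξ i ω) 0 : ℤ))
      ≤ ∑ k ∈ Finset.range n, (B k).indicator (fun _ => (1 : ℝ≥0∞)) ω := by
    filter_upwards [hae] with ω hω
    set c : ℕ := ((Finset.range n).filter
      (fun k => ∀ i < k, ∑ j ∈ Finset.range i, ξ j ω < ∑ j ∈ Finset.range k, ξ j ω)).card with hc
    have hclaim := count_claim (fun i => ξ i ω) n hω n le_rfl (n - 1) (by omega)
    have hsum : ∑ i ∈ Finset.range n, ξ i ω
        = (∑ i ∈ Finset.range (n - 1), ξ i ω) + ξ (n - 1) ω := by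
      have hh : n - 1 + 1 = n := by omega
      rw [← hh, Finset.sum_range_succ, hh]
    have hxn : ξ (n - 1) ω ≤ 1 := hω _ (by omega)
    have hmax : (max (∑ i ∈ Finset.range n, ξ i ω) 0 : ℤ) ≤ (c : ℤ) := by
      rw [hc]; rw [max_le_iff]; constructor
      · omega
      · positivity
    calc ENNReal.ofReal ((max (∑ i ∈ Finset.range n, ξ i ω) 0 : ℤ))
        ≤ ENNReal.ofReal ((c : ℤ) : ℝ) := ENNReal.ofReal_le_ofReal (by exact_mod_cast hmax)
      _ = (c : ℝ≥0∞) := by rw [Int.cast_natCast, ENNReal.ofReal_natCast]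
      _ = ∑ k ∈ Finset.range n, (B k).indicator (fun _ => (1 : ℝ≥0∞)) ω := by
          rw [hc, Finset.card_filter, Nat.cast_sum]
          refine Finset.sum_congr rfl fun k _ => ?_
          by_cases h : ∀ i < k, ∑ j ∈ Finset.range i, ξ j ω < ∑ j ∈ Finset.range k, ξ j ω
          · simp [Set.indicator_apply, hB, h, Set.mem_setOf_eq]
          · simp [Set.indicator_apply, hB, h, Set.mem_setOf_eq]
  calc ∫⁻ ω, ENNReal.ofReal ((max (∑ i ∈ Finset.range n, ξ i ω) 0 : ℤ)) ∂μ
      ≤ ∫⁻ ω, ∑ k ∈ Finset.range n, (B k).indicator (fun _ => (1 : ℝ≥0∞)) ω ∂μ :=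
        lintegral_mono_ae hle
    _ = ∑ k ∈ Finset.range n, μ (B k) := by
        rw [lintegral_finset_sum _ fun k _ => measurable_const.indicator (hBm k)]
        exact Finset.sum_congr rfl fun k _ => by rw [lintegral_indicator_const (hBm k), one_mul]
    _ = ∑ k ∈ Finset.range n, μ (A k) :=
        Finset.sum_congr rfl fun k _ =>
          (dual_measure μ ξ hmeas hindep hident (fun e he => joint_law μ ξ hmeas hindep hident e he) k).symm
    _ = _ := hRHS.symm
end

section
/- Let T be a random variable taking values in the positive integers (almost surely finite), and let T₁, T₂, … be independent copies of T. Define the renewal function U(n) = ∑_{k≥1} P(T₁ + ⋯ + T_k ≤ n), which is finite for every n. Then for every 0 ≤ α < 1, E[U(T)^α] < ∞. -/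
open MeasureTheory ProbabilityTheory
open scoped ENNReal

/-- **Lemma 4.5 in renewal form**.
Let `T 0, T 1, …` be i.i.d. random variables taking values in the positive integers,
and let `U n = ∑_{k ≥ 1} P(T 0 + ⋯ + T (k-1) ≤ n)` be the renewal function.  Then for
every `0 ≤ α < 1`, `E[U(T 0)^α] < ∞`. -/
theorem renewal_function_moment_finite
    {Ω : Type*} [MeasurableSpace Ω] (μ : Measure Ω) [IsProbabilityMeasure μ]
    (T : ℕ → Ω → ℕ) (hmeas : ∀ i, Measurable (T i))
    (hindep : iIndepFun T μ)
    (hident : ∀ i, IdentDistrib (T i) (T 0) μ μ)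
    (hpos : ∀ i ω, 1 ≤ T i ω)
    (U : ℕ → ℝ≥0∞)
    (hU : ∀ n, U n = ∑' k : ℕ, μ {ω | ∑ i ∈ Finset.range (k + 1), T i ω ≤ n}) :
    (∀ n, U n < ⊤) ∧
    ∀ α : ℝ, 0 ≤ α → α < 1 → ∫⁻ ω, (U (T 0 ω)) ^ α ∂μ < ⊤ := by
  classical
  set S : ℕ → Ω → ℕ := fun k ω => ∑ i ∈ Finset.range (k + 1), T i ω with hS
  have hU' : ∀ n, U n = ∑' k : ℕ, μ {ω | S k ω ≤ n} := by
    simp only [hS]; exact hU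
  have hSmeas : ∀ k, Measurable (S k) := by
    intro k
    simp only [hS]
    exact Finset.measurable_sum _ fun i _ => hmeas i
  have hAmeas : ∀ k n, MeasurableSet {ω | S k ω ≤ n} := fun k n =>
    (hSmeas k) measurableSet_Iic
  have hSge : ∀ k ω, k + 1 ≤ S k ω := by
    intro k ω
    calc k + 1 = ∑ _i ∈ Finset.range (k + 1), 1 := by simp
      _ ≤ S k ω := Finset.sum_le_sum fun i _ => hpos i ω
  have hSsucc : ∀ k ω, S (k + 1) ω = S k ω + T (k + 1) ω := by
    intro k ω
    simp only [hS]
    exact Finset.sum_range_succ (fun i => T i ω) (k + 1)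
  have hSmono : ∀ (ω : Ω) ⦃j k : ℕ⦄, j ≤ k → S j ω ≤ S k ω := by
    intro ω j k hjk
    exact Finset.sum_le_sum_of_subset (Finset.range_subset_range.mpr (by omega))
  have hSlt : ∀ (ω : Ω) ⦃j k : ℕ⦄, j < k → S j ω < S k ω := by
    intro ω j k hjk
    have h1 : S j ω < S (j + 1) ω := by
      rw [hSsucc]
      have := hpos (j + 1) ω
      omega
    exact lt_of_lt_of_le h1 (hSmono ω hjk)
  -- U n ≤ n
  have hUle : ∀ n, U n ≤ n := by
    intro n
    rw [hU' n]
    have h0 : ∀ k ∉ Finset.range n, μ {ω | S k ω ≤ n} = 0 := by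
      intro k hk
      simp only [Finset.mem_range, not_lt] at hk
      have : {ω | S k ω ≤ n} = ∅ := by
        ext ω
        simp only [Set.mem_setOf_eq, Set.mem_empty_iff_false, iff_false, not_le]
        exact lt_of_lt_of_le (by omega) (hSge k ω)
      rw [this, measure_empty]
    rw [tsum_eq_sum h0]
    calc ∑ k ∈ Finset.range n, μ {ω | S k ω ≤ n} ≤ ∑ _k ∈ Finset.range n, 1 :=
        Finset.sum_le_sum fun k _ => prob_le_one
      _ = n := by simp
  have hU0 : U 0 = 0 := le_antisymm (by simpa using hUle 0) zero_le
  -- monotonicity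
  have hUmono : Monotone U := by
    intro a b hab
    rw [hU' a, hU' b]
    exact ENNReal.tsum_le_tsum fun k => measure_mono fun ω hω => le_trans hω hab
  -- increments at most 1
  have hUstep : ∀ n, U (n + 1) ≤ U n + 1 := by
    intro n
    have hsplit : ∀ k, μ {ω | S k ω ≤ n + 1} = μ {ω | S k ω ≤ n} + μ (S k ⁻¹' {n + 1}) := by
      intro k
      have hun : {ω | S k ω ≤ n + 1} = {ω | S k ω ≤ n} ∪ S k ⁻¹' {n + 1} := by
        ext ω
        simp only [Set.mem_setOf_eq, Set.mem_union, Set.mem_preimage, Set.mem_singleton_iff]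
        omega
      have hdis : Disjoint {ω | S k ω ≤ n} (S k ⁻¹' {n + 1}) := by
        rw [Set.disjoint_left]
        intro ω h1 h2
        simp only [Set.mem_setOf_eq] at h1
        simp only [Set.mem_preimage, Set.mem_singleton_iff] at h2
        omega
      rw [hun, measure_union hdis ((hSmeas k) (measurableSet_singleton _))]
    rw [hU' n, hU' (n + 1)]
    have heq : ∑' k, μ {ω | S k ω ≤ n + 1}
        = (∑' k, μ {ω | S k ω ≤ n}) + ∑' k, μ (S k ⁻¹' {n + 1}) := by
      rw [← ENNReal.tsum_add]
      exact tsum_congr hsplit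
    rw [heq]
    gcongr
    have hb : ∑' k, μ (S k ⁻¹' {n + 1}) ≤ μ (⋃ k, S k ⁻¹' {n + 1}) := by
      apply tsum_meas_le_meas_iUnion_of_disjoint μ
        (fun k => (hSmeas k) (measurableSet_singleton _))
      intro j k hjk
      rw [Function.onFun, Set.disjoint_left]
      intro ω h1 h2
      simp only [Set.mem_preimage, Set.mem_singleton_iff] at h1 h2
      rcases hjk.lt_or_gt with h | h
      · exact absurd (hSlt ω h) (by omega)
      · exact absurd (hSlt ω h) (by omega)
    exact hb.trans prob_le_one
  -- key independence inequality : μ {T 0 > n} * U n ≤ 1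
  have hkey : ∀ n, μ {ω | n < T 0 ω} * U n ≤ 1 := by
    intro n
    have hindep' : ∀ k : ℕ, IndepFun (S k) (T (k + 1)) μ := by
      intro k
      have h := hindep.indepFun_sum_range_succ hmeas (k + 1)
      have hfun : S k = ∑ j ∈ Finset.range (k + 1), T j := by
        funext ω
        simp only [hS, Finset.sum_apply]
      rw [hfun]
      exact h
    have hinter : ∀ k, μ ({ω | S k ω ≤ n} ∩ {ω | n < T (k + 1) ω})
        = μ {ω | S k ω ≤ n} * μ {ω | n < T 0 ω} := by
      intro k
      have h := (hindep' k).measure_inter_preimage_eq_mul (Set.Iic n) (Set.Ioi n)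
        measurableSet_Iic measurableSet_Ioi
      have hid : μ (T (k + 1) ⁻¹' Set.Ioi n) = μ {ω | n < T 0 ω} :=
        (hident (k + 1)).measure_mem_eq (s := Set.Ioi n) measurableSet_Ioi
      calc μ ({ω | S k ω ≤ n} ∩ {ω | n < T (k + 1) ω})
          = μ (S k ⁻¹' Set.Iic n ∩ T (k + 1) ⁻¹' Set.Ioi n) := rfl
        _ = μ (S k ⁻¹' Set.Iic n) * μ (T (k + 1) ⁻¹' Set.Ioi n) := h
        _ = μ {ω | S k ω ≤ n} * μ {ω | n < T 0 ω} := by rw [hid]; exact rfl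
    have hdisj : Pairwise (Function.onFun Disjoint fun k => {ω | S k ω ≤ n} ∩ {ω | n < T (k + 1) ω}) := by
      have key : ∀ j k : ℕ, j < k →
          Disjoint ({ω | S j ω ≤ n} ∩ {ω | n < T (j + 1) ω})
            ({ω | S k ω ≤ n} ∩ {ω | n < T (k + 1) ω}) := by
        intro j k hjk
        rw [Set.disjoint_left]
        rintro ω ⟨hj1, hj2⟩ ⟨hk1, _⟩
        simp only [Set.mem_setOf_eq] at hj1 hj2 hk1
        have h1 : n < S (j + 1) ω := by rw [hSsucc]; omega
        have h2 : S (j + 1) ω ≤ S k ω := hSmono ω (by omega)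
        omega
      intro j k hjk
      rcases hjk.lt_or_gt with h | h
      · exact key j k h
      · exact (key k j h).symm
    calc μ {ω | n < T 0 ω} * U n
        = ∑' k, μ {ω | n < T 0 ω} * μ {ω | S k ω ≤ n} := by
          rw [hU' n, ENNReal.tsum_mul_left]
      _ = ∑' k, μ ({ω | S k ω ≤ n} ∩ {ω | n < T (k + 1) ω}) :=
          tsum_congr fun k => by rw [hinter k, mul_comm]
      _ ≤ μ (⋃ k, {ω | S k ω ≤ n} ∩ {ω | n < T (k + 1) ω}) :=
          tsum_meas_le_meas_iUnion_of_disjoint μ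
            (fun k => (hAmeas k n).inter ((hmeas (k + 1)) measurableSet_Ioi)) hdisj
      _ ≤ 1 := prob_le_one
  refine ⟨fun n => lt_of_le_of_lt (hUle n) (ENNReal.natCast_lt_top n), ?_⟩
  intro α hα0 hα1
  have htwo0 : (2 : ℝ≥0∞) ≠ 0 := two_ne_zero
  have htwot : (2 : ℝ≥0∞) ≠ ⊤ := ENNReal.ofNat_ne_top
  -- the integral as a sum
  set p : ℕ → ℝ≥0∞ := fun n => μ (T 0 ⁻¹' {n}) with hp
  have hint : ∫⁻ ω, U (T 0 ω) ^ α ∂μ = ∑' n, U n ^ α * p n := by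
    have hg : Measurable fun n : ℕ => U n ^ α := measurable_of_countable _
    rw [← lintegral_map hg (hmeas 0), lintegral_countable']
    exact tsum_congr fun n => by
      rw [Measure.map_apply (hmeas 0) (measurableSet_singleton n)]
  set c : ℝ≥0∞ := (2 : ℝ≥0∞) ^ α with hc
  set w : ℕ → ℝ≥0∞ := fun j => ((2 : ℝ≥0∞) ^ j) ^ α with hw
  set A : ℕ → Set ℕ := fun j => {n : ℕ | (2 : ℝ≥0∞) ^ j ≤ U n} with hA
  set F : ℕ → ℕ → ℝ≥0∞ := fun j n => Set.indicator (A j) (fun _ => w j) n with hF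
  -- pointwise bound
  have hpern : ∀ n, U n ^ α ≤ 1 + c * ∑' j, F j n := by
    intro n
    by_cases h1 : U n < 1
    · exact le_trans (ENNReal.rpow_le_one h1.le hα0) le_self_add
    · push_neg at h1
      set P : ℕ → Prop := fun j => (2 : ℝ≥0∞) ^ j ≤ U n with hP
      have hPle : ∀ j, P j → j ≤ n := by
        intro j hj
        have h2 : ((2 : ℝ≥0∞)) ^ j ≤ (n : ℝ≥0∞) := hj.trans (hUle n)
        have h3 : ((2 ^ j : ℕ) : ℝ≥0∞) ≤ ((n : ℕ) : ℝ≥0∞) := by push_cast; exact h2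
        have h4 : 2 ^ j ≤ n := Nat.cast_le.mp h3
        have h5 : j < 2 ^ j := Nat.lt_two_pow_self
        omega
      have hP0 : P 0 := by simpa [hP] using h1
      set J := Nat.findGreatest P n with hJ
      have hPJ : P J := Nat.findGreatest_spec (Nat.zero_le n) hP0
      have hnotPJ : ¬ P (J + 1) := by
        intro hcon
        exact Nat.findGreatest_is_greatest (Nat.lt_succ_self J) (hPle _ hcon) hcon
      have hlt : U n < 2 ^ (J + 1) := not_le.mp hnotPJ
      have hrle : U n ^ α ≤ ((2 : ℝ≥0∞) ^ (J + 1)) ^ α := ENNReal.rpow_le_rpow hlt.le hα0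
      have heq : ((2 : ℝ≥0∞) ^ (J + 1)) ^ α = c * w J := by
        rw [pow_succ, ENNReal.mul_rpow_of_nonneg _ _ hα0, mul_comm]
      have hFJ : w J ≤ ∑' j, F j n := by
        have hmem : n ∈ A J := hPJ
        calc w J = F J n := by simp only [hF]; exact (Set.indicator_of_mem hmem fun _ => w J).symm
          _ ≤ ∑' j, F j n := ENNReal.le_tsum J
      calc U n ^ α ≤ c * w J := by rw [← heq]; exact hrle
        _ ≤ c * ∑' j, F j n := mul_le_mul_right hFJ c
        _ ≤ 1 + c * ∑' j, F j n := le_add_self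
  -- per-level bound
  set r : ℝ≥0∞ := (2 : ℝ≥0∞) ^ (α - 1) with hr
  have hBj : ∀ j, w j * μ (T 0 ⁻¹' A j) ≤ 2 * r ^ j := by
    intro j
    by_cases hAne : (A j).Nonempty
    swap
    · rw [Set.not_nonempty_iff_eq_empty.mp hAne]
      simp
    rcases j with _ | m
    · have hw0 : w 0 = 1 := by simp [hw]
      rw [hw0, one_mul, pow_zero, mul_one]
      exact le_trans prob_le_one one_le_two
    · have hm1 : sInf (A (m + 1)) ∈ A (m + 1) := Nat.sInf_mem hAne
      have hm1pos : sInf (A (m + 1)) ≠ 0 := by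
        intro h0
        rw [h0] at hm1
        have : (2 : ℝ≥0∞) ^ (m + 1) ≤ 0 := by
          have := hm1
          simp only [hA, Set.mem_setOf_eq, hU0] at this
          exact this
        exact pow_ne_zero (m + 1) htwo0 (le_antisymm this zero_le)
      obtain ⟨m0, hm0⟩ : ∃ m0, sInf (A (m + 1)) = m0 + 1 :=
        ⟨sInf (A (m + 1)) - 1, by omega⟩
      have hUm0 : (2 : ℝ≥0∞) ^ m ≤ U m0 := by
        have h1 : (2 : ℝ≥0∞) ^ (m + 1) ≤ U (m0 + 1) := by
          have := hm1
          rw [hm0] at this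
          exact this
        have h2 : U (m0 + 1) ≤ U m0 + 1 := hUstep m0
        have h3 : (2 : ℝ≥0∞) ^ m + 1 ≤ U m0 + 1 := by
          refine le_trans ?_ (h1.trans h2)
          have hone : (1 : ℝ≥0∞) ≤ (2 : ℝ≥0∞) ^ m := one_le_pow_of_one_le' one_le_two m
          calc (2 : ℝ≥0∞) ^ m + 1 ≤ (2 : ℝ≥0∞) ^ m + (2 : ℝ≥0∞) ^ m := by gcongr
            _ = 2 ^ (m + 1) := by ring
        exact (ENNReal.add_le_add_iff_right ENNReal.one_ne_top).mp h3
      have hsub : T 0 ⁻¹' A (m + 1) ⊆ {ω | m0 < T 0 ω} := by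
        intro ω hω
        have hle : sInf (A (m + 1)) ≤ T 0 ω := Nat.sInf_le hω
        simp only [Set.mem_setOf_eq]
        omega
      have hq : μ (T 0 ⁻¹' A (m + 1)) ≤ ((2 : ℝ≥0∞) ^ m)⁻¹ := by
        rw [ENNReal.le_inv_iff_mul_le]
        calc μ (T 0 ⁻¹' A (m + 1)) * (2 : ℝ≥0∞) ^ m
            ≤ μ {ω | m0 < T 0 ω} * U m0 :=
              mul_le_mul' (measure_mono hsub) hUm0
          _ ≤ 1 := hkey m0
      have halg : w (m + 1) * ((2 : ℝ≥0∞) ^ m)⁻¹ = 2 * r ^ (m + 1) := by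
        have e1 : ((2 : ℝ≥0∞) ^ (m + 1)) ^ α = (2 : ℝ≥0∞) ^ ((((m + 1) : ℕ) : ℝ) * α) := by
          rw [← ENNReal.rpow_natCast (2 : ℝ≥0∞) (m + 1), ← ENNReal.rpow_mul]
        have e2 : ((2 : ℝ≥0∞) ^ m)⁻¹ = (2 : ℝ≥0∞) ^ (-(m : ℝ)) := by
          rw [← ENNReal.rpow_natCast (2 : ℝ≥0∞) m, ← ENNReal.rpow_neg]
        have e3 : r ^ (m + 1) = (2 : ℝ≥0∞) ^ ((α - 1) * (((m + 1) : ℕ) : ℝ)) := by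
          rw [hr, ← ENNReal.rpow_natCast ((2 : ℝ≥0∞) ^ (α - 1)) (m + 1), ← ENNReal.rpow_mul]
        have e5 : 2 * r ^ (m + 1) = (2 : ℝ≥0∞) ^ ((1 : ℝ) + (α - 1) * (((m + 1) : ℕ) : ℝ)) := by
          rw [ENNReal.rpow_add _ _ htwo0 htwot, ENNReal.rpow_one, e3]
        simp only [hw]
        rw [e5, e1, e2, ← ENNReal.rpow_add _ _ htwo0 htwot]
        congr 1
        push_cast
        ring
      calc w (m + 1) * μ (T 0 ⁻¹' A (m + 1))
          ≤ w (m + 1) * ((2 : ℝ≥0∞) ^ m)⁻¹ := mul_le_mul_right hq _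
        _ = 2 * r ^ (m + 1) := halg
  -- summing the level sums
  have hterm : ∀ j, ∑' n, F j n * p n = w j * μ (T 0 ⁻¹' A j) := by
    intro j
    have h1 : ∀ n, F j n * p n = Set.indicator (A j) (fun n => w j * p n) n := by
      intro n
      by_cases hn : n ∈ A j <;> simp [hF, hn]
    rw [tsum_congr h1, ← tsum_subtype, ENNReal.tsum_mul_left]
    congr 1
    exact tsum_measure_preimage_singleton (Set.to_countable _)
      fun y _ => (hmeas 0) (measurableSet_singleton y)
  have hsum_p : ∑' n, p n = 1 := by
    have h := tsum_measure_preimage_singleton (μ := μ) (f := T 0)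
      (Set.countable_univ (α := ℕ)) (fun y _ => (hmeas 0) (measurableSet_singleton y))
    rw [Set.preimage_univ, measure_univ] at h
    rw [← tsum_univ fun n => p n]
    exact h
  have hrlt : r < 1 := ENNReal.rpow_lt_one_of_one_lt_of_neg ENNReal.one_lt_two (by linarith)
  have hfin : (1 - r)⁻¹ < ⊤ := by
    rw [ENNReal.inv_lt_top]
    exact tsub_pos_of_lt hrlt
  rw [hint]
  calc ∑' n, U n ^ α * p n
      ≤ ∑' n, (1 + c * ∑' j, F j n) * p n :=
        ENNReal.tsum_le_tsum fun n => mul_le_mul_left (hpern n) _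
    _ = ∑' n, (p n + c * ((∑' j, F j n) * p n)) :=
        tsum_congr fun n => by ring
    _ = (∑' n, p n) + c * ∑' n, (∑' j, F j n) * p n := by
        rw [ENNReal.tsum_add, ENNReal.tsum_mul_left]
    _ = 1 + c * ∑' n, ∑' j, F j n * p n := by
        rw [hsum_p]
        congr 1
        exact congrArg (c * ·) (tsum_congr fun n => (ENNReal.tsum_mul_right).symm)
    _ = 1 + c * ∑' j, ∑' n, F j n * p n := by rw [ENNReal.tsum_comm]
    _ = 1 + c * ∑' j, w j * μ (T 0 ⁻¹' A j) := by rw [tsum_congr hterm]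
    _ ≤ 1 + c * ∑' j, 2 * r ^ j :=
        add_le_add_right (mul_le_mul_right (ENNReal.tsum_le_tsum hBj) c) 1
    _ = 1 + c * (2 * (1 - r)⁻¹) := by rw [ENNReal.tsum_mul_left, ENNReal.tsum_geometric]
    _ < ⊤ := by
        rw [ENNReal.add_lt_top]
        refine ⟨ENNReal.one_lt_top, ?_⟩
        apply ENNReal.mul_lt_top
        · exact (ENNReal.rpow_ne_top_of_nonneg hα0 htwot).lt_top
        · exact ENNReal.mul_lt_top htwot.lt_top hfin
end

section
/- Let (sₙ)_{n≥0} be a nondecreasing sequence of reals with 0 ≤ sₙ < 1 for all n, and let 0 ≤ α < 1. Then ∑_{n=1}^{∞} (1 − s_{n−1})^{−α} (sₙ − s_{n−1}) ≤ 1/(1 − α). -/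
open Real

/-- Key step: for `0 < v ≤ u`, `(1-α) * u^(-α) * (u - v) ≤ u^(1-α) - v^(1-α)`. -/
lemma key_step {u v α : ℝ} (hv : 0 < v) (hvu : v ≤ u) (hα0 : 0 ≤ α) (hα1 : α < 1) :
    (1 - α) * u ^ (-α) * (u - v) ≤ u ^ (1 - α) - v ^ (1 - α) := by
  have hu : 0 < u := lt_of_lt_of_le hv hvu
  have hb := rpow_one_add_le_one_add_mul_self (s := v / u - 1)
    (by have : 0 < v / u := div_pos hv hu; linarith)
    (p := 1 - α) (by linarith) (by linarith)
  rw [add_sub_cancel] at hb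
  -- (v/u)^(1-α) ≤ 1 + (1-α)*(v/u - 1)
  have h2 : v ^ (1-α) / u ^ (1-α) ≤ 1 + (1-α) * (v/u - 1) := by
    rwa [Real.div_rpow hv.le hu.le] at hb
  have hupos : (0:ℝ) < u ^ (1-α) := Real.rpow_pos_of_pos hu _
  have h3 : v ^ (1-α) ≤ u ^ (1-α) * (1 + (1-α) * (v/u - 1)) := by
    rw [div_le_iff₀ hupos] at h2; linarith [h2]
  have h4 : u ^ (1-α) * ((1-α) * (v/u - 1)) = -((1-α) * u ^ (-α) * (u - v)) := by
    have : u ^ (1-α) * (v/u - 1) = u ^ (-α) * (v - u) := by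
      field_simp
      rw [show (1:ℝ) - α = -α + 1 by ring, Real.rpow_add hu, Real.rpow_one]
      ring
    calc u ^ (1-α) * ((1-α) * (v/u - 1)) = (1-α) * (u ^ (1-α) * (v/u - 1)) := by ring
      _ = (1-α) * (u ^ (-α) * (v - u)) := by rw [this]
      _ = -((1 - α) * u ^ (-α) * (u - v)) := by ring
  nlinarith [h3, h4]

/-- **Elementary series bound** (analytic step in the proof of Lemma 4.5).
If `(s n)` is nondecreasing with `0 ≤ s n < 1` and `0 ≤ α < 1`, then
`∑_{n=1}^∞ (1 - s (n-1))^{-α} (s n - s (n-1)) ≤ 1 / (1 - α)`. -/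
theorem series_bound (s : ℕ → ℝ) (hmono : Monotone s)
    (h0 : ∀ n, 0 ≤ s n) (h1 : ∀ n, s n < 1)
    (α : ℝ) (hα0 : 0 ≤ α) (hα1 : α < 1) :
    ∑' n : ℕ, (1 - s n) ^ (-α) * (s (n + 1) - s n) ≤ 1 / (1 - α) := by
  have h1α : (0:ℝ) < 1 - α := by linarith
  set f : ℕ → ℝ := fun n => (1 - s n) ^ (1 - α) / (1 - α) with hf
  have hterm : ∀ n, (1 - s n) ^ (-α) * (s (n+1) - s n) ≤ f n - f (n+1) := by
    intro n
    have h := key_step (u := 1 - s n) (v := 1 - s (n+1))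
      (by linarith [h1 (n+1)]) (by linarith [hmono (Nat.le_succ n)]) hα0 hα1
    have : (1 - s n) ^ (-α) * (s (n+1) - s n) ≤
        ((1 - s n) ^ (1-α) - (1 - s (n+1)) ^ (1-α)) / (1 - α) := by
      rw [le_div_iff₀ h1α]
      calc (1 - s n) ^ (-α) * (s (n+1) - s n) * (1 - α)
          = (1-α) * (1 - s n) ^ (-α) * ((1 - s n) - (1 - s (n+1))) := by ring
        _ ≤ _ := h
    simpa [hf, sub_div] using this
  have hnonneg : ∀ n, 0 ≤ (1 - s n) ^ (-α) * (s (n+1) - s n) := fun n =>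
    mul_nonneg (Real.rpow_nonneg (by linarith [h1 n]) _)
      (by linarith [hmono (Nat.le_succ n)])
  apply tsum_le_of_sum_range_le hnonneg
  intro N
  have htel : ∑ i ∈ Finset.range N, ((1 - s i) ^ (-α) * (s (i+1) - s i)) ≤ f 0 - f N := by
    have := Finset.sum_le_sum (fun i (_ : i ∈ Finset.range N) => hterm i)
    calc ∑ i ∈ Finset.range N, ((1 - s i) ^ (-α) * (s (i+1) - s i))
        ≤ ∑ i ∈ Finset.range N, (f i - f (i+1)) := this
      _ = f 0 - f N := by
          rw [← Finset.sum_range_sub' f]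
  have hfN : 0 ≤ f N := div_nonneg (Real.rpow_nonneg (by linarith [h1 N]) _) h1α.le
  have hf0 : f 0 ≤ 1 / (1 - α) := by
    have : (1 - s 0) ^ (1-α) ≤ 1 := by
      calc (1 - s 0) ^ (1-α) ≤ 1 ^ (1-α) :=
            Real.rpow_le_rpow (by linarith [h1 0]) (by linarith [h0 0]) h1α.le
        _ = 1 := Real.one_rpow _
    simp only [hf]
    gcongr
  linarith
end

section
/- Let p ∈ (0,1) with (1−p)/p not an integer. Let μ be the product probability measure on {0,1}^ℤ under which the coordinates are i.i.d. Bernoulli(p) (value 1 = heads with probability p), and let μ₀ be μ conditioned on the event {ω : ω(0) = 0}. Then there exists no measurable map T : {0,1}^ℤ → ℤ such that the pushforward of μ₀ under the map ω ↦ (n ↦ ω(T(ω) + n)) equals μ conditioned on the event {ω : ω(0) = 1}. -/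
open MeasureTheory ProbabilityTheory ENNReal Set
open scoped ENNReal

namespace ExtraHeadAux

abbrev Ω : Type := ℤ → Bool

/-- Basic cylinder sets. -/
def cyl (s : Finset ℤ) (f : ℤ → Bool) : Set Ω := {ω | ∀ i ∈ s, ω i = f i}

lemma measurableSet_eval (i : ℤ) (b : Bool) : MeasurableSet {ω : Ω | ω i = b} := by
  have h : {ω : Ω | ω i = b} = (fun ω : Ω => ω i) ⁻¹' {b} := rfl
  rw [h]
  exact measurable_pi_apply i (measurableSet_singleton b)

lemma measurableSet_cyl (s : Finset ℤ) (f : ℤ → Bool) : MeasurableSet (cyl s f) := by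
  have h : cyl s f = ⋂ i ∈ s, {ω : Ω | ω i = f i} := by
    ext ω; simp [cyl]
  rw [h]
  exact MeasurableSet.biInter s.countable_toSet fun i _ => measurableSet_eval i (f i)

def cylSet : Set (Set Ω) := {S | ∃ s f, S = cyl s f}

lemma isPiSystem_cylSet : IsPiSystem cylSet := by
  rintro _ ⟨s, f, rfl⟩ _ ⟨t, g, rfl⟩ ⟨ω₀, hω₀s, hω₀t⟩
  refine ⟨s ∪ t, fun i => if i ∈ s then f i else g i, ?_⟩
  ext ω
  constructor
  · rintro ⟨hs, ht⟩ i hi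
    by_cases his : i ∈ s
    · simpa [his] using hs i his
    · have hit : i ∈ t := by
        rcases Finset.mem_union.1 hi with h | h
        · exact absurd h his
        · exact h
      simpa [his] using ht i hit
  · intro h
    constructor
    · intro i hi
      have := h i (Finset.mem_union_left _ hi)
      simpa [hi] using this
    · intro i hi
      have := h i (Finset.mem_union_right _ hi)
      by_cases his : i ∈ s
      · have hfg : f i = g i := (hω₀s i his).symm.trans (hω₀t i hi)
        simp only [his, if_true] at this
        rw [this, hfg]
      · simpa [his] using this

lemma generateFrom_cylSet :
    MeasurableSpace.generateFrom cylSet = (inferInstance : MeasurableSpace Ω) := by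
  apply le_antisymm
  · exact MeasurableSpace.generateFrom_le (by rintro _ ⟨s, f, rfl⟩; exact measurableSet_cyl s f)
  · have hev : ∀ i : ℤ,
        @Measurable Ω Bool (MeasurableSpace.generateFrom cylSet) _ (fun ω : Ω => ω i) := by
      intro i
      refine @measurable_to_countable' Bool Ω _ _ (MeasurableSpace.generateFrom cylSet) _
        fun b => ?_
      apply MeasurableSpace.measurableSet_generateFrom
      refine ⟨{i}, fun _ => b, ?_⟩
      ext ω; simp [cyl]
    have hid : @Measurable Ω Ω (MeasurableSpace.generateFrom cylSet) _ (id : Ω → Ω) :=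
      (@measurable_pi_iff Ω ℤ (fun _ => Bool) (MeasurableSpace.generateFrom cylSet) _ id).mpr hev
    exact fun S hS => hid hS

lemma measure_eq_of_cyl (μ ν : Measure Ω) [IsProbabilityMeasure μ] [IsProbabilityMeasure ν]
    (h : ∀ s f, μ (cyl s f) = ν (cyl s f)) : μ = ν := by
  refine MeasureTheory.ext_of_generate_finite cylSet generateFrom_cylSet.symm
    isPiSystem_cylSet ?_ ?_
  · rintro _ ⟨s, f, rfl⟩; exact h s f
  · simp

/-- The shift by `n`. -/
def shift (n : ℤ) : Ω → Ω := fun ω k => ω (n + k)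

lemma measurable_shift (n : ℤ) : Measurable (shift n) :=
  measurable_pi_lambda _ fun k => measurable_pi_apply (n + k)

lemma shift_preimage_cyl (n : ℤ) (s : Finset ℤ) (f : ℤ → Bool) :
    shift n ⁻¹' cyl s f = cyl (s.image (n + ·)) (fun j => f (j - n)) := by
  ext ω
  simp only [cyl, mem_preimage, mem_setOf_eq, Finset.mem_image, shift]
  constructor
  · rintro h j ⟨i, hi, rfl⟩
    have := h i hi
    simpa [add_sub_cancel_left] using this
  · intro h i hi
    have := h (n + i) ⟨i, hi, rfl⟩
    simpa [add_sub_cancel_left] using this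

lemma shift_shift_neg (n : ℤ) (B : Set Ω) :
    shift (-n) ⁻¹' (shift n ⁻¹' B) = B := by
  rw [← Set.preimage_comp]
  have h : shift n ∘ shift (-n) = id := by
    funext ω k
    show ω (-n + (n + k)) = ω k
    have : -n + (n + k) = k := by ring
    rw [this]
  rw [h, Set.preimage_id]

lemma map_shift_eq (μ : Measure Ω) [IsProbabilityMeasure μ] (w : Bool → ℝ≥0∞)
    (hμ : ∀ (s : Finset ℤ) (f : ℤ → Bool), μ (cyl s f) = ∏ i ∈ s, w (f i)) (n : ℤ) :
    Measure.map (shift n) μ = μ := by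
  have : IsProbabilityMeasure (Measure.map (shift n) μ) :=
    Measure.isProbabilityMeasure_map (measurable_shift n).aemeasurable
  refine measure_eq_of_cyl _ _ fun s f => ?_
  rw [Measure.map_apply (measurable_shift n) (measurableSet_cyl s f),
      shift_preimage_cyl, hμ, hμ]
  rw [Finset.prod_image (by intro a _ b _ h; exact add_left_cancel h)]
  exact Finset.prod_congr rfl fun i _ => by rw [add_sub_cancel_left]

end ExtraHeadAux

open ExtraHeadAux

/-- **Nonexistence of non-randomized extra head schemes** (necessity in Theorem 1).
Let `p ∈ (0,1)` with `(1-p)/p` not an integer, let `μ` be the law of a doubly infinite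
i.i.d. Bernoulli(p) sequence of coins, and `μ₀` its conditioning on `{ω 0 = false}`.
Then there is no measurable `T : {0,1}^ℤ → ℤ` such that the shift by `T` maps `μ₀` to
`μ` conditioned on `{ω 0 = true}`. -/
theorem no_extra_head_scheme (p : ℝ) (hp0 : 0 < p) (hp1 : p < 1)
    (hpnotint : ¬ ∃ z : ℤ, (1 - p) / p = z)
    (μ : Measure (ℤ → Bool)) [IsProbabilityMeasure μ]
    (hμ : ∀ (s : Finset ℤ) (f : ℤ → Bool),
      μ {ω | ∀ i ∈ s, ω i = f i}
        = ∏ i ∈ s, (if f i then ENNReal.ofReal p else ENNReal.ofReal (1 - p)))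
    (μ₀ : Measure (ℤ → Bool)) (hμ₀ : μ₀ = μ[|{ω | ω 0 = false}]) :
    ¬ ∃ T : (ℤ → Bool) → ℤ, Measurable T ∧
      Measure.map (fun ω (k : ℤ) => ω (T ω + k)) μ₀ = μ[|{ω | ω 0 = true}] := by
  rintro ⟨T, hT, hmap⟩
  set w : Bool → ℝ≥0∞ := fun b => if b then ENNReal.ofReal p else ENNReal.ofReal (1 - p) with hw
  have hμc : ∀ (s : Finset ℤ) (f : ℤ → Bool), μ (cyl s f) = ∏ i ∈ s, w (f i) :=
    fun s f => hμ s f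
  set p' : ℝ≥0∞ := ENNReal.ofReal p with hp'
  set q' : ℝ≥0∞ := ENNReal.ofReal (1 - p) with hq'
  have hp'0 : p' ≠ 0 := (ENNReal.ofReal_pos.mpr hp0).ne'
  have hq'0 : q' ≠ 0 := (ENNReal.ofReal_pos.mpr (by linarith)).ne'
  have hq't : q' ≠ ⊤ := ENNReal.ofReal_ne_top
  have meas1 : MeasurableSet {ω : Ω | ω 0 = true} := measurableSet_eval 0 true
  have meas0 : MeasurableSet {ω : Ω | ω 0 = false} := measurableSet_eval 0 false
  have hS1 : μ {ω : Ω | ω 0 = true} = p' := by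
    have h := hμ {0} (fun _ => true)
    simpa using h
  have hS0 : μ {ω : Ω | ω 0 = false} = q' := by
    have h := hμ {0} (fun _ => false)
    simpa using h
  -- measurability of the random shift
  have hF : Measurable (fun ω : Ω => fun k : ℤ => ω (T ω + k)) := by
    apply measurable_pi_lambda
    intro k
    apply measurable_to_countable'
    intro b
    have h : (fun ω : Ω => ω (T ω + k)) ⁻¹' {b}
        = ⋃ n : ℤ, ({ω : Ω | T ω = n} ∩ {ω : Ω | ω (n + k) = b}) := by
      ext ω
      simp only [mem_preimage, mem_singleton_iff, mem_iUnion, mem_inter_iff, mem_setOf_eq]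
      constructor
      · intro hb; exact ⟨T ω, rfl, hb⟩
      · rintro ⟨n, rfl, hb⟩; exact hb
    rw [h]
    exact MeasurableSet.iUnion fun n =>
      (hT (measurableSet_singleton n)).inter (measurableSet_eval (n + k) b)
  -- the sets C n
  set C : ℤ → Set Ω := fun n =>
    shift (-n) ⁻¹' ({ω : Ω | ω 0 = false} ∩ {ω : Ω | T ω = n}) with hCdef
  have hCmeas : ∀ n, MeasurableSet (C n) := fun n =>
    (measurable_shift (-n)) (meas0.inter (hT (measurableSet_singleton n)))
  -- key identity
  have key : ∀ B : Set Ω, MeasurableSet B →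
      ∑' n : ℤ, μ (C n ∩ B) = q' * (p'⁻¹ * μ ({ω : Ω | ω 0 = true} ∩ B)) := by
    intro B hB
    have h1 : (μ[|{ω : Ω | ω 0 = true}]) B = p'⁻¹ * μ ({ω : Ω | ω 0 = true} ∩ B) := by
      rw [ProbabilityTheory.cond_apply meas1, hS1]
    have h2 : Measure.map (fun ω (k : ℤ) => ω (T ω + k)) μ₀ B
        = μ₀ ((fun ω (k : ℤ) => ω (T ω + k)) ⁻¹' B) := Measure.map_apply hF hB
    have hpre : (fun ω (k : ℤ) => ω (T ω + k)) ⁻¹' B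
        = ⋃ n : ℤ, ({ω : Ω | T ω = n} ∩ shift n ⁻¹' B) := by
      ext ω
      simp only [mem_preimage, mem_iUnion, mem_inter_iff, mem_setOf_eq]
      constructor
      · intro hb; exact ⟨T ω, rfl, hb⟩
      · rintro ⟨n, rfl, hb⟩; exact hb
    have hDmeas : ∀ n : ℤ, MeasurableSet ({ω : Ω | T ω = n} ∩ shift n ⁻¹' B) :=
      fun n => (hT (measurableSet_singleton n)).inter ((measurable_shift n) hB)
    have hdisj : Pairwise (Function.onFun Disjoint
        fun n => ({ω : Ω | T ω = n} ∩ shift n ⁻¹' B)) := by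
      intro m n hmn
      refine Set.disjoint_left.mpr ?_
      rintro ω ⟨h1', _⟩ ⟨h2', _⟩
      exact hmn (h1'.symm.trans h2')
    have h3 : ∀ n : ℤ, μ₀ ({ω : Ω | T ω = n} ∩ shift n ⁻¹' B) = q'⁻¹ * μ (C n ∩ B) := by
      intro n
      rw [hμ₀, ProbabilityTheory.cond_apply meas0, hS0]
      congr 1
      have hinv := map_shift_eq μ w hμc (-n)
      have hE : MeasurableSet (({ω : Ω | ω 0 = false} ∩ {ω : Ω | T ω = n}) ∩ shift n ⁻¹' B) :=
        (meas0.inter (hT (measurableSet_singleton n))).inter ((measurable_shift n) hB)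
      calc μ ({ω : Ω | ω 0 = false} ∩ ({ω : Ω | T ω = n} ∩ shift n ⁻¹' B))
          = μ (({ω : Ω | ω 0 = false} ∩ {ω : Ω | T ω = n}) ∩ shift n ⁻¹' B) := by
            rw [Set.inter_assoc]
        _ = (Measure.map (shift (-n)) μ)
              (({ω : Ω | ω 0 = false} ∩ {ω : Ω | T ω = n}) ∩ shift n ⁻¹' B) := by rw [hinv]
        _ = μ (shift (-n) ⁻¹'
              ((({ω : Ω | ω 0 = false} ∩ {ω : Ω | T ω = n}) ∩ shift n ⁻¹' B))) :=
            Measure.map_apply (measurable_shift (-n)) hE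
        _ = μ (C n ∩ B) := by
            rw [Set.preimage_inter, shift_shift_neg]
    calc ∑' n : ℤ, μ (C n ∩ B)
        = ∑' n : ℤ, q' * (q'⁻¹ * μ (C n ∩ B)) := by
          refine tsum_congr fun n => ?_
          rw [← mul_assoc, ENNReal.mul_inv_cancel hq'0 hq't, one_mul]
      _ = q' * ∑' n : ℤ, q'⁻¹ * μ (C n ∩ B) := ENNReal.tsum_mul_left
      _ = q' * ∑' n : ℤ, μ₀ ({ω : Ω | T ω = n} ∩ shift n ⁻¹' B) := by
          rw [tsum_congr fun n => (h3 n).symm]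
      _ = q' * μ₀ (⋃ n : ℤ, ({ω : Ω | T ω = n} ∩ shift n ⁻¹' B)) := by
          rw [measure_iUnion hdisj hDmeas]
      _ = q' * (μ[|{ω : Ω | ω 0 = true}]) B := by rw [← hpre, ← h2, hmap]
      _ = q' * (p'⁻¹ * μ ({ω : Ω | ω 0 = true} ∩ B)) := by rw [h1]
  -- a.e. identification of densities
  set c : ℝ≥0∞ := q' * p'⁻¹ with hc
  set g : Ω → ℝ≥0∞ := fun x => ∑' n : ℤ, (C n).indicator 1 x with hg
  have hgm : Measurable g :=
    Measurable.ennreal_tsum fun n => measurable_one.indicator (hCmeas n)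
  have hhm : Measurable ({ω : Ω | ω 0 = true}.indicator fun _ => c) :=
    measurable_const.indicator meas1
  have hae : g =ᵐ[μ] {ω : Ω | ω 0 = true}.indicator fun _ => c := by
    refine ae_eq_of_forall_setLIntegral_eq_of_sigmaFinite hgm hhm ?_
    intro B hB _
    have hL : ∫⁻ x in B, g x ∂μ = ∑' n : ℤ, μ (C n ∩ B) := by
      rw [hg]
      rw [lintegral_tsum fun n => (measurable_one.indicator (hCmeas n)).aemeasurable]
      refine tsum_congr fun n => ?_
      rw [lintegral_indicator_one (hCmeas n), Measure.restrict_apply (hCmeas n)]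
    have hR : ∫⁻ x in B, ({ω : Ω | ω 0 = true}.indicator fun _ => c) x ∂μ
        = c * μ ({ω : Ω | ω 0 = true} ∩ B) := by
      rw [lintegral_indicator_const meas1, Measure.restrict_apply meas1]
    rw [hL, hR, key B hB, hc, mul_assoc]
  -- find a point where the conclusion bites
  have hpt : ∃ x : Ω, x ∈ {ω : Ω | ω 0 = true} ∧
      g x = ({ω : Ω | ω 0 = true}.indicator fun _ => c) x := by
    by_contra hcon
    push_neg at hcon
    have hsub : {ω : Ω | ω 0 = true} ⊆
        {x | ¬ g x = ({ω : Ω | ω 0 = true}.indicator fun _ => c) x} :=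
      fun x hx => hcon x hx
    have h0 : μ {ω : Ω | ω 0 = true} = 0 :=
      measure_mono_null hsub (ae_iff.mp hae)
    rw [hS1] at h0
    exact hp'0 h0
  obtain ⟨x, hx1, hx2⟩ := hpt
  have hxc : g x = c := by rw [hx2, Set.indicator_of_mem hx1]
  have hcval : c = ENNReal.ofReal ((1 - p) / p) := by
    rw [hc, hq', hp', ENNReal.ofReal_div_of_pos hp0, ENNReal.div_eq_inv_mul, mul_comm]
  have hgx : g x = ∑' n : ℤ, (C n).indicator (1 : Ω → ℝ≥0∞) x := rfl
  have hne : (∑' n : ℤ, (C n).indicator (1 : Ω → ℝ≥0∞) x) ≠ ⊤ := by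
    rw [← hgx, hxc, hcval]; exact ENNReal.ofReal_ne_top
  have hfin : {n : ℤ | 1 ≤ (C n).indicator (1 : Ω → ℝ≥0∞) x}.Finite :=
    ENNReal.finite_const_le_of_tsum_ne_top hne one_ne_zero
  have hone : ∀ n ∈ hfin.toFinset, (C n).indicator (1 : Ω → ℝ≥0∞) x = 1 := by
    intro n hn
    have h1n : 1 ≤ (C n).indicator (1 : Ω → ℝ≥0∞) x := hfin.mem_toFinset.mp hn
    by_cases hxn : x ∈ C n
    · simp [Set.indicator_of_mem hxn]
    · simp [Set.indicator_of_notMem hxn] at h1n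
  have hzero : ∀ n ∉ hfin.toFinset, (C n).indicator (1 : Ω → ℝ≥0∞) x = 0 := by
    intro n hn
    by_cases hxn : x ∈ C n
    · exact absurd (hfin.mem_toFinset.mpr (by simp [Set.indicator_of_mem hxn])) hn
    · exact Set.indicator_of_notMem hxn _
  have htsum : ∑' n : ℤ, (C n).indicator (1 : Ω → ℝ≥0∞) x
      = (hfin.toFinset.card : ℝ≥0∞) := by
    rw [tsum_eq_sum hzero, Finset.sum_congr rfl hone]
    simp
  have hN : ENNReal.ofReal ((1 - p) / p) = (hfin.toFinset.card : ℝ≥0∞) := by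
    rw [← hcval, ← hxc, hgx, htsum]
  have hreal : (1 - p) / p = (hfin.toFinset.card : ℝ) := by
    have h := congrArg ENNReal.toReal hN
    rwa [ENNReal.toReal_ofReal (div_nonneg (by linarith) hp0.le),
      ENNReal.toReal_natCast] at h
  exact hpnotint ⟨(hfin.toFinset.card : ℤ), by exact_mod_cast hreal⟩
end

section
/- Let p ∈ (0,1). Let μ be the product probability measure on {0,1}^ℤ under which the coordinates are i.i.d. Bernoulli(p) (value 1 = heads with probability p), and let μ₀ be μ conditioned on the event {ω : ω(0) = 0}. Then every measurable map T : {0,1}^ℤ → ℕ such that the pushforward of μ₀ under ω ↦ (n ↦ ω(T(ω) + n)) equals μ conditioned on {ω : ω(0) = 1} satisfies ∫ √(T(ω)) dμ₀(ω) = ∞. -/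
open MeasureTheory ProbabilityTheory
open scoped ENNReal

open Filter
open scoped Topology

namespace EHP

noncomputable section

/-- number of heads in `S` -/
def cnt (S : Finset ℤ) (ω : ℤ → Bool) : ℕ := ∑ i ∈ S, (if ω i then 1 else 0)

lemma measurable_cnt (S : Finset ℤ) : Measurable (cnt S) := by
  apply Finset.measurable_sum
  intro i _
  exact Measurable.comp (f := fun ω : ℤ → Bool => ω i)
    (g := fun b : Bool => if b then (1:ℕ) else 0) .of_discrete (measurable_pi_apply i)

lemma cnt_le_card (S : Finset ℤ) (ω : ℤ → Bool) : cnt S ω ≤ S.card := by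
  unfold cnt
  calc ∑ i ∈ S, (if ω i then 1 else 0) ≤ ∑ _i ∈ S, 1 := by
        apply Finset.sum_le_sum; intro i _; split <;> omega
    _ = S.card := by simp

lemma measurableSet_cntEvent (S : Finset ℤ) (Q : ℕ → Prop) :
    MeasurableSet {ω : ℤ → Bool | Q (cnt S ω)} :=
  (measurable_cnt S) (MeasurableSpace.measurableSet_top)

/-- configuration set -/
def cfg (S R : Finset ℤ) : Set (ℤ → Bool) := {ω | ∀ i ∈ S, ω i = decide (i ∈ R)}

lemma measurableSet_cfg (S R : Finset ℤ) : MeasurableSet (cfg S R) := by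
  have h : cfg S R = ⋂ i ∈ (S : Set ℤ), {ω : ℤ → Bool | ω i = decide (i ∈ R)} := by
    ext ω; simp [cfg]
  rw [h]
  exact MeasurableSet.biInter (S : Set ℤ).to_countable
    (fun i _ => (measurable_pi_apply i) (measurableSet_singleton _))

lemma cnt_cfg {S R : Finset ℤ} (hRS : R ⊆ S) {ω : ℤ → Bool} (hω : ω ∈ cfg S R) :
    cnt S ω = R.card := by
  unfold cnt
  have h1 : ∀ i ∈ S, (if ω i then (1:ℕ) else 0) = if i ∈ R then 1 else 0 := by
    intro i hi
    rw [hω i hi]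
    by_cases h : i ∈ R <;> simp [h]
  rw [Finset.sum_congr rfl h1, Finset.sum_ite_mem]
  simp [Finset.inter_eq_right.mpr hRS]

lemma event_partition (S : Finset ℤ) (Q : ℕ → Prop) [DecidablePred Q] :
    {ω : ℤ → Bool | Q (cnt S ω)}
      = ⋃ R ∈ (S.powerset.filter fun R => Q R.card), cfg S R := by
  classical
  ext ω
  simp only [Set.mem_setOf_eq, Set.mem_iUnion, Finset.mem_filter, Finset.mem_powerset]
  constructor
  · intro h
    refine ⟨S.filter (fun i => ω i = true), ⟨⟨Finset.filter_subset _ _, ?_⟩, ?_⟩⟩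
    · have hc : cnt S ω = (S.filter (fun i => ω i = true)).card := by
        unfold cnt
        rw [Finset.card_filter]
      rwa [hc] at h
    · intro i hi
      cases h' : ω i
      · simp [Finset.mem_filter, hi, h']
      · simp [Finset.mem_filter, hi, h']
  · rintro ⟨R, ⟨⟨hRS, hQ⟩, hω⟩⟩
    rwa [cnt_cfg hRS hω]

lemma cfg_pairwiseDisjoint (S : Finset ℤ) (P : Finset (Finset ℤ)) (hP : P ⊆ S.powerset) :
    Set.PairwiseDisjoint (P : Set (Finset ℤ)) (cfg S) := by
  intro R hR R' hR' hne
  simp only [Finset.coe_mem, Finset.mem_coe] at hR hR'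
  have hRS : R ⊆ S := Finset.mem_powerset.mp (hP hR)
  have hRS' : R' ⊆ S := Finset.mem_powerset.mp (hP hR')
  rw [Function.onFun, Set.disjoint_left]
  intro ω hω hω'
  apply hne
  ext i
  by_cases hi : i ∈ S
  · have e2 : decide (i ∈ R) = decide (i ∈ R') := (hω i hi).symm.trans (hω' i hi)
    simpa [decide_eq_decide] using e2
  · constructor
    · intro h; exact absurd (hRS h) hi
    · intro h; exact absurd (hRS' h) hi

section Measures

variable {p : ℝ} {μ : Measure (ℤ → Bool)}

/-- abbreviation for the hypothesis -/
def HM (p : ℝ) (μ : Measure (ℤ → Bool)) : Prop :=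
  ∀ (s : Finset ℤ) (f : ℤ → Bool),
      μ {ω | ∀ i ∈ s, ω i = f i}
        = ∏ i ∈ s, (if f i then ENNReal.ofReal p else ENNReal.ofReal (1 - p))

lemma cfg_measure (hμ : HM p μ) (S R : Finset ℤ) (hRS : R ⊆ S) :
    μ (cfg S R) = (ENNReal.ofReal p) ^ R.card * (ENNReal.ofReal (1 - p)) ^ (S.card - R.card) := by
  classical
  have h := hμ S (fun i => decide (i ∈ R))
  have hs : cfg S R = {ω | ∀ i ∈ S, ω i = decide (i ∈ R)} := rfl
  rw [hs, h]
  have h2 : ∀ i ∈ S, (if decide (i ∈ R) then ENNReal.ofReal p else ENNReal.ofReal (1 - p))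
      = if i ∈ R then ENNReal.ofReal p else ENNReal.ofReal (1 - p) := by
    intro i _; by_cases h3 : i ∈ R <;> simp [h3]
  rw [Finset.prod_congr rfl h2, ← Finset.prod_filter_mul_prod_filter_not S (· ∈ R)]
  have e1 : S.filter (· ∈ R) = R := by
    ext i; simp only [Finset.mem_filter]
    exact ⟨fun h => h.2, fun h => ⟨hRS h, h⟩⟩
  have e2 : S.filter (¬ · ∈ R) = S \ R := by
    ext i; simp [Finset.mem_sdiff]
  rw [e1, e2]
  congr 1
  · rw [Finset.prod_congr rfl (fun i hi => if_pos hi), Finset.prod_const]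
  · rw [Finset.prod_congr rfl (fun i hi => if_neg (Finset.mem_sdiff.mp hi).2),
      Finset.prod_const, Finset.card_sdiff_of_subset hRS]

lemma measure_event (hμ : HM p μ) (S : Finset ℤ) (Q : ℕ → Prop) [DecidablePred Q] :
    μ {ω | Q (cnt S ω)}
      = ∑ j ∈ Finset.range (S.card + 1), S.card.choose j •
          (if Q j then (ENNReal.ofReal p) ^ j * (ENNReal.ofReal (1 - p)) ^ (S.card - j) else 0) := by
  classical
  rw [event_partition S Q,
    measure_biUnion_finset
      (cfg_pairwiseDisjoint S _ (Finset.filter_subset _ _))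
      (fun R _ => measurableSet_cfg S R)]
  have h1 : ∀ R ∈ S.powerset.filter (fun R => Q R.card), μ (cfg S R)
      = (ENNReal.ofReal p) ^ R.card * (ENNReal.ofReal (1 - p)) ^ (S.card - R.card) := by
    intro R hR
    exact cfg_measure hμ S R (Finset.mem_powerset.mp (Finset.mem_filter.mp hR).1)
  rw [Finset.sum_congr rfl h1, Finset.sum_filter]
  have h2 : ∀ R ∈ S.powerset,
      (if Q R.card then (ENNReal.ofReal p) ^ R.card * (ENNReal.ofReal (1 - p)) ^ (S.card - R.card) else 0)
      = (fun j => if Q j then (ENNReal.ofReal p) ^ j * (ENNReal.ofReal (1 - p)) ^ (S.card - j) else 0) R.card := by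
    intro R _; rfl
  rw [Finset.sum_congr rfl h2]
  exact Finset.sum_powerset_apply_card
    (f := fun j => if Q j then (ENNReal.ofReal p) ^ j * (ENNReal.ofReal (1 - p)) ^ (S.card - j) else 0)

/-- the measure of a count event only depends on the card of `S`. -/
lemma measure_event_card (hμ : HM p μ) {S S' : Finset ℤ} (h : S.card = S'.card)
    (Q : ℕ → Prop) [DecidablePred Q] :
    μ {ω | Q (cnt S ω)} = μ {ω | Q (cnt S' ω)} := by
  rw [measure_event hμ S Q, measure_event hμ S' Q, h]

lemma inter_cfg_measure (hμ : HM p μ) (c : Bool) (S R : Finset ℤ) (h0 : (0:ℤ) ∉ S) :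
    μ ({ω | ω 0 = c} ∩ cfg S R)
      = (if c then ENNReal.ofReal p else ENNReal.ofReal (1 - p)) * μ (cfg S R) := by
  classical
  set g : ℤ → Bool := fun i => if i = 0 then c else decide (i ∈ R) with hg
  have hset : {ω : ℤ → Bool | ω 0 = c} ∩ cfg S R = {ω | ∀ i ∈ insert (0:ℤ) S, ω i = g i} := by
    ext ω
    simp only [Set.mem_inter_iff, Set.mem_setOf_eq, cfg, Finset.mem_insert]
    constructor
    · rintro ⟨h1, h2⟩ i hi
      rcases hi with rfl | hi
      · simpa [hg] using h1
      · have : i ≠ 0 := fun h => h0 (h ▸ hi)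
        simp only [hg, if_neg this]
        exact h2 i hi
    · intro h
      constructor
      · have h1 := h 0 (Or.inl rfl)
        simpa [hg] using h1
      · intro i hi
        have hne : i ≠ 0 := fun h' => h0 (h' ▸ hi)
        have h2 := h i (Or.inr hi)
        simp only [hg] at h2
        rwa [if_neg hne] at h2
  have hr : μ (cfg S R) = ∏ i ∈ S,
      (if (fun i => decide (i ∈ R)) i then ENNReal.ofReal p else ENNReal.ofReal (1 - p)) :=
    hμ S _
  rw [hset, hμ (insert 0 S) g, Finset.prod_insert h0, hr]
  have hcg : ∀ i ∈ S, (if g i then ENNReal.ofReal p else ENNReal.ofReal (1 - p))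
      = (if (fun i => decide (i ∈ R)) i then ENNReal.ofReal p else ENNReal.ofReal (1 - p)) := by
    intro i hi
    have hne : i ≠ 0 := fun h' => h0 (h' ▸ hi)
    simp [hg, hne]
  rw [Finset.prod_congr rfl hcg]
  have hgc : g 0 = c := by simp [hg]
  rw [hgc]

lemma measure_inter_event (hμ : HM p μ) (c : Bool) (S : Finset ℤ) (h0 : (0:ℤ) ∉ S)
    (Q : ℕ → Prop) [DecidablePred Q] :
    μ ({ω | ω 0 = c} ∩ {ω | Q (cnt S ω)})
      = (if c then ENNReal.ofReal p else ENNReal.ofReal (1 - p)) * μ {ω | Q (cnt S ω)} := by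
  classical
  have hm0 : MeasurableSet {ω : ℤ → Bool | ω 0 = c} := by
    have h' : {ω : ℤ → Bool | ω 0 = c} = (fun ω : ℤ → Bool => ω 0) ⁻¹' {c} := rfl
    rw [h']; exact (measurable_pi_apply 0) (measurableSet_singleton c)
  rw [event_partition S Q, Set.inter_iUnion₂,
    measure_biUnion_finset ?dd (fun R hR => hm0.inter (measurableSet_cfg S R)),
    measure_biUnion_finset (cfg_pairwiseDisjoint S _ (Finset.filter_subset _ _)) (fun R _ => measurableSet_cfg S R),
    Finset.mul_sum]
  · apply Finset.sum_congr rfl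
    intro R hR
    exact inter_cfg_measure hμ c S R h0
  case dd =>
    intro R hR R' hR' hne
    have := cfg_pairwiseDisjoint S _ (Finset.filter_subset (fun R => Q R.card) S.powerset) hR hR' hne
    exact Disjoint.mono Set.inter_subset_right Set.inter_subset_right this

end Measures

/-- the key deterministic telescoping bound -/
lemma sum_shift_le (g : ℕ → ℝ≥0∞) (hg : ∀ j, g j ≤ 1) (t N : ℕ) :
    ∑ k ∈ Finset.range N, g (k + t) ≤ (∑ k ∈ Finset.range N, g k) + ((min t N : ℕ) : ℝ≥0∞) := by
  rcases le_or_gt t N with h | h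
  · have h1 : ∑ k ∈ Finset.range N, g (k + t) = ∑ j ∈ Finset.Ico t (t + N), g j := by
      rw [Finset.sum_Ico_eq_sum_range]
      simp only [Nat.add_sub_cancel_left]
      apply Finset.sum_congr rfl
      intro i _
      rw [add_comm]
    have h2 : ∑ j ∈ Finset.Ico t (t + N), g j ≤ ∑ j ∈ Finset.Ico 0 (N + t), g j :=
      Finset.sum_le_sum_of_subset (Finset.Ico_subset_Ico (Nat.zero_le t) (by omega))
    have h3 : ∑ j ∈ Finset.Ico 0 (N + t), g j
        = ∑ j ∈ Finset.Ico 0 N, g j + ∑ j ∈ Finset.Ico N (N + t), g j :=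
      (Finset.sum_Ico_consecutive _ (by omega) (by omega)).symm
    have h4 : ∑ j ∈ Finset.Ico N (N + t), g j ≤ ((t : ℕ) : ℝ≥0∞) := by
      calc ∑ j ∈ Finset.Ico N (N + t), g j ≤ ∑ _j ∈ Finset.Ico N (N + t), (1:ℝ≥0∞) :=
            Finset.sum_le_sum (fun j _ => hg j)
        _ = ((t : ℕ) : ℝ≥0∞) := by simp [Nat.card_Ico]
    have h5 : ∑ j ∈ Finset.Ico 0 N, g j = ∑ k ∈ Finset.range N, g k := by
      rw [Finset.range_eq_Ico]
    rw [h1, min_eq_left h]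
    calc ∑ j ∈ Finset.Ico t (t + N), g j ≤ ∑ j ∈ Finset.Ico 0 (N + t), g j := h2
      _ = ∑ j ∈ Finset.Ico 0 N, g j + ∑ j ∈ Finset.Ico N (N + t), g j := h3
      _ ≤ (∑ k ∈ Finset.range N, g k) + ((t : ℕ) : ℝ≥0∞) := by
          rw [h5]; exact add_le_add_right h4 _
  · have h1 : ∑ k ∈ Finset.range N, g (k + t) ≤ ((N : ℕ) : ℝ≥0∞) := by
      calc ∑ k ∈ Finset.range N, g (k + t) ≤ ∑ _k ∈ Finset.range N, (1:ℝ≥0∞) :=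
            Finset.sum_le_sum (fun k _ => hg _)
        _ = ((N : ℕ) : ℝ≥0∞) := by simp
    rw [min_eq_right h.le]
    exact h1.trans (le_add_self)

section Cheb

variable {p : ℝ}

set_option maxHeartbeats 1000000 in
lemma exists_good_j (hp0 : 0 < p) (hp1 : p < 1) (μ : Measure (ℤ → Bool))
    [IsProbabilityMeasure μ] (hμ : HM p μ) (S₀ : Finset ℤ) (hn : 1 ≤ S₀.card) :
    ∃ j : ℕ, ENNReal.ofReal (1 / (6 * Real.sqrt S₀.card)) ≤ μ {ω | cnt S₀ ω = j} := by
  classical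
  set n := S₀.card with hnn
  set q : ℝ := 1 - p with hq
  have hq0 : 0 < q := by simp [hq]; linarith
  -- the indicator variables
  set Y : ℤ → (ℤ → Bool) → ℝ := fun i ω => if ω i then 1 else 0 with hY
  have hYmeas : ∀ i, Measurable (Y i) := by
    intro i
    exact Measurable.comp (f := fun ω : ℤ → Bool => ω i)
      (g := fun b : Bool => if b then (1:ℝ) else 0) .of_discrete (measurable_pi_apply i)
  have hsetm : ∀ i : ℤ, MeasurableSet {ω : ℤ → Bool | ω i = true} := by
    intro i
    have h' : {ω : ℤ → Bool | ω i = true} = (fun ω : ℤ → Bool => ω i) ⁻¹' {true} := rfl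
    rw [h']; exact (measurable_pi_apply i) (measurableSet_singleton _)
  have hYind : ∀ i, Y i = Set.indicator {ω : ℤ → Bool | ω i = true} (fun _ => (1:ℝ)) := by
    intro i; funext ω
    by_cases h : ω i <;> simp [hY, h, Set.indicator]
  have hμi : ∀ i : ℤ, μ {ω : ℤ → Bool | ω i = true} = ENNReal.ofReal p := by
    intro i
    have h2 := hμ {i} (fun _ => true)
    have hs : {ω : ℤ → Bool | ∀ j ∈ ({i} : Finset ℤ), ω j = true} = {ω : ℤ → Bool | ω i = true} := by
      ext ω; simp
    rw [hs] at h2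
    simpa using h2
  have hμij : ∀ i j : ℤ, i ≠ j →
      μ ({ω : ℤ → Bool | ω i = true} ∩ {ω | ω j = true}) = ENNReal.ofReal p * ENNReal.ofReal p := by
    intro i j hij
    have h2 := hμ {i, j} (fun _ => true)
    have hs : {ω : ℤ → Bool | ∀ k ∈ ({i, j} : Finset ℤ), ω k = true}
        = {ω : ℤ → Bool | ω i = true} ∩ {ω | ω j = true} := by
      ext ω; simp [Set.mem_inter_iff]
    rw [hs] at h2
    rw [h2, Finset.prod_pair hij]
    simp
  -- expectations
  have hEY : ∀ i : ℤ, ∫ ω, Y i ω ∂μ = p := by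
    intro i
    rw [hYind i, integral_indicator_const (1:ℝ) (hsetm i), measureReal_def, hμi i]
    simp [ENNReal.toReal_ofReal hp0.le]
  have hYint : ∀ i, Integrable (Y i) μ := by
    intro i; rw [hYind i]
    exact (integrable_const _).indicator (hsetm i)
  have hYY : ∀ i j : ℤ, (fun ω => Y i ω * Y j ω)
      = Set.indicator ({ω : ℤ → Bool | ω i = true} ∩ {ω | ω j = true}) (fun _ => (1:ℝ)) := by
    intro i j; funext ω
    by_cases h1 : ω i <;> by_cases h2 : ω j <;> simp [hY, h1, h2, Set.indicator]
  have hYYint : ∀ i j, Integrable (fun ω => Y i ω * Y j ω) μ := by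
    intro i j; rw [hYY i j]
    exact (integrable_const _).indicator ((hsetm i).inter (hsetm j))
  have hEYY : ∀ i j : ℤ, i ≠ j → ∫ ω, Y i ω * Y j ω ∂μ = p * p := by
    intro i j hij
    rw [hYY i j, integral_indicator_const (1:ℝ) ((hsetm i).inter (hsetm j)), measureReal_def, hμij i j hij]
    rw [ENNReal.toReal_mul]
    simp [ENNReal.toReal_ofReal hp0.le]
  -- centered variables
  set f : ℤ → (ℤ → Bool) → ℝ := fun i ω => Y i ω - p with hf
  have hfint : ∀ i, Integrable (f i) μ := fun i => (hYint i).sub (integrable_const p)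
  have hffexp : ∀ i j : ℤ, (fun ω => f i ω * f j ω)
      = fun ω => Y i ω * Y j ω - p * Y i ω - p * Y j ω + p * p := by
    intro i j; funext ω; simp only [hf]; ring
  have hffint : ∀ i j, Integrable (fun ω => f i ω * f j ω) μ := by
    intro i j
    rw [hffexp i j]
    exact (((hYYint i j).sub ((hYint i).const_mul p)).sub ((hYint j).const_mul p)).add
      (integrable_const _)
  have hEff : ∀ i j : ℤ, ∫ ω, f i ω * f j ω ∂μ = if i = j then p * q else 0 := by
    intro i j
    have i1 := ((hYYint i j).sub ((hYint i).const_mul p)).sub ((hYint j).const_mul p)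
    have e1 : ∫ ω, f i ω * f j ω ∂μ
        = (∫ ω, (Y i ω * Y j ω - p * Y i ω - p * Y j ω) ∂μ) + ∫ _ω, p * p ∂μ := by
      rw [hffexp i j]
      exact integral_add i1 (integrable_const _)
    have e2 : ∫ ω, (Y i ω * Y j ω - p * Y i ω - p * Y j ω) ∂μ
        = (∫ ω, (Y i ω * Y j ω - p * Y i ω) ∂μ) - ∫ ω, p * Y j ω ∂μ :=
      integral_sub ((hYYint i j).sub ((hYint i).const_mul p)) ((hYint j).const_mul p)
    have e3 : ∫ ω, (Y i ω * Y j ω - p * Y i ω) ∂μ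
        = (∫ ω, Y i ω * Y j ω ∂μ) - ∫ ω, p * Y i ω ∂μ :=
      integral_sub (hYYint i j) ((hYint i).const_mul p)
    have e4 : ∫ ω, p * Y i ω ∂μ = p * p := by rw [integral_const_mul, hEY i]
    have e5 : ∫ ω, p * Y j ω ∂μ = p * p := by rw [integral_const_mul, hEY j]
    have e6 : ∫ _ω : (ℤ → Bool), p * p ∂μ = p * p := by simp
    by_cases hij : i = j
    · subst hij
      have hEYsq : ∫ ω, Y i ω * Y i ω ∂μ = p := by
        have h' : (fun ω => Y i ω * Y i ω) = Y i := by
          funext ω; by_cases h : ω i <;> simp [hY, h]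
        rw [h', hEY i]
      rw [e1, e2, e3, e4, e6, hEYsq, if_pos rfl, hq]
      ring
    · rw [e1, e2, e3, e4, e5, e6, hEYY i j hij, if_neg hij]
      ring
  -- the centered sum
  set Z : (ℤ → Bool) → ℝ := fun ω => ∑ i ∈ S₀, f i ω with hZ
  have hZmeas : Measurable Z :=
    Finset.measurable_sum _ (fun i _ => (hYmeas i).sub measurable_const)
  have hZsq : (fun ω => Z ω ^ 2) = fun ω => ∑ i ∈ S₀, ∑ j ∈ S₀, f i ω * f j ω := by
    funext ω; rw [sq, hZ]
    rw [Finset.sum_mul_sum]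
  have hZsqint : Integrable (fun ω => Z ω ^ 2) μ := by
    rw [hZsq]
    exact integrable_finset_sum _ (fun i _ => integrable_finset_sum _ (fun j _ => hffint i j))
  have hEZsq : ∫ ω, Z ω ^ 2 ∂μ = n * (p * q) := by
    rw [hZsq, integral_finset_sum _ (fun i _ => integrable_finset_sum _ (fun j _ => hffint i j))]
    have h1 : ∀ i ∈ S₀, ∫ ω, (∑ j ∈ S₀, f i ω * f j ω) ∂μ = p * q := by
      intro i hi
      rw [integral_finset_sum _ (fun j _ => hffint i j)]
      have h2 : ∀ j ∈ S₀, ∫ ω, f i ω * f j ω ∂μ = if i = j then p * q else 0 :=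
        fun j _ => hEff i j
      rw [Finset.sum_congr rfl h2, Finset.sum_ite_eq S₀ i (fun _ => p * q), if_pos hi]
    rw [Finset.sum_congr rfl h1, Finset.sum_const, hnn, nsmul_eq_mul]
  -- Chebyshev
  set L : ℝ := Real.sqrt (2 * n * (p * q)) with hL
  have hnpos : (0:ℝ) < n := by exact_mod_cast hn
  have hL2 : L ^ 2 = 2 * n * (p * q) := Real.sq_sqrt (by positivity)
  have hLpos : 0 < L := Real.sqrt_pos.mpr (by positivity)
  have hcheb : μ {ω | L ≤ |Z ω|} ≤ ENNReal.ofReal (1 / 2) := by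
    have hfm : AEMeasurable (fun ω => ENNReal.ofReal (Z ω ^ 2)) μ :=
      (ENNReal.measurable_ofReal.comp (hZmeas.pow_const 2)).aemeasurable
    have hmark := mul_meas_ge_le_lintegral₀ hfm (ENNReal.ofReal (L ^ 2))
    have hlint : ∫⁻ ω, ENNReal.ofReal (Z ω ^ 2) ∂μ = ENNReal.ofReal (n * (p * q)) := by
      rw [← ofReal_integral_eq_lintegral_ofReal hZsqint
        (Filter.Eventually.of_forall (fun ω => sq_nonneg _)), hEZsq]
    have hsub : {ω : ℤ → Bool | L ≤ |Z ω|}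
        ⊆ {ω : ℤ → Bool | ENNReal.ofReal (L ^ 2) ≤ ENNReal.ofReal (Z ω ^ 2)} := by
      intro ω hω
      simp only [Set.mem_setOf_eq] at hω ⊢
      apply ENNReal.ofReal_le_ofReal
      calc L ^ 2 ≤ |Z ω| ^ 2 := by nlinarith [abs_nonneg (Z ω), hLpos.le]
        _ = Z ω ^ 2 := sq_abs _
    have h1 : ENNReal.ofReal (L ^ 2) * μ {ω | L ≤ |Z ω|}
        ≤ ENNReal.ofReal (L ^ 2) * ENNReal.ofReal (1 / 2) := by
      calc ENNReal.ofReal (L ^ 2) * μ {ω | L ≤ |Z ω|}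
          ≤ ENNReal.ofReal (L ^ 2) * μ {ω | ENNReal.ofReal (L ^ 2) ≤ ENNReal.ofReal (Z ω ^ 2)} :=
            mul_le_mul_right (measure_mono hsub) _
        _ ≤ ∫⁻ ω, ENNReal.ofReal (Z ω ^ 2) ∂μ := hmark
        _ = ENNReal.ofReal (n * (p * q)) := hlint
        _ = ENNReal.ofReal (L ^ 2) * ENNReal.ofReal (1 / 2) := by
            rw [← ENNReal.ofReal_mul (by positivity), hL2]
            congr 1
            ring
    exact (ENNReal.mul_le_mul_iff_right (ENNReal.ofReal_pos.mpr (by positivity)).ne'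
      ENNReal.ofReal_ne_top).mp h1
  have hcompl : ENNReal.ofReal (1 / 2) ≤ μ {ω | |Z ω| < L} := by
    have hBm : MeasurableSet {ω : ℤ → Bool | L ≤ |Z ω|} :=
      measurableSet_le measurable_const hZmeas.abs
    have hcc : {ω : ℤ → Bool | |Z ω| < L} = {ω : ℤ → Bool | L ≤ |Z ω|}ᶜ := by
      ext ω; simp [not_le]
    rw [hcc, prob_compl_eq_one_sub hBm]
    have h12 : ENNReal.ofReal (1 / 2) = 1 - ENNReal.ofReal (1 / 2) := by
      rw [← ENNReal.ofReal_one, ← ENNReal.ofReal_sub _ (by norm_num)]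
      norm_num
    rw [h12]
    exact tsub_le_tsub_left hcheb 1
  -- identify Z with the count
  have hZval : ∀ ω, Z ω = (cnt S₀ ω : ℝ) - n * p := by
    intro ω
    have h1 : ((cnt S₀ ω : ℕ) : ℝ) = ∑ i ∈ S₀, (if ω i then (1:ℝ) else 0) := by
      unfold cnt
      push_cast
      rfl
    have h2 : Z ω = (∑ i ∈ S₀, (if ω i then (1:ℝ) else 0)) - (S₀.card : ℝ) * p := by
      simp only [hZ, hf, hY, Finset.sum_sub_distrib, Finset.sum_const, nsmul_eq_mul]
    rw [h2, ← h1, ← hnn]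
  -- pigeonhole
  set Jset : Finset ℕ := (Finset.range (n + 1)).filter (fun j => |(j:ℝ) - n * p| < L) with hJ
  have hcover : {ω : ℤ → Bool | |Z ω| < L} ⊆ ⋃ j ∈ Jset, {ω : ℤ → Bool | cnt S₀ ω = j} := by
    intro ω hω
    simp only [Set.mem_setOf_eq] at hω
    have hj : cnt S₀ ω ∈ Jset := by
      rw [hJ, Finset.mem_filter, Finset.mem_range]
      constructor
      · have := cnt_le_card S₀ ω
        omega
      · rw [← hZval ω]
        exact hω
    exact Set.mem_biUnion hj rfl
  have hsumlb : ENNReal.ofReal (1 / 2) ≤ ∑ j ∈ Jset, μ {ω | cnt S₀ ω = j} :=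
    hcompl.trans ((measure_mono hcover).trans (measure_biUnion_finset_le _ _))
  -- cardinality bound
  have hcard : (Jset.card : ℝ) ≤ 2 * L + 1 := by
    have hinj : Set.InjOn (fun j : ℕ => (j : ℤ)) Jset := fun a _ b _ h => Nat.cast_injective h
    have himage : Jset.image (fun j : ℕ => (j : ℤ))
        ⊆ Finset.Icc (⌊(n:ℝ) * p - L⌋ + 1) (⌈(n:ℝ) * p + L⌉ - 1) := by
      intro z hz
      simp only [Finset.mem_image] at hz
      obtain ⟨j, hj, rfl⟩ := hz
      rw [hJ, Finset.mem_filter] at hj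
      have habs := abs_lt.mp hj.2
      rw [Finset.mem_Icc]
      constructor
      · rw [Int.add_one_le_iff, Int.floor_lt]
        push_cast
        linarith [habs.1]
      · rw [Int.le_sub_one_iff, Int.lt_ceil]
        push_cast
        linarith [habs.2]
    have hc1 : Jset.card ≤ (Finset.Icc (⌊(n:ℝ) * p - L⌋ + 1) (⌈(n:ℝ) * p + L⌉ - 1)).card := by
      rw [← Finset.card_image_of_injOn hinj]
      exact Finset.card_le_card himage
    have hfl := Int.sub_one_lt_floor ((n:ℝ) * p - L)
    have hcl := Int.ceil_lt_add_one ((n:ℝ) * p + L)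
    have hc2 : (((Finset.Icc (⌊(n:ℝ) * p - L⌋ + 1) (⌈(n:ℝ) * p + L⌉ - 1)).card : ℕ) : ℝ)
        ≤ 2 * L + 1 := by
      rw [Int.card_Icc]
      set x : ℤ := ⌈(n:ℝ) * p + L⌉ - 1 + 1 - (⌊(n:ℝ) * p - L⌋ + 1) with hx
      rcases le_or_gt x 0 with hx0 | hx0
      · rw [Int.toNat_of_nonpos hx0]
        have := hLpos.le
        simp only [Nat.cast_zero]
        linarith
      · have hxx : ((x.toNat : ℕ) : ℝ) = ((x : ℤ) : ℝ) := by
          exact_mod_cast congrArg (fun z : ℤ => (z : ℝ)) (Int.toNat_of_nonneg hx0.le)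
        rw [hxx, hx]
        push_cast
        linarith
    calc (Jset.card : ℝ) ≤ _ := by exact_mod_cast hc1
      _ ≤ 2 * L + 1 := hc2
  -- numerics
  have hsq1 : (1:ℝ) ≤ Real.sqrt n := by
    rw [show (1:ℝ) = Real.sqrt 1 by simp]
    exact Real.sqrt_le_sqrt (by exact_mod_cast hn)
  have hsqpos : (0:ℝ) < Real.sqrt n := lt_of_lt_of_le one_pos hsq1
  have hLle : L ≤ (3/4) * Real.sqrt n := by
    have hpq : p * q ≤ 1/4 := by nlinarith [sq_nonneg (p - q)]
    have h1 : 2 * (n:ℝ) * (p * q) ≤ (9/16) * n := by nlinarith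
    calc L ≤ Real.sqrt ((9/16) * n) := by rw [hL]; exact Real.sqrt_le_sqrt h1
      _ = Real.sqrt ((3/4)^2 * n) := by norm_num
      _ = (3/4) * Real.sqrt n := by
          rw [Real.sqrt_mul (by positivity), Real.sqrt_sq (by norm_num)]
  have hnum : (2 * L + 1) * (1 / (6 * Real.sqrt n)) < 1 / 2 := by
    have h3 : 2 * L + 1 < 3 * Real.sqrt n := by nlinarith
    calc (2 * L + 1) * (1 / (6 * Real.sqrt n))
        < (3 * Real.sqrt n) * (1 / (6 * Real.sqrt n)) :=
          mul_lt_mul_of_pos_right h3 (by positivity)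
      _ = 1 / 2 := by field_simp; ring
  -- conclude
  by_contra hno
  push_neg at hno
  have hub : ∑ j ∈ Jset, μ {ω | cnt S₀ ω = j} < ENNReal.ofReal (1 / 2) := by
    calc ∑ j ∈ Jset, μ {ω | cnt S₀ ω = j}
        ≤ ∑ _j ∈ Jset, ENNReal.ofReal (1 / (6 * Real.sqrt n)) :=
          Finset.sum_le_sum (fun j _ => (hno j).le)
      _ = Jset.card • ENNReal.ofReal (1 / (6 * Real.sqrt n)) := by rw [Finset.sum_const]
      _ = (Jset.card : ℝ≥0∞) * ENNReal.ofReal (1 / (6 * Real.sqrt n)) := by rw [nsmul_eq_mul]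
      _ = ENNReal.ofReal (Jset.card) * ENNReal.ofReal (1 / (6 * Real.sqrt n)) := by
          rw [ENNReal.ofReal_natCast]
      _ = ENNReal.ofReal ((Jset.card : ℝ) * (1 / (6 * Real.sqrt n))) :=
          (ENNReal.ofReal_mul (by positivity)).symm
      _ ≤ ENNReal.ofReal ((2 * L + 1) * (1 / (6 * Real.sqrt n))) :=
          ENNReal.ofReal_le_ofReal (mul_le_mul_of_nonneg_right hcard (by positivity))
      _ < ENNReal.ofReal (1 / 2) := by
          rw [ENNReal.ofReal_lt_ofReal_iff (by norm_num)]
          exact hnum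
  exact absurd hsumlb (not_le.mpr hub)

end Cheb

end

end EHP



/-- **Every non-negative extra head scheme has infinite square-root moment**
(instance of Theorems 3(i) and 4).  Let `p ∈ (0,1)`, let `μ` be the law of a doubly
infinite i.i.d. Bernoulli(p) sequence of coins, and `μ₀` its conditioning on
`{ω 0 = false}`.  If `T : {0,1}^ℤ → ℕ` is measurable and the shift by `T` maps `μ₀` to
`μ` conditioned on `{ω 0 = true}`, then `∫ √T dμ₀ = ∞`. -/
theorem extra_head_sqrt_moment_infinite (p : ℝ) (hp0 : 0 < p) (hp1 : p < 1)
    (μ : Measure (ℤ → Bool)) [IsProbabilityMeasure μ]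
    (hμ : ∀ (s : Finset ℤ) (f : ℤ → Bool),
      μ {ω | ∀ i ∈ s, ω i = f i}
        = ∏ i ∈ s, (if f i then ENNReal.ofReal p else ENNReal.ofReal (1 - p)))
    (μ₀ : Measure (ℤ → Bool)) (hμ₀ : μ₀ = μ[|{ω | ω 0 = false}])
    (T : (ℤ → Bool) → ℕ) (hTmeas : Measurable T)
    (hembed : Measure.map (fun ω (k : ℤ) => ω ((T ω : ℤ) + k)) μ₀
      = μ[|{ω | ω 0 = true}]) :
    ∫⁻ ω, ENNReal.ofReal (Real.sqrt (T ω)) ∂μ₀ = ⊤ := by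
  classical
  have hμ' : EHP.HM p μ := hμ
  have hq0 : (0:ℝ) < 1 - p := by linarith
  have hmF : MeasurableSet {ω : ℤ → Bool | ω 0 = false} := by
    have h' : {ω : ℤ → Bool | ω 0 = false} = (fun ω : ℤ → Bool => ω 0) ⁻¹' {false} := rfl
    rw [h']; exact (measurable_pi_apply 0) (measurableSet_singleton _)
  have hmT : MeasurableSet {ω : ℤ → Bool | ω 0 = true} := by
    have h' : {ω : ℤ → Bool | ω 0 = true} = (fun ω : ℤ → Bool => ω 0) ⁻¹' {true} := rfl
    rw [h']; exact (measurable_pi_apply 0) (measurableSet_singleton _)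
  have hμF : μ {ω : ℤ → Bool | ω 0 = false} = ENNReal.ofReal (1 - p) := by
    have h2 := hμ {0} (fun _ => false)
    have hs : {ω : ℤ → Bool | ∀ i ∈ ({0} : Finset ℤ), ω i = false}
        = {ω : ℤ → Bool | ω 0 = false} := by ext ω; simp
    rw [hs] at h2
    simpa using h2
  have hμT : μ {ω : ℤ → Bool | ω 0 = true} = ENNReal.ofReal p := by
    have h2 := hμ {0} (fun _ => true)
    have hs : {ω : ℤ → Bool | ∀ i ∈ ({0} : Finset ℤ), ω i = true}
        = {ω : ℤ → Bool | ω 0 = true} := by ext ω; simp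
    rw [hs] at h2
    simpa using h2
  have hbne : ENNReal.ofReal (1 - p) ≠ 0 := (ENNReal.ofReal_pos.mpr hq0).ne'
  have hane : ENNReal.ofReal p ≠ 0 := (ENNReal.ofReal_pos.mpr hp0).ne'
  have hμ₀prob : IsProbabilityMeasure μ₀ := by
    rw [hμ₀]
    exact cond_isProbabilityMeasure (by rw [hμF]; exact hbne)
  have hSmeas : Measurable (fun (ω : ℤ → Bool) (k : ℤ) => ω ((T ω : ℤ) + k)) := by
    apply measurable_pi_lambda
    intro i
    have h' : (fun ω : ℤ → Bool => ω ((T ω : ℤ) + i))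
        = (fun q : (ℤ → Bool) × ℕ => q.1 ((q.2 : ℤ) + i)) ∘ (fun ω => (ω, T ω)) := rfl
    rw [h']
    refine (measurable_from_prod_countable_left
      (f := fun q : (ℤ → Bool) × ℕ => q.1 ((q.2 : ℤ) + i)) ?_).comp
      (measurable_id.prodMk hTmeas)
    intro t
    exact measurable_pi_apply ((t : ℤ) + i)
  by_contra hfin
  -- ################ the key lower bound ################
  have key : ∀ N : ℕ, 2 ≤ N →
      ENNReal.ofReal (Real.sqrt N / 6) ≤ ∫⁻ ω, ((min (T ω) N : ℕ) : ℝ≥0∞) ∂μ₀ := by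
    intro N hN
    set n : ℕ := N - 1 with hn
    have hn1 : 1 ≤ n := by omega
    set S₀ : Finset ℤ := Finset.Icc (1:ℤ) n with hS₀
    have hS₀card : S₀.card = n := by
      rw [hS₀, Int.card_Icc]
      omega
    obtain ⟨j₀, hj₀⟩ := EHP.exists_good_j hp0 hp1 μ hμ' S₀ (by rw [hS₀card]; exact hn1)
    rw [hS₀card] at hj₀
    set m : ℕ := j₀ + 1 with hm
    set Wn : Finset ℤ := Finset.Icc (1 - (N:ℤ)) 0 with hW
    have hWcard : Wn.card = N := by
      rw [hW, Int.card_Icc]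
      omega
    set δ : ℝ≥0∞ := μ {ω | EHP.cnt S₀ ω = j₀} with hδ
    set C : ℕ → Set (ℤ → Bool) := fun j => {ω | m ≤ EHP.cnt Wn (fun i => ω ((j:ℤ) + i))} with hC
    have hCalt : ∀ j : ℕ, C j = {ω | m ≤ EHP.cnt (Wn.image (fun i => (j:ℤ) + i)) ω} := by
      intro j
      rw [hC]
      ext ω
      simp only [Set.mem_setOf_eq]
      have h1 : EHP.cnt (Wn.image (fun i => (j:ℤ) + i)) ω
          = EHP.cnt Wn (fun i => ω ((j:ℤ) + i)) := by
        unfold EHP.cnt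
        rw [Finset.sum_image (by intro a _ b _ h; exact add_left_cancel h)]
      rw [h1]
    have hCmeas : ∀ j : ℕ, MeasurableSet (C j) := by
      intro j
      rw [hCalt j]
      exact EHP.measurableSet_cntEvent _ _
    -- per-k identity
    have perk : ∀ k : ℕ, k < N →
        μ₀ (C k) + δ = (μ[|{ω | ω 0 = true}]) (C k) := by
      intro k hk
      set Sk : Finset ℤ := Wn.image (fun i => (k:ℤ) + i) with hSk
      have h0Sk : (0:ℤ) ∈ Sk := by
        rw [hSk, Finset.mem_image]
        refine ⟨-(k:ℤ), ?_, by ring⟩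
        rw [hW, Finset.mem_Icc]
        omega
      set Sk' : Finset ℤ := Sk.erase 0 with hSk'
      have h0Sk' : (0:ℤ) ∉ Sk' := Finset.notMem_erase _ _
      have hSkcard : Sk.card = N := by
        rw [hSk, Finset.card_image_of_injective _ (fun a b h => by omega), hWcard]
      have hSk'card : Sk'.card = n := by
        rw [hSk', Finset.card_erase_of_mem h0Sk, hSkcard]
      have hcnt : ∀ ω : ℤ → Bool,
          EHP.cnt Sk ω = (if ω 0 then 1 else 0) + EHP.cnt Sk' ω := by
        intro ω
        unfold EHP.cnt
        conv_lhs => rw [← Finset.insert_erase h0Sk]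
        rw [Finset.sum_insert (Finset.notMem_erase (0:ℤ) Sk), hSk']
      have hsetF : {ω : ℤ → Bool | ω 0 = false} ∩ C k
          = {ω | ω 0 = false} ∩ {ω | m ≤ EHP.cnt Sk' ω} := by
        rw [hCalt k, ← hSk]
        ext ω
        simp only [Set.mem_inter_iff, Set.mem_setOf_eq]
        constructor
        · rintro ⟨h0, hc⟩
          refine ⟨h0, ?_⟩
          rw [hcnt ω, h0] at hc
          simpa using hc
        · rintro ⟨h0, hc⟩
          refine ⟨h0, ?_⟩
          rw [hcnt ω, h0]
          simpa using hc
      have hsetT : {ω : ℤ → Bool | ω 0 = true} ∩ C k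
          = {ω | ω 0 = true} ∩ {ω | j₀ ≤ EHP.cnt Sk' ω} := by
        rw [hCalt k, ← hSk]
        ext ω
        simp only [Set.mem_inter_iff, Set.mem_setOf_eq]
        constructor
        · rintro ⟨h0, hc⟩
          refine ⟨h0, ?_⟩
          rw [hcnt ω, h0] at hc
          simp only [if_pos] at hc
          omega
        · rintro ⟨h0, hc⟩
          refine ⟨h0, ?_⟩
          rw [hcnt ω, h0]
          simp only [if_pos]
          omega
      have hbk : μ₀ (C k) = μ {ω | m ≤ EHP.cnt Sk' ω} := by
        rw [hμ₀, cond_apply hmF, hsetF,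
          EHP.measure_inter_event hμ' false Sk' h0Sk' (fun x => m ≤ x), hμF]
        simp only [Bool.false_eq_true, if_false]
        rw [← mul_assoc, ENNReal.inv_mul_cancel hbne ENNReal.ofReal_ne_top, one_mul]
      have hak : (μ[|{ω | ω 0 = true}]) (C k) = μ {ω | j₀ ≤ EHP.cnt Sk' ω} := by
        rw [cond_apply hmT, hsetT,
          EHP.measure_inter_event hμ' true Sk' h0Sk' (fun x => j₀ ≤ x), hμT]
        simp only [if_true]
        rw [← mul_assoc, ENNReal.inv_mul_cancel hane ENNReal.ofReal_ne_top, one_mul]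
      have hsplit : {ω : ℤ → Bool | j₀ ≤ EHP.cnt Sk' ω}
          = {ω | m ≤ EHP.cnt Sk' ω} ∪ {ω | EHP.cnt Sk' ω = j₀} := by
        ext ω
        simp only [Set.mem_setOf_eq, Set.mem_union, hm]
        omega
      have hdisj : Disjoint {ω : ℤ → Bool | m ≤ EHP.cnt Sk' ω} {ω | EHP.cnt Sk' ω = j₀} := by
        rw [Set.disjoint_left]
        intro ω h1 h2
        simp only [Set.mem_setOf_eq] at h1 h2
        omega
      have hj₀' : μ {ω | EHP.cnt Sk' ω = j₀} = δ := by
        rw [hδ]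
        exact EHP.measure_event_card hμ' (by rw [hSk'card, hS₀card]) (fun x => x = j₀)
      rw [hbk, hak, hsplit,
        measure_union hdisj (EHP.measurableSet_cntEvent Sk' (fun x => x = j₀)), hj₀']
    -- preimage identity
    have hpre : ∀ k : ℕ, (fun ω (i : ℤ) => ω ((T ω : ℤ) + i)) ⁻¹' (C k)
        = {ω | ω ∈ C (k + T ω)} := by
      intro k
      ext ω
      simp only [Set.mem_preimage, hC, Set.mem_setOf_eq]
      have h1 : (EHP.cnt Wn fun i => ω ((T ω : ℤ) + ((k:ℤ) + i)))
          = EHP.cnt Wn fun i => ω (((k + T ω : ℕ):ℤ) + i) := by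
        unfold EHP.cnt
        apply Finset.sum_congr rfl
        intro i _
        congr 2
        push_cast
        ring
      rw [h1]
    have hDmeas : ∀ k : ℕ, MeasurableSet {ω : ℤ → Bool | ω ∈ C (k + T ω)} := by
      intro k
      rw [← hpre k]
      exact hSmeas (hCmeas k)
    -- telescoping inequality
    have hbig : ∑ k ∈ Finset.range N, (μ[|{ω | ω 0 = true}]) (C k)
        ≤ (∑ k ∈ Finset.range N, μ₀ (C k)) + ∫⁻ ω, ((min (T ω) N : ℕ) : ℝ≥0∞) ∂μ₀ := by
      set g : (ℤ → Bool) → ℕ → ℝ≥0∞ := fun ω j => if ω ∈ C j then 1 else 0 with hg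
      have hgind : ∀ k : ℕ, (fun ω => g ω (k + T ω))
          = Set.indicator {ω : ℤ → Bool | ω ∈ C (k + T ω)} (fun _ => (1:ℝ≥0∞)) := by
        intro k; funext ω
        by_cases hω : ω ∈ C (k + T ω) <;> simp [hg, hω, Set.indicator]
      have hgind2 : ∀ k : ℕ, (fun ω => g ω k) = Set.indicator (C k) (fun _ => (1:ℝ≥0∞)) := by
        intro k; funext ω
        by_cases hω : ω ∈ C k <;> simp [hg, hω, Set.indicator]
      have hgmeas1 : ∀ k : ℕ, Measurable (fun ω => g ω (k + T ω)) := by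
        intro k; rw [hgind k]; exact measurable_one.indicator (hDmeas k)
      have hgmeas2 : ∀ k : ℕ, Measurable (fun ω => g ω k) := by
        intro k; rw [hgind2 k]; exact measurable_one.indicator (hCmeas k)
      have e1 : ∀ k : ℕ, (μ[|{ω | ω 0 = true}]) (C k) = ∫⁻ ω, g ω (k + T ω) ∂μ₀ := by
        intro k
        rw [← hembed, Measure.map_apply hSmeas (hCmeas k), hpre k, hgind k]
        exact (lintegral_indicator_one (hDmeas k)).symm
      have e2 : ∀ k : ℕ, μ₀ (C k) = ∫⁻ ω, g ω k ∂μ₀ := by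
        intro k
        rw [hgind2 k]
        exact (lintegral_indicator_one (hCmeas k)).symm
      have hTm : Measurable (fun ω => ((min (T ω) N : ℕ) : ℝ≥0∞)) :=
        Measurable.comp (g := fun t : ℕ => ((min t N : ℕ) : ℝ≥0∞)) .of_discrete hTmeas
      calc ∑ k ∈ Finset.range N, (μ[|{ω | ω 0 = true}]) (C k)
          = ∫⁻ ω, ∑ k ∈ Finset.range N, g ω (k + T ω) ∂μ₀ := by
            rw [Finset.sum_congr rfl (fun k _ => e1 k),
              ← lintegral_finset_sum _ (fun k _ => hgmeas1 k)]
        _ ≤ ∫⁻ ω, ((∑ k ∈ Finset.range N, g ω k) + ((min (T ω) N : ℕ) : ℝ≥0∞)) ∂μ₀ := by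
            apply lintegral_mono
            intro ω
            exact EHP.sum_shift_le (g ω) (fun j => by rw [hg]; dsimp only; split <;> simp) (T ω) N
        _ = (∫⁻ ω, ∑ k ∈ Finset.range N, g ω k ∂μ₀)
              + ∫⁻ ω, ((min (T ω) N : ℕ) : ℝ≥0∞) ∂μ₀ :=
            lintegral_add_right _ hTm
        _ = (∑ k ∈ Finset.range N, μ₀ (C k)) + ∫⁻ ω, ((min (T ω) N : ℕ) : ℝ≥0∞) ∂μ₀ := by
            rw [lintegral_finset_sum _ (fun k _ => hgmeas2 k),
              Finset.sum_congr rfl (fun k _ => (e2 k).symm)]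
    -- combine
    have hsum_eq : ∑ k ∈ Finset.range N, (μ[|{ω | ω 0 = true}]) (C k)
        = (∑ k ∈ Finset.range N, μ₀ (C k)) + (N : ℝ≥0∞) * δ := by
      have h1 : ∀ k ∈ Finset.range N, (μ[|{ω | ω 0 = true}]) (C k) = μ₀ (C k) + δ :=
        fun k hk => (perk k (Finset.mem_range.mp hk)).symm
      rw [Finset.sum_congr rfl h1, Finset.sum_add_distrib, Finset.sum_const,
        Finset.card_range, nsmul_eq_mul]
    have hfinb : (∑ k ∈ Finset.range N, μ₀ (C k)) ≠ ⊤ := by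
      have h1 : ∑ k ∈ Finset.range N, μ₀ (C k) ≤ ∑ _k ∈ Finset.range N, (1:ℝ≥0∞) :=
        Finset.sum_le_sum (fun k _ => prob_le_one)
      refine ne_top_of_le_ne_top ?_ h1
      simp
    have hNδ : (N : ℝ≥0∞) * δ ≤ ∫⁻ ω, ((min (T ω) N : ℕ) : ℝ≥0∞) ∂μ₀ := by
      have h1 := hbig
      rw [hsum_eq] at h1
      exact (ENNReal.add_le_add_iff_left hfinb).mp h1
    refine le_trans ?_ hNδ
    -- numeric bound
    have hNr : (1:ℝ) ≤ (N:ℝ) := by exact_mod_cast (by omega : 1 ≤ N)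
    have hnr : ((n:ℕ):ℝ) = (N:ℝ) - 1 := by
      rw [hn]
      push_cast [Nat.cast_sub (by omega : 1 ≤ N)]
      ring
    have hs1 : (1:ℝ) ≤ Real.sqrt n := by
      rw [show (1:ℝ) = Real.sqrt 1 by simp]
      apply Real.sqrt_le_sqrt
      exact_mod_cast hn1
    have hsnpos : (0:ℝ) < Real.sqrt n := lt_of_lt_of_le one_pos hs1
    have hkey : Real.sqrt N * Real.sqrt n ≤ (N:ℝ) := by
      rw [← Real.sqrt_mul (by positivity)]
      have h2 : (N:ℝ) * n ≤ (N:ℝ) ^ 2 := by nlinarith [hnr, hNr]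
      calc Real.sqrt ((N:ℝ) * n) ≤ Real.sqrt ((N:ℝ) ^ 2) := Real.sqrt_le_sqrt h2
        _ = (N:ℝ) := Real.sqrt_sq (by positivity)
    calc ENNReal.ofReal (Real.sqrt N / 6)
        ≤ ENNReal.ofReal ((N:ℝ) * (1 / (6 * Real.sqrt n))) := by
          apply ENNReal.ofReal_le_ofReal
          rw [mul_one_div, div_le_div_iff₀ (by norm_num) (by positivity)]
          nlinarith
      _ = (N : ℝ≥0∞) * ENNReal.ofReal (1 / (6 * Real.sqrt n)) := by
          rw [ENNReal.ofReal_mul (by positivity), ENNReal.ofReal_natCast]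
      _ ≤ (N : ℝ≥0∞) * δ := mul_le_mul_right hj₀ _
  -- ################ dominated convergence ################
  have hreal : ∀ (t N : ℕ), ((min t N : ℕ) : ℝ) * (Real.sqrt N)⁻¹ ≤ Real.sqrt t := by
    intro t N
    rcases Nat.eq_zero_or_pos N with rfl | hNpos
    · simp
    · have hsN : (0:ℝ) < Real.sqrt N := Real.sqrt_pos.mpr (by exact_mod_cast hNpos)
      rw [mul_inv_le_iff₀ hsN]
      have h2 : ((min t N:ℕ):ℝ) ≤ t := by exact_mod_cast min_le_left t N
      have h3 : ((min t N:ℕ):ℝ) ≤ N := by exact_mod_cast min_le_right t N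
      have h4 : (0:ℝ) ≤ ((min t N:ℕ):ℝ) := by positivity
      calc ((min t N:ℕ):ℝ) = Real.sqrt (((min t N:ℕ):ℝ) * ((min t N:ℕ):ℝ)) :=
            (Real.sqrt_mul_self h4).symm
        _ ≤ Real.sqrt ((t:ℝ) * N) := Real.sqrt_le_sqrt (by nlinarith)
        _ = Real.sqrt t * Real.sqrt N := Real.sqrt_mul (by positivity) _
  have hsqrtT : Tendsto (fun N : ℕ => Real.sqrt N) atTop atTop := by
    rw [tendsto_atTop]
    intro b
    filter_upwards [eventually_ge_atTop (Nat.ceil (b ^ 2))] with N hN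
    have h1 : b ^ 2 ≤ (N:ℝ) := le_trans (Nat.le_ceil _) (by exact_mod_cast hN)
    calc b ≤ |b| := le_abs_self b
      _ = Real.sqrt (b ^ 2) := (Real.sqrt_sq_eq_abs b).symm
      _ ≤ Real.sqrt N := Real.sqrt_le_sqrt h1
  have htend : Tendsto
      (fun N : ℕ => ∫⁻ ω, ((min (T ω) N : ℕ) : ℝ≥0∞) * ENNReal.ofReal ((Real.sqrt N)⁻¹) ∂μ₀)
      atTop (𝓝 0) := by
    have h0 := tendsto_lintegral_of_dominated_convergence (μ := μ₀)
      (F := fun N ω => ((min (T ω) N : ℕ) : ℝ≥0∞) * ENNReal.ofReal ((Real.sqrt N)⁻¹))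
      (f := fun _ => 0)
      (bound := fun ω => ENNReal.ofReal (Real.sqrt (T ω)))
      (fun N => (Measurable.comp (g := fun t : ℕ => ((min t N : ℕ) : ℝ≥0∞)) .of_discrete
        hTmeas).mul_const _)
      (fun N => Filter.Eventually.of_forall (fun ω => by
        calc ((min (T ω) N : ℕ) : ℝ≥0∞) * ENNReal.ofReal ((Real.sqrt N)⁻¹)
            = ENNReal.ofReal (((min (T ω) N : ℕ) : ℝ) * (Real.sqrt N)⁻¹) := by
              rw [ENNReal.ofReal_mul (by positivity), ENNReal.ofReal_natCast]
          _ ≤ ENNReal.ofReal (Real.sqrt (T ω)) := ENNReal.ofReal_le_ofReal (hreal (T ω) N)))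
      hfin
      (Filter.Eventually.of_forall (fun ω => by
        have hev : ∀ᶠ N : ℕ in atTop,
            ((T ω : ℕ) : ℝ≥0∞) * ENNReal.ofReal ((Real.sqrt N)⁻¹)
            = ((min (T ω) N : ℕ) : ℝ≥0∞) * ENNReal.ofReal ((Real.sqrt N)⁻¹) := by
          filter_upwards [eventually_ge_atTop (T ω)] with N hNb
          rw [min_eq_left hNb]
        have h2 : Tendsto (fun N : ℕ => (Real.sqrt N)⁻¹) atTop (𝓝 0) :=
          hsqrtT.inv_tendsto_atTop
        have h3 : Tendsto (fun N : ℕ => ENNReal.ofReal ((Real.sqrt N)⁻¹)) atTop (𝓝 0) := by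
          rw [← ENNReal.ofReal_zero]
          exact ENNReal.tendsto_ofReal h2
        have h4 := ENNReal.Tendsto.const_mul h3 (Or.inr (ENNReal.natCast_ne_top (T ω)))
        rw [mul_zero] at h4
        exact h4.congr' hev))
    simpa using h0
  have hev2 : ∀ᶠ N : ℕ in atTop, ENNReal.ofReal (1/6)
      ≤ ∫⁻ ω, ((min (T ω) N : ℕ) : ℝ≥0∞) * ENNReal.ofReal ((Real.sqrt N)⁻¹) ∂μ₀ := by
    filter_upwards [eventually_ge_atTop 2] with N hN
    have hk := key N hN
    have hN0 : (0:ℝ) < (N:ℝ) := by exact_mod_cast (by omega : 0 < N)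
    have hsNpos : 0 < Real.sqrt N := Real.sqrt_pos.mpr hN0
    have hGF : ∫⁻ ω, ((min (T ω) N : ℕ) : ℝ≥0∞) * ENNReal.ofReal ((Real.sqrt N)⁻¹) ∂μ₀
        = (∫⁻ ω, ((min (T ω) N : ℕ) : ℝ≥0∞) ∂μ₀) * ENNReal.ofReal ((Real.sqrt N)⁻¹) :=
      lintegral_mul_const' _ _ ENNReal.ofReal_ne_top
    rw [hGF]
    calc ENNReal.ofReal (1/6)
        = ENNReal.ofReal ((Real.sqrt N / 6) * (Real.sqrt N)⁻¹) := by
          congr 1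
          field_simp
      _ = ENNReal.ofReal (Real.sqrt N / 6) * ENNReal.ofReal ((Real.sqrt N)⁻¹) :=
          ENNReal.ofReal_mul (by positivity)
      _ ≤ (∫⁻ ω, ((min (T ω) N : ℕ) : ℝ≥0∞) ∂μ₀) * ENNReal.ofReal ((Real.sqrt N)⁻¹) :=
          mul_le_mul_left hk _
  have hcontr := ge_of_tendsto htend hev2
  simp only [le_zero_iff, ENNReal.ofReal_eq_zero] at hcontr
  norm_num at hcontr
end

section
/- Let m ≥ 2 be an integer and p = 1/m. Let μ be the product probability measure on {0,1}^ℤ under which the coordinates are i.i.d. Bernoulli(p) (value 1 = heads with probability p), and let μ₀ be μ conditioned on the event {ω : ω(0) = 0}. Define T_*(ω) = min{n ≥ 0 : #{k ∈ [0,n] : ω(k) = 0} ≤ (m−1)·#{k ∈ [0,n] : ω(k) = 1}}. Then for every 0 ≤ β < 1/2, ∫ T_*(ω)^β dμ₀(ω) < ∞. -/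
open MeasureTheory ProbabilityTheory
open scoped ENNReal

section
open Finset

namespace ExtraHeadAux



/-- step value: `m·[b] - 1` -/
def val (m : ℕ) (b : Bool) : ℤ := if b then (m : ℤ) - 1 else -1

/-- periodized step sequence -/
def stp (m n : ℕ) (v : Fin (n+1) → Bool) (i : ℕ) : ℤ :=
  val m (v ⟨i % (n+1), Nat.mod_lt _ n.succ_pos⟩)

/-- partial sums of the periodized walk -/
def S (m n : ℕ) (v : Fin (n+1) → Bool) (t : ℕ) : ℤ := ∑ i ∈ Finset.range t, stp m n v i

/-- ballot property started at `j` -/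
def BJ (m n : ℕ) (v : Fin (n+1) → Bool) (j : ℕ) : Prop :=
  ∀ t < n + 1, S m n v (j + t + 1) < S m n v j

/-- rotation of a word -/
def rot (n : ℕ) (j : Fin (n+1)) (v : Fin (n+1) → Bool) : Fin (n+1) → Bool :=
  fun i => v (i + j)

lemma S_succ (m n : ℕ) (v : Fin (n+1) → Bool) (t : ℕ) :
    S m n v (t+1) = S m n v t + stp m n v t := Finset.sum_range_succ _ _

lemma stp_add_period (m n : ℕ) (v : Fin (n+1) → Bool) (t : ℕ) :
    stp m n v (t + (n+1)) = stp m n v t := by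
  unfold stp; congr 2; simp [Nat.add_mod_right]

/-- periodicity -/
lemma S_period (m n : ℕ) (v : Fin (n+1) → Bool) (t : ℕ) :
    S m n v (t + (n+1)) = S m n v t + S m n v (n+1) := by
  induction t with
  | zero => simp [S]
  | succ t ih =>
      have h1 : S m n v (t + 1 + (n+1)) = S m n v (t + (n+1)) + stp m n v (t + (n+1)) := by
        have h2 : t + 1 + (n+1) = (t + (n+1)) + 1 := by omega
        rw [h2, S_succ]
      have a3 := S_succ m n v t
      rw [stp_add_period] at h1
      omega

lemma stp_rot (m n : ℕ) (j : Fin (n+1)) (v : Fin (n+1) → Bool) (i : ℕ) :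
    stp m n (rot n j v) i = stp m n v (j.val + i) := by
  unfold stp rot
  congr 2
  ext
  simp [Fin.add_def, Nat.mod_add_mod, Nat.add_comm, Nat.add_mod]

lemma S_rot (m n : ℕ) (j : Fin (n+1)) (v : Fin (n+1) → Bool) (t : ℕ) :
    S m n v (j.val + t) = S m n v j.val + S m n (rot n j v) t := by
  induction t with
  | zero => simp [S]
  | succ t ih =>
      have : j.val + (t + 1) = (j.val + t) + 1 := by ring
      rw [this, S_succ, ih, S_succ, stp_rot]; ring

lemma BJ_rot (m n : ℕ) (j : Fin (n+1)) (v : Fin (n+1) → Bool) :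
    BJ m n v j.val ↔ BJ m n (rot n j v) 0 := by
  have z : S m n (rot n j v) 0 = 0 := by simp [S]
  have key : ∀ t : ℕ, S m n v (j.val + t + 1) - S m n v j.val
      = S m n (rot n j v) (0 + t + 1) - S m n (rot n j v) 0 := by
    intro t
    have e := S_rot m n j v (t+1)
    have h2 : (j : ℕ) + (t+1) = (j : ℕ) + t + 1 := by omega
    rw [h2] at e
    rw [z, zero_add]
    omega
  unfold BJ
  constructor <;> intro h t ht <;> have h3 := h t ht <;> have k := key t <;> omega

open scoped Classical in
lemma card_BJ_le (m n : ℕ) (v : Fin (n+1) → Bool) :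
    ((univ.filter (fun j : Fin (n+1) => BJ m n v j.val)).card : ℤ)
      ≤ max (- S m n v (n+1)) 0 := by
  classical
  set B := univ.filter (fun j : Fin (n+1) => BJ m n v j.val) with hBdef
  rcases B.eq_empty_or_nonempty with h | h
  · simp [h]
  · set j0 := B.min' h with hj0
    have hj0B : j0 ∈ B := B.min'_mem h
    have hBJ : ∀ j ∈ B, BJ m n v j.val := by
      intro j hj; exact (mem_filter.mp hj).2
    set r : ℤ := - S m n v (n+1) with hr
    have hper : ∀ j : ℕ, S m n v (j + (n+1)) = S m n v j - r := by
      intro j; have := S_period m n v j; omega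
    have hr1 : 1 ≤ r := by
      have h1 := hBJ j0 hj0B n (by omega)
      have h3 : j0.val + n + 1 = j0.val + (n+1) := by omega
      rw [h3, hper] at h1
      omega
    have hdec : ∀ j ∈ B, ∀ j' ∈ B, j.val < j'.val → S m n v j'.val < S m n v j.val := by
      intro j hj j' hj' hlt
      have hj'lt : j'.val < n + 1 := j'.isLt
      have ht : j'.val - j.val - 1 < n + 1 := by omega
      have h5 := hBJ j hj (j'.val - j.val - 1) ht
      have h4 : j.val + (j'.val - j.val - 1) + 1 = j'.val := by omega
      rw [h4] at h5; exact h5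
    have hlow : ∀ j' ∈ B, S m n v j0.val - r < S m n v j'.val := by
      intro j' hj'
      have hle : j0.val ≤ j'.val := B.min'_le j' hj'
      rcases Nat.eq_or_lt_of_le hle with he | hlt
      · rw [he]; omega
      · have hj0lt : j0.val < n + 1 := j0.isLt
        have ht : j0.val + (n+1) - j'.val - 1 < n + 1 := by omega
        have h5 := hBJ j' hj' (j0.val + (n+1) - j'.val - 1) ht
        have h4 : j'.val + (j0.val + (n+1) - j'.val - 1) + 1 = j0.val + (n+1) := by
          have := j'.isLt; omega
        rw [h4, hper] at h5
        omega
    have hsub : ∀ j ∈ B, S m n v j.val ∈ Finset.Ioc (S m n v j0.val - r) (S m n v j0.val) := by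
      intro j hj
      rw [Finset.mem_Ioc]
      refine ⟨hlow j hj, ?_⟩
      have hle : j0.val ≤ j.val := B.min'_le j hj
      rcases Nat.eq_or_lt_of_le hle with he | hlt
      · rw [he]
      · exact le_of_lt (hdec j0 hj0B j hj hlt)
    have hinj : Set.InjOn (fun j : Fin (n+1) => S m n v j.val) B := by
      intro a ha b hb hab
      by_contra hne
      have hne' : a.val ≠ b.val := fun hv => hne (Fin.ext hv)
      rcases Nat.lt_or_ge a.val b.val with hl | hg
      · have := hdec a (by simpa using ha) b (by simpa using hb) hl
        simp only at hab
        omega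
      · have hl : b.val < a.val := by omega
        have := hdec b (by simpa using hb) a (by simpa using ha) hl
        simp only at hab
        omega
    have hcard : B.card ≤ (Finset.Ioc (S m n v j0.val - r) (S m n v j0.val)).card :=
      Finset.card_le_card_of_injOn _ hsub hinj
    rw [Int.card_Ioc] at hcard
    have : ((S m n v j0.val - (S m n v j0.val - r)).toNat : ℤ) = r := by omega
    have hcard' : (B.card : ℤ) ≤ r := by
      have := Int.toNat_of_nonneg (by omega : (0:ℤ) ≤ S m n v j0.val - (S m n v j0.val - r))
      omega
    omega
def W (p : ℝ) (n : ℕ) (v : Fin (n+1) → Bool) : ℝ := ∏ i, (if v i then p else 1 - p)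

lemma W_nonneg {p : ℝ} (hp0 : 0 ≤ p) (hp1 : p ≤ 1) (n : ℕ) (v : Fin (n+1) → Bool) :
    0 ≤ W p n v := by
  apply Finset.prod_nonneg
  intro i _
  by_cases h : v i <;> simp [h, hp0] <;> linarith

lemma W_rot (p : ℝ) (n : ℕ) (j : Fin (n+1)) (v : Fin (n+1) → Bool) :
    W p n (rot n j v) = W p n v := by
  unfold W rot
  exact Equiv.prod_comp (Equiv.addRight j) (fun i => if v i then p else 1 - p)

def rotE (n : ℕ) (j : Fin (n+1)) : (Fin (n+1) → Bool) ≃ (Fin (n+1) → Bool) :=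
  Equiv.arrowCongr (Equiv.addRight j).symm (Equiv.refl Bool)

lemma rotE_apply (n : ℕ) (j : Fin (n+1)) (v : Fin (n+1) → Bool) :
    rotE n j v = rot n j v := rfl

open scoped Classical in
lemma sum_BJ_rot (m n : ℕ) (p : ℝ) (j : Fin (n+1)) :
    (∑ v : Fin (n+1) → Bool, if BJ m n v j.val then W p n v else 0)
      = ∑ v : Fin (n+1) → Bool, if BJ m n v 0 then W p n v else 0 := by
  apply Fintype.sum_equiv (rotE n j)
  intro v
  rw [rotE_apply, ← W_rot p n j v]
  by_cases h : BJ m n v j.val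
  · rw [if_pos h, if_pos ((BJ_rot m n j v).mp h)]
  · rw [if_neg h, if_neg (fun h' => h ((BJ_rot m n j v).mpr h'))]

open scoped Classical in
lemma key1 (m n : ℕ) (p : ℝ) :
    ((n:ℝ) + 1) * (∑ v : Fin (n+1) → Bool, if BJ m n v 0 then W p n v else 0)
      = ∑ v : Fin (n+1) → Bool,
          ((univ.filter (fun j : Fin (n+1) => BJ m n v j.val)).card : ℝ) * W p n v := by
  have lhs : ((n:ℝ) + 1) * (∑ v : Fin (n+1) → Bool, if BJ m n v 0 then W p n v else 0)
      = ∑ j : Fin (n+1), ∑ v : Fin (n+1) → Bool, if BJ m n v j.val then W p n v else 0 := by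
    rw [Finset.sum_congr rfl (fun j _ => sum_BJ_rot m n p j)]
    rw [Finset.sum_const, Finset.card_univ, Fintype.card_fin]
    push_cast
    ring
  rw [lhs, Finset.sum_comm]
  apply Finset.sum_congr rfl
  intro v _
  rw [show (∑ x : Fin (n+1), if BJ m n v x.val then W p n v else 0)
      = ∑ x ∈ filter (fun j : Fin (n+1) => BJ m n v j.val) univ, W p n v
      from (Finset.sum_filter _ _).symm,
    Finset.sum_const, nsmul_eq_mul]



lemma sum_prod_eq (n : ℕ) (g : Fin (n+1) → Bool → ℝ) :
    ∑ v : Fin (n+1) → Bool, ∏ i, g i (v i) = ∏ i, (g i true + g i false) := by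
  have h1 : ∀ i, g i true + g i false = ∑ b : Bool, g i b := by
    intro i; rw [Fintype.sum_bool]
  rw [Finset.prod_congr rfl (fun i _ => h1 i), Finset.prod_univ_sum]
  rw [Fintype.piFinset_univ]

lemma sum_W (p : ℝ) (n : ℕ) : ∑ v : Fin (n+1) → Bool, W p n v = 1 := by
  have := sum_prod_eq n (fun _ b => if b then p else 1 - p)
  unfold W
  rw [this]
  simp

lemma cross_term {m : ℕ} {p : ℝ} (hpm : p * (m:ℝ) = 1) (n : ℕ) (i j : Fin (n+1)) (hij : i ≠ j) :
    ∑ v : Fin (n+1) → Bool, W p n v * ((val m (v i) : ℝ) * (val m (v j) : ℝ)) = 0 := by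
  have key : ∀ v : Fin (n+1) → Bool, W p n v * ((val m (v i) : ℝ) * (val m (v j) : ℝ))
      = ∏ k, ((if k = i then (val m (v k) : ℝ) else 1) * (if k = j then (val m (v k) : ℝ) else 1)
          * (if v k then p else 1 - p)) := by
    intro v
    rw [Finset.prod_mul_distrib, Finset.prod_mul_distrib]
    rw [Finset.prod_ite_eq' univ i (fun k => (val m (v k) : ℝ)),
        Finset.prod_ite_eq' univ j (fun k => (val m (v k) : ℝ))]
    simp [W]
    ring
  rw [Finset.sum_congr rfl (fun v _ => key v)]
  have h2 := sum_prod_eq n (fun k b =>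
    (if k = i then (val m b : ℝ) else 1) * (if k = j then (val m b : ℝ) else 1)
      * (if b then p else 1 - p))
  rw [h2]
  apply Finset.prod_eq_zero (Finset.mem_univ i)
  simp only [if_pos rfl, if_neg hij, val]
  simp only [if_true, if_false, Bool.false_eq_true]
  push_cast
  ring_nf
  linarith [hpm]

lemma diag_term {m : ℕ} {p : ℝ} (hpm : p * (m:ℝ) = 1) (n : ℕ) (i : Fin (n+1)) :
    ∑ v : Fin (n+1) → Bool, W p n v * ((val m (v i) : ℝ) * (val m (v i) : ℝ)) = (m:ℝ) - 1 := by
  have key : ∀ v : Fin (n+1) → Bool, W p n v * ((val m (v i) : ℝ) * (val m (v i) : ℝ))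
      = ∏ k, ((if k = i then (val m (v k) : ℝ) * (val m (v k) : ℝ) else 1)
          * (if v k then p else 1 - p)) := by
    intro v
    rw [Finset.prod_mul_distrib]
    rw [Finset.prod_ite_eq' univ i (fun k => (val m (v k) : ℝ) * (val m (v k) : ℝ))]
    simp [W]
    ring
  rw [Finset.sum_congr rfl (fun v _ => key v)]
  have h2 := sum_prod_eq n (fun k b =>
    (if k = i then (val m b : ℝ) * (val m b : ℝ) else 1) * (if b then p else 1 - p))
  rw [h2]
  have hmm : p * (m:ℝ) * (m:ℝ) = (m:ℝ) := by rw [hpm]; ring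
  rw [Finset.prod_eq_single i]
  · simp only [if_pos rfl, val]
    simp only [if_true, if_false, Bool.false_eq_true]
    push_cast
    nlinarith [hpm, hmm]
  · intro k _ hk
    rw [if_neg hk, if_neg hk]
    simp
  · intro h; exact absurd (Finset.mem_univ i) h

lemma SN_eq (m n : ℕ) (v : Fin (n+1) → Bool) :
    S m n v (n+1) = ∑ i : Fin (n+1), val m (v i) := by
  rw [S, ← Fin.sum_univ_eq_sum_range (fun i => stp m n v i) (n+1)]
  apply Finset.sum_congr rfl
  intro i _
  unfold stp
  congr 2
  exact Fin.ext (Nat.mod_eq_of_lt i.isLt)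

lemma second_moment {m : ℕ} {p : ℝ} (hpm : p * (m:ℝ) = 1) (n : ℕ) :
    ∑ v : Fin (n+1) → Bool, W p n v * ((S m n v (n+1) : ℝ))^2 = ((n:ℝ)+1) * ((m:ℝ) - 1) := by
  have expand : ∀ v : Fin (n+1) → Bool, W p n v * ((S m n v (n+1) : ℝ))^2
      = ∑ i : Fin (n+1), ∑ j : Fin (n+1), W p n v * ((val m (v i) : ℝ) * (val m (v j) : ℝ)) := by
    intro v
    rw [SN_eq]
    push_cast
    rw [sq, Finset.sum_mul_sum]
    rw [Finset.mul_sum]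
    apply Finset.sum_congr rfl
    intro i _
    rw [Finset.mul_sum]
  rw [Finset.sum_congr rfl (fun v _ => expand v), Finset.sum_comm]
  have inner : ∀ i : Fin (n+1),
      (∑ j : Fin (n+1), ∑ v : Fin (n+1) → Bool, W p n v * ((val m (v i) : ℝ) * (val m (v j) : ℝ)))
        = (m:ℝ) - 1 := by
    intro i
    rw [Finset.sum_eq_single i]
    · exact diag_term hpm n i
    · intro j _ hj
      exact cross_term hpm n i j (Ne.symm hj)
    · intro h; exact absurd (Finset.mem_univ i) h
  have inner2 : ∀ i : Fin (n+1),
      (∑ v : Fin (n+1) → Bool, ∑ j : Fin (n+1), W p n v * ((val m (v i) : ℝ) * (val m (v j) : ℝ)))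
        = (m:ℝ) - 1 := by
    intro i
    rw [Finset.sum_comm]
    exact inner i
  rw [Finset.sum_congr rfl (fun i _ => inner2 i), Finset.sum_const, Finset.card_univ,
    Fintype.card_fin, nsmul_eq_mul]
  push_cast
  ring



open scoped Classical in
lemma tail_sum_bound {m : ℕ} {p : ℝ} (hm : 2 ≤ m) (hpm : p * (m:ℝ) = 1)
    (hp0 : 0 ≤ p) (hp1 : p ≤ 1) (n : ℕ) :
    (∑ v : Fin (n+1) → Bool, if BJ m n v 0 then W p n v else 0)
      ≤ Real.sqrt ((m:ℝ) - 1) / Real.sqrt ((n:ℝ)+1) := by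
  have hN : (0:ℝ) < (n:ℝ) + 1 := by positivity
  have hWnn : ∀ v : Fin (n+1) → Bool, 0 ≤ W p n v := W_nonneg hp0 hp1 n
  -- step 1: N * Σbal ≤ ∑ W |S N|
  have step1 : ((n:ℝ)+1) * (∑ v : Fin (n+1) → Bool, if BJ m n v 0 then W p n v else 0)
      ≤ ∑ v : Fin (n+1) → Bool, W p n v * |((S m n v (n+1) : ℝ))| := by
    rw [key1]
    apply Finset.sum_le_sum
    intro v _
    have h1 := card_BJ_le m n v
    have h2 : ((univ.filter (fun j : Fin (n+1) => BJ m n v j.val)).card : ℝ)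
        ≤ |((S m n v (n+1) : ℝ))| := by
      have h3 : (max (- S m n v (n+1)) 0 : ℤ) ≤ |S m n v (n+1)| := by
        rcases abs_cases (S m n v (n+1)) with ⟨h,_⟩|⟨h,_⟩ <;> omega
      have h4 : ((univ.filter (fun j : Fin (n+1) => BJ m n v j.val)).card : ℤ)
          ≤ |S m n v (n+1)| := le_trans h1 h3
      calc ((univ.filter (fun j : Fin (n+1) => BJ m n v j.val)).card : ℝ)
          = (((univ.filter (fun j : Fin (n+1) => BJ m n v j.val)).card : ℤ) : ℝ) := by push_cast; ring
        _ ≤ ((|S m n v (n+1)| : ℤ) : ℝ) := by exact_mod_cast h4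
        _ = |((S m n v (n+1) : ℝ))| := by push_cast; ring
    calc ((univ.filter (fun j : Fin (n+1) => BJ m n v j.val)).card : ℝ) * W p n v
        ≤ |((S m n v (n+1) : ℝ))| * W p n v := by
          apply mul_le_mul_of_nonneg_right h2 (hWnn v)
      _ = W p n v * |((S m n v (n+1) : ℝ))| := by ring
  -- step 2: Cauchy-Schwarz
  have step2 : (∑ v : Fin (n+1) → Bool, W p n v * |((S m n v (n+1) : ℝ))|)^2
      ≤ ((n:ℝ)+1) * ((m:ℝ) - 1) := by
    have cs := Finset.sum_mul_sq_le_sq_mul_sq Finset.univ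
      (fun v : Fin (n+1) → Bool => Real.sqrt (W p n v))
      (fun v : Fin (n+1) → Bool => Real.sqrt (W p n v) * |((S m n v (n+1) : ℝ))|)
    have e1 : ∀ v : Fin (n+1) → Bool,
        Real.sqrt (W p n v) * (Real.sqrt (W p n v) * |((S m n v (n+1) : ℝ))|)
          = W p n v * |((S m n v (n+1) : ℝ))| := by
      intro v
      rw [← mul_assoc, Real.mul_self_sqrt (hWnn v)]
    have e2 : ∀ v : Fin (n+1) → Bool, Real.sqrt (W p n v) ^ 2 = W p n v := by
      intro v; exact Real.sq_sqrt (hWnn v)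
    have e3 : ∀ v : Fin (n+1) → Bool,
        (Real.sqrt (W p n v) * |((S m n v (n+1) : ℝ))|) ^ 2
          = W p n v * ((S m n v (n+1) : ℝ))^2 := by
      intro v
      rw [mul_pow, e2, sq_abs]
    rw [Finset.sum_congr rfl (fun v _ => e1 v), Finset.sum_congr rfl (fun v _ => e2 v),
      Finset.sum_congr rfl (fun v _ => e3 v), sum_W, second_moment hpm, one_mul] at cs
    exact cs
  -- step 3: conclude
  have h5 : 0 ≤ ∑ v : Fin (n+1) → Bool, W p n v * |((S m n v (n+1) : ℝ))| :=
    Finset.sum_nonneg (fun v _ => mul_nonneg (hWnn v) (abs_nonneg _))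
  have h6 : (∑ v : Fin (n+1) → Bool, W p n v * |((S m n v (n+1) : ℝ))|)
      ≤ Real.sqrt (((n:ℝ)+1) * ((m:ℝ) - 1)) := Real.le_sqrt_of_sq_le step2
  have hm1 : (0:ℝ) ≤ (m:ℝ) - 1 := by
    have : (2:ℝ) ≤ (m:ℝ) := by exact_mod_cast hm
    linarith
  have h7 : Real.sqrt (((n:ℝ)+1) * ((m:ℝ) - 1))
      = Real.sqrt ((n:ℝ)+1) * Real.sqrt ((m:ℝ)-1) := Real.sqrt_mul (le_of_lt hN) _
  have hsN : (0:ℝ) < Real.sqrt ((n:ℝ)+1) := Real.sqrt_pos.mpr hN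
  have key : ((n:ℝ)+1) * (∑ v : Fin (n+1) → Bool, if BJ m n v 0 then W p n v else 0)
      ≤ Real.sqrt ((n:ℝ)+1) * Real.sqrt ((m:ℝ)-1) := by
    rw [← h7]; exact le_trans step1 h6
  have hNsq : ((n:ℝ)+1) = Real.sqrt ((n:ℝ)+1) * Real.sqrt ((n:ℝ)+1) :=
    (Real.mul_self_sqrt (le_of_lt hN)).symm
  have key2 : Real.sqrt ((n:ℝ)+1) * (∑ v : Fin (n+1) → Bool, if BJ m n v 0 then W p n v else 0)
      ≤ Real.sqrt ((m:ℝ)-1) := by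
    have key' : Real.sqrt ((n:ℝ)+1) * Real.sqrt ((n:ℝ)+1)
        * (∑ v : Fin (n+1) → Bool, if BJ m n v 0 then W p n v else 0)
        ≤ Real.sqrt ((n:ℝ)+1) * Real.sqrt ((m:ℝ)-1) := by rw [← hNsq]; exact key
    rw [mul_assoc] at key'
    exact le_of_mul_le_mul_left key' hsN
  rw [le_div_iff₀ hsN]
  linarith [key2]
/-- the word of `ω` on `[0,n]` -/
def wrd (n : ℕ) (ω : ℤ → Bool) : Fin (n+1) → Bool := fun i => ω (i.val : ℤ)

lemma S_wrd (m n : ℕ) (ω : ℤ → Bool) (t : ℕ) (ht : t ≤ n) :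
    S m n (wrd n ω) (t+1)
      = (m : ℤ) * ((Finset.Icc (0 : ℤ) (t:ℤ)).filter (fun k => ω k = true)).card - (t+1) := by
  have h1 : S m n (wrd n ω) (t+1) = ∑ i ∈ Finset.range (t+1), val m (ω (i:ℤ)) := by
    apply Finset.sum_congr rfl
    intro i hi
    rw [Finset.mem_range] at hi
    unfold stp wrd
    have hmod : i % (n+1) = i := Nat.mod_eq_of_lt (by omega)
    simp [hmod]
  have h2 : ∑ i ∈ Finset.range (t+1), val m (ω (i:ℤ))
      = ∑ z ∈ Finset.Icc (0 : ℤ) (t:ℤ), val m (ω z) := by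
    have hmap : Finset.map ⟨fun i : ℕ => (i : ℤ), fun a b h => by simpa using h⟩ (Finset.range (t+1))
        = Finset.Icc (0 : ℤ) (t:ℤ) := by
      ext z
      simp only [Finset.mem_map, Finset.mem_range, Finset.mem_Icc, Function.Embedding.coeFn_mk]
      constructor
      · rintro ⟨a, ha, rfl⟩; show (0:ℤ) ≤ (a:ℤ) ∧ (a:ℤ) ≤ (t:ℤ); omega
      · intro hz; exact ⟨z.toNat, by omega, by show ((z.toNat:ℕ):ℤ) = z; omega⟩
    rw [← hmap, Finset.sum_map]
    rfl
  have h3 : ∑ z ∈ Finset.Icc (0 : ℤ) (t:ℤ), val m (ω z)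
      = (m : ℤ) * ((Finset.Icc (0 : ℤ) (t:ℤ)).filter (fun k => ω k = true)).card - (t+1) := by
    have e : ∀ z, val m (ω z) = (m:ℤ) * (if ω z = true then 1 else 0) - 1 := by
      intro z
      by_cases h : ω z <;> simp [val, h]
    rw [Finset.sum_congr rfl (fun z _ => e z), Finset.sum_sub_distrib, ← Finset.mul_sum]
    rw [Finset.sum_const, Int.card_Icc]
    have : ∑ z ∈ Finset.Icc (0 : ℤ) (t:ℤ), (if ω z = true then (1:ℤ) else 0)
        = ((Finset.Icc (0 : ℤ) (t:ℤ)).filter (fun k => ω k = true)).card := by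
      rw [Finset.card_filter]
      push_cast
      rfl
    rw [this]
    simp
  rw [h1, h2, h3]

/-- main event inclusion -/
lemma T_gt_imp_Bal (m n : ℕ) (hm : 2 ≤ m) (ω : ℤ → Bool)
    (h : ∀ t : ℕ, t ≤ n → ¬ (((Finset.Icc (0 : ℤ) (t:ℤ)).filter (fun k => ω k = false)).card
        ≤ (m - 1) * ((Finset.Icc (0 : ℤ) (t:ℤ)).filter (fun k => ω k = true)).card)) :
    BJ m n (wrd n ω) 0 := by
  intro t ht
  have h0 : S m n (wrd n ω) 0 = 0 := by simp [S]
  rw [zero_add, h0, S_wrd m n ω t (by omega)]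
  have hcards : ((Finset.Icc (0 : ℤ) (t:ℤ)).filter (fun k => ω k = false)).card
      + ((Finset.Icc (0 : ℤ) (t:ℤ)).filter (fun k => ω k = true)).card
      = (Finset.Icc (0 : ℤ) (t:ℤ)).card := by
    classical
    have e : ((Finset.Icc (0 : ℤ) (t:ℤ)).filter (fun k => ω k = true)).card
        = ((Finset.Icc (0 : ℤ) (t:ℤ)).filter (fun k => ¬ (ω k = false))).card := by
      congr 1
      ext k
      simp
    rw [e, Finset.card_filter_add_card_filter_not]
  have hIcc : (Finset.Icc (0 : ℤ) (t:ℤ)).card = t + 1 := by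
    rw [Int.card_Icc]; omega
  have := h t (by omega)
  set cF := ((Finset.Icc (0 : ℤ) (t:ℤ)).filter (fun k => ω k = false)).card
  set cT := ((Finset.Icc (0 : ℤ) (t:ℤ)).filter (fun k => ω k = true)).card
  -- cF > (m-1) cT, cF + cT = t+1 ⇒ m cT ≤ t
  have hmc : m * cT ≤ t := by
    have h4 : (m - 1) * cT + 1 ≤ cF := by omega
    have h5 : cF + cT = t + 1 := by rw [hcards, hIcc]
    have hm' : 1 ≤ m := by omega
    have : (m-1) * cT + cT = m * cT := by
      cases m with
      | zero => omega
      | succ m' => simp [Nat.succ_sub_one]; ring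
    omega
  have : ((m:ℤ)) * (cT:ℤ) ≤ (t:ℤ) := by exact_mod_cast hmc
  omega


def extF (n : ℕ) (v : Fin (n+1) → Bool) : ℤ → Bool :=
  fun z => if h : 0 ≤ z ∧ z ≤ (n:ℤ) then v ⟨z.toNat, by omega⟩ else false

lemma cyl_eq (n : ℕ) (v : Fin (n+1) → Bool) :
    {ω : ℤ → Bool | wrd n ω = v}
      = {ω : ℤ → Bool | ∀ i ∈ Finset.Icc (0:ℤ) (n:ℤ), ω i = extF n v i} := by
  ext ω
  simp only [Set.mem_setOf_eq]
  constructor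
  · intro h i hi
    rw [Finset.mem_Icc] at hi
    have he : extF n v i = v ⟨i.toNat, by omega⟩ := dif_pos ⟨hi.1, hi.2⟩
    rw [he, ← h]
    unfold wrd
    congr 1
    simp only [Fin.val_mk]
    omega
  · intro h
    funext k
    unfold wrd
    have hk : (k.val : ℤ) ∈ Finset.Icc (0:ℤ) (n:ℤ) := by
      rw [Finset.mem_Icc]
      constructor
      · positivity
      · exact_mod_cast Nat.lt_succ_iff.mp k.isLt
    rw [h _ hk]
    unfold extF
    rw [dif_pos ⟨by positivity, by exact_mod_cast Nat.lt_succ_iff.mp k.isLt⟩]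
    congr 1

lemma cylM (s : Finset ℤ) (f : ℤ → Bool) :
    MeasurableSet {ω : ℤ → Bool | ∀ i ∈ s, ω i = f i} := by
  have he : {ω : ℤ → Bool | ∀ i ∈ s, ω i = f i}
      = ⋂ i ∈ (s : Set ℤ), (fun ω : ℤ → Bool => ω i) ⁻¹' {f i} := by
    ext ω; simp
  rw [he]
  exact MeasurableSet.biInter s.countable_toSet
    (fun i _ => (measurable_pi_apply i) (measurableSet_singleton _))

def emb (n : ℕ) : Fin (n+1) ↪ ℤ := ⟨fun i => (i.val : ℤ), by
  intro a b h
  ext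
  simpa using h⟩

lemma emb_map (n : ℕ) : Finset.map (emb n) Finset.univ = Finset.Icc (0:ℤ) (n:ℤ) := by
  ext z
  simp only [Finset.mem_map, Finset.mem_univ, true_and, Finset.mem_Icc, emb,
    Function.Embedding.coeFn_mk]
  constructor
  · rintro ⟨a, rfl⟩
    have := a.isLt
    show (0:ℤ) ≤ ((a.val:ℕ):ℤ) ∧ ((a.val:ℕ):ℤ) ≤ (n:ℤ)
    omega
  · intro hz
    exact ⟨⟨z.toNat, by omega⟩, by show ((z.toNat:ℕ):ℤ) = z; omega⟩

lemma cyl_measure {p : ℝ} (hp0 : 0 ≤ p) (hp1 : p ≤ 1)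
    (μ : Measure (ℤ → Bool))
    (hμ : ∀ (s : Finset ℤ) (f : ℤ → Bool),
      μ {ω | ∀ i ∈ s, ω i = f i}
        = ∏ i ∈ s, (if f i then ENNReal.ofReal p else ENNReal.ofReal (1 - p)))
    (n : ℕ) (v : Fin (n+1) → Bool) :
    μ {ω : ℤ → Bool | wrd n ω = v} = ENNReal.ofReal (W p n v) := by
  rw [cyl_eq, hμ (Finset.Icc (0:ℤ) (n:ℤ)) (extF n v), ← emb_map n, Finset.prod_map]
  have he : ∀ i : Fin (n+1), extF n v (emb n i) = v i := by
    intro i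
    unfold extF emb
    show (if h : 0 ≤ ((i.val:ℕ):ℤ) ∧ ((i.val:ℕ):ℤ) ≤ (n:ℤ) then v ⟨(((i.val:ℕ):ℤ)).toNat, by omega⟩ else false) = v i
    rw [dif_pos ⟨by positivity, by exact_mod_cast Nat.lt_succ_iff.mp i.isLt⟩]
    congr 1
  have hnn : ∀ i : Fin (n+1), (0:ℝ) ≤ (if v i then p else 1 - p) := by
    intro i
    by_cases h : v i <;> simp [h, hp0] <;> linarith
  rw [W, ENNReal.ofReal_prod_of_nonneg (fun i _ => hnn i)]
  apply Finset.prod_congr rfl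
  intro i _
  rw [he i, apply_ite ENNReal.ofReal]

open scoped Classical in
lemma bal_measure {p : ℝ} (hp0 : 0 ≤ p) (hp1 : p ≤ 1)
    (μ : Measure (ℤ → Bool))
    (hμ : ∀ (s : Finset ℤ) (f : ℤ → Bool),
      μ {ω | ∀ i ∈ s, ω i = f i}
        = ∏ i ∈ s, (if f i then ENNReal.ofReal p else ENNReal.ofReal (1 - p)))
    (m n : ℕ) :
    μ {ω : ℤ → Bool | BJ m n (wrd n ω) 0}
      = ENNReal.ofReal (∑ v : Fin (n+1) → Bool, if BJ m n v 0 then W p n v else 0) := by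
  have hun : {ω : ℤ → Bool | BJ m n (wrd n ω) 0}
      = ⋃ v ∈ Finset.univ.filter (fun v : Fin (n+1) → Bool => BJ m n v 0),
          {ω : ℤ → Bool | wrd n ω = v} := by
    ext ω
    simp only [Set.mem_setOf_eq, Set.mem_iUnion, Finset.mem_filter, Finset.mem_univ, true_and]
    constructor
    · intro h
      exact ⟨wrd n ω, h, rfl⟩
    · rintro ⟨v, hv, he⟩
      rw [he]; exact hv
  rw [hun, measure_biUnion_finset]
  · rw [Finset.sum_congr rfl (fun v _ => cyl_measure hp0 hp1 μ hμ n v)]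
    rw [← ENNReal.ofReal_sum_of_nonneg]
    · rw [Finset.sum_filter]
    · intro v _
      apply Finset.prod_nonneg
      intro i _
      by_cases h : v i <;> simp [h, hp0] <;> linarith
  · intro v hv v' hv' hne
    simp only [Function.onFun]
    rw [Set.disjoint_left]
    intro ω h1 h2
    simp only [Set.mem_setOf_eq] at h1 h2
    exact hne (h1 ▸ h2 ▸ rfl)
  · intro v hv
    rw [cyl_eq]
    exact cylM _ _


lemma diff_le (β : ℝ) (hβ0 : 0 ≤ β) (hβ1 : β ≤ 1) (k : ℕ) (hk : 1 ≤ k) :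
    ((k:ℝ)+1)^β - (k:ℝ)^β ≤ (k:ℝ)^(β-1) := by
  have hk0 : (0:ℝ) < (k:ℝ) := by exact_mod_cast hk
  have h1 : ((k:ℝ)+1) = (k:ℝ) * (1 + 1/(k:ℝ)) := by field_simp
  have h2 : ((k:ℝ)+1)^β = (k:ℝ)^β * (1 + 1/(k:ℝ))^β := by
    rw [h1, Real.mul_rpow (le_of_lt hk0) (by positivity)]
  have hneg1 : (-1:ℝ) ≤ 1/(k:ℝ) := by
    have h0 : (0:ℝ) ≤ 1/(k:ℝ) := by positivity
    linarith
  have h3 : (1 + 1/(k:ℝ))^β ≤ 1 + β * (1/(k:ℝ)) :=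
    rpow_one_add_le_one_add_mul_self hneg1 hβ0 hβ1
  have h4 : ((k:ℝ)+1)^β - (k:ℝ)^β ≤ (k:ℝ)^β * (β * (1/(k:ℝ))) := by
    rw [h2]
    have := mul_le_mul_of_nonneg_left h3 (Real.rpow_nonneg (le_of_lt hk0) β)
    nlinarith [this]
  have h5 : (k:ℝ)^β * (β * (1/(k:ℝ))) = β * ((k:ℝ)^β * ((k:ℝ))⁻¹) := by ring
  have h6 : (k:ℝ)^β * ((k:ℝ))⁻¹ = (k:ℝ)^(β-1) := by
    rw [show β - 1 = β + (-1) from by ring, Real.rpow_add hk0, Real.rpow_neg_one]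
  calc ((k:ℝ)+1)^β - (k:ℝ)^β ≤ (k:ℝ)^β * (β * (1/(k:ℝ))) := h4
    _ = β * ((k:ℝ)^(β-1)) := by rw [h5, h6]
    _ ≤ 1 * ((k:ℝ)^(β-1)) := by
        apply mul_le_mul_of_nonneg_right (by linarith) (Real.rpow_nonneg (le_of_lt hk0) _)
    _ = (k:ℝ)^(β-1) := one_mul _

lemma summable_c (K β : ℝ) (hK : 0 ≤ K) (hβ0 : 0 ≤ β) (hβ : β < 1/2) :
    Summable (fun k : ℕ => (((k:ℝ)+1)^β - (k:ℝ)^β) * (K / Real.sqrt ((k:ℝ)+1))) := by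
  have hβ1 : β ≤ 1 := by linarith
  rw [← summable_nat_add_iff 1]
  have hsum : Summable (fun k : ℕ => K * (((k+1:ℕ):ℝ))^(β - 3/2)) := by
    apply Summable.mul_left
    have h32 : β - 3/2 < -1 := by linarith
    have := (Real.summable_nat_rpow (p := β - 3/2)).mpr h32
    exact ((summable_nat_add_iff 1).mpr this)
  apply Summable.of_nonneg_of_le _ _ hsum
  · intro k
    apply mul_nonneg
    · have : ((k+1:ℕ):ℝ) ≤ ((k+1:ℕ):ℝ) + 1 := by linarith
      have := Real.rpow_le_rpow (by positivity) this hβ0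
      linarith
    · positivity
  · intro k
    set x : ℝ := ((k+1:ℕ):ℝ) with hx
    have hx1 : (1:ℝ) ≤ x := by rw [hx]; exact_mod_cast Nat.succ_le_succ (Nat.zero_le k)
    have hx0 : (0:ℝ) < x := by linarith
    have hd : (x+1)^β - x^β ≤ x^(β-1) := diff_le β hβ0 hβ1 (k+1) (Nat.succ_le_succ (Nat.zero_le k))
    have h7 : K / Real.sqrt (x+1) ≤ K / Real.sqrt x := by
      apply div_le_div_of_nonneg_left hK (Real.sqrt_pos.mpr hx0) (Real.sqrt_le_sqrt (by linarith))
    have hds : 0 ≤ (x+1)^β - x^β := by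
      have := Real.rpow_le_rpow (le_of_lt hx0) (by linarith : x ≤ x + 1) hβ0
      linarith
    have hKs : 0 ≤ K / Real.sqrt (x+1) := by positivity
    calc ((x+1)^β - x^β) * (K / Real.sqrt (x+1))
        ≤ x^(β-1) * (K / Real.sqrt x) := by
          apply mul_le_mul hd h7 hKs (Real.rpow_nonneg (le_of_lt hx0) _)
      _ = K * x^(β-3/2) := by
          rw [Real.sqrt_eq_rpow, div_eq_mul_inv, ← Real.rpow_neg (le_of_lt hx0)]
          rw [show β - 3/2 = (β-1) + (-(1/2)) from by ring, Real.rpow_add hx0]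
          ring



def P (m t : ℕ) (ω : ℤ → Bool) : Prop :=
  ((Finset.Icc (0 : ℤ) (t:ℤ)).filter (fun k => ω k = false)).card
    ≤ (m - 1) * ((Finset.Icc (0 : ℤ) (t:ℤ)).filter (fun k => ω k = true)).card

lemma measurable_cardF (t : ℕ) (b : Bool) :
    Measurable (fun ω : ℤ → Bool => ((Finset.Icc (0 : ℤ) (t:ℤ)).filter (fun k => ω k = b)).card) := by
  have he : (fun ω : ℤ → Bool => ((Finset.Icc (0 : ℤ) (t:ℤ)).filter (fun k => ω k = b)).card)
      = fun ω => ∑ k ∈ Finset.Icc (0 : ℤ) (t:ℤ), if ω k = b then 1 else 0 := by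
    funext ω; rw [Finset.card_filter]
  rw [he]
  apply Finset.measurable_sum
  intro k _
  exact Measurable.comp (g := fun x : Bool => if x = b then (1:ℕ) else 0)
    measurable_from_top (measurable_pi_apply k)

lemma measurable_le_nat {α : Type*} [MeasurableSpace α] {f g : α → ℕ}
    (hf : Measurable f) (hg : Measurable g) : MeasurableSet {x | f x ≤ g x} := by
  have he : {x | f x ≤ g x} = ⋃ (a : ℕ), ⋃ (b : ℕ), ⋃ (_ : a ≤ b), (f ⁻¹' {a} ∩ g ⁻¹' {b}) := by
    ext x
    simp only [Set.mem_setOf_eq, Set.mem_iUnion, Set.mem_inter_iff, Set.mem_preimage,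
      Set.mem_singleton_iff]
    constructor
    · intro h; exact ⟨f x, g x, h, rfl, rfl⟩
    · rintro ⟨a, b, hab, ha, hb⟩; omega
  rw [he]
  exact MeasurableSet.iUnion fun a => MeasurableSet.iUnion fun b => MeasurableSet.iUnion fun _ =>
    (hf (measurableSet_singleton a)).inter (hg (measurableSet_singleton b))

lemma measurable_P (m t : ℕ) : MeasurableSet {ω : ℤ → Bool | P m t ω} := by
  apply measurable_le_nat (measurable_cardF t false)
  exact Measurable.comp (g := fun x : ℕ => (m-1) * x) measurable_from_top (measurable_cardF t true)

lemma measT (m : ℕ) (T : (ℤ → Bool) → ℕ)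
    (hT : ∀ ω, T ω = sInf {t : ℕ | P m t ω}) (k : ℕ) :
    MeasurableSet {ω : ℤ → Bool | k < T ω} := by
  have hcompl : {ω : ℤ → Bool | k < T ω} = ({ω : ℤ → Bool | T ω ≤ k})ᶜ := by
    ext ω; simp [not_le]
  have he : {ω : ℤ → Bool | T ω ≤ k}
      = (⋃ t, ⋃ (_ : t ≤ k), {ω : ℤ → Bool | P m t ω}) ∪ (⋂ t, {ω : ℤ → Bool | P m t ω}ᶜ) := by
    ext ω
    simp only [Set.mem_setOf_eq, Set.mem_union, Set.mem_iUnion, Set.mem_iInter,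
      Set.mem_compl_iff]
    constructor
    · intro h
      by_cases hA : {t : ℕ | P m t ω}.Nonempty
      · left
        refine ⟨T ω, h, ?_⟩
        rw [hT ω]
        exact Nat.sInf_mem hA
      · right
        intro t ht
        exact hA ⟨t, ht⟩
    · rintro (⟨t, ht, hP⟩ | hall)
      · rw [hT ω]
        exact le_trans (Nat.sInf_le hP) ht
      · rw [hT ω]
        have : {t : ℕ | P m t ω} = ∅ := Set.eq_empty_iff_forall_notMem.mpr hall
        rw [this, Nat.sInf_empty]
        exact Nat.zero_le k
  rw [hcompl, he]
  apply MeasurableSet.compl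
  apply MeasurableSet.union
  · exact MeasurableSet.iUnion fun t => MeasurableSet.iUnion fun _ => measurable_P m t
  · exact MeasurableSet.iInter fun t => (measurable_P m t).compl

open scoped Classical in
lemma tail_measure (m : ℕ) (hm : 2 ≤ m) (p : ℝ) (hp : p = 1 / m)
    (μ : Measure (ℤ → Bool)) [IsProbabilityMeasure μ]
    (hμ : ∀ (s : Finset ℤ) (f : ℤ → Bool),
      μ {ω | ∀ i ∈ s, ω i = f i}
        = ∏ i ∈ s, (if f i then ENNReal.ofReal p else ENNReal.ofReal (1 - p)))
    (μ₀ : Measure (ℤ → Bool)) (hμ₀ : μ₀ = μ[|{ω | ω 0 = false}])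
    (T : (ℤ → Bool) → ℕ) (hT : ∀ ω, T ω = sInf {t : ℕ | P m t ω}) (n : ℕ) :
    μ₀ {ω | n < T ω}
      ≤ ENNReal.ofReal (((1-p)⁻¹ * Real.sqrt ((m:ℝ)-1)) / Real.sqrt ((n:ℝ)+1)) := by
  have hm2 : (2:ℝ) ≤ (m:ℝ) := by exact_mod_cast hm
  have hmpos : (0:ℝ) < m := by linarith
  have hp0 : 0 ≤ p := by rw [hp]; positivity
  have hphalf : p ≤ 1/2 := by
    rw [hp, div_le_div_iff₀ hmpos (by norm_num)]
    linarith
  have hp1 : p ≤ 1 := by linarith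
  have h1p : (0:ℝ) < 1 - p := by linarith
  have hpm : p * (m:ℝ) = 1 := by rw [hp]; field_simp
  have hCmeas : MeasurableSet {ω : ℤ → Bool | ω 0 = false} := by
    have he0 : {ω : ℤ → Bool | ω 0 = false} = (fun ω : ℤ → Bool => ω 0) ⁻¹' {false} := rfl
    rw [he0]
    exact (measurable_pi_apply (0:ℤ)) (measurableSet_singleton false)
  have hμC : μ {ω : ℤ → Bool | ω 0 = false} = ENNReal.ofReal (1-p) := by
    have he : {ω : ℤ → Bool | ω 0 = false}
        = {ω : ℤ → Bool | ∀ i ∈ ({0} : Finset ℤ), ω i = (fun _ => false) i} := by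
      ext ω; simp
    rw [he, hμ ({0} : Finset ℤ) (fun _ => false), Finset.prod_singleton]
    simp
  have hsub : {ω : ℤ → Bool | n < T ω} ⊆ {ω : ℤ → Bool | BJ m n (wrd n ω) 0} := by
    intro ω hω
    simp only [Set.mem_setOf_eq] at hω ⊢
    apply T_gt_imp_Bal m n hm ω
    intro t ht hmem
    have h1 : T ω ≤ t := by
      rw [hT ω]
      exact Nat.sInf_le hmem
    omega
  have hbal : μ {ω : ℤ → Bool | BJ m n (wrd n ω) 0}
      ≤ ENNReal.ofReal (Real.sqrt ((m:ℝ)-1) / Real.sqrt ((n:ℝ)+1)) := by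
    rw [bal_measure hp0 hp1 μ hμ m n]
    exact ENNReal.ofReal_le_ofReal (tail_sum_bound hm hpm hp0 hp1 n)
  rw [hμ₀, ProbabilityTheory.cond_apply hCmeas]
  calc (μ {ω : ℤ → Bool | ω 0 = false})⁻¹ * μ ({ω : ℤ → Bool | ω 0 = false} ∩ {ω | n < T ω})
      ≤ (μ {ω : ℤ → Bool | ω 0 = false})⁻¹
          * ENNReal.ofReal (Real.sqrt ((m:ℝ)-1) / Real.sqrt ((n:ℝ)+1)) := by
        apply mul_le_mul_right
        exact le_trans (measure_mono (le_trans Set.inter_subset_right hsub)) hbal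
    _ = ENNReal.ofReal ((1-p)⁻¹) * ENNReal.ofReal (Real.sqrt ((m:ℝ)-1) / Real.sqrt ((n:ℝ)+1)) := by
        rw [hμC, ← ENNReal.ofReal_inv_of_pos h1p]
    _ = ENNReal.ofReal ((1-p)⁻¹ * (Real.sqrt ((m:ℝ)-1) / Real.sqrt ((n:ℝ)+1))) :=
        (ENNReal.ofReal_mul (by positivity)).symm
    _ = ENNReal.ofReal (((1-p)⁻¹ * Real.sqrt ((m:ℝ)-1)) / Real.sqrt ((n:ℝ)+1)) := by
        rw [mul_div_assoc]

end ExtraHeadAux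

end

/-- **Finite `β`-moments of the greedy extra head scheme for `β < 1/2`**
(instance of Theorem 3(ii)).  Let `m ≥ 2`, `p = 1/m`, let `μ` be the law of a doubly
infinite i.i.d. Bernoulli(p) sequence of coins and `μ₀` its conditioning on
`{ω 0 = false}`.  With
`T ω = min {t ≥ 0 : #{k ∈ [0,t] : ω k = false} ≤ (m-1) · #{k ∈ [0,t] : ω k = true}}`,
one has `∫ T^β dμ₀ < ∞` for every `0 ≤ β < 1/2`. -/
theorem extra_head_greedy_finite_moments (m : ℕ) (hm : 2 ≤ m) (p : ℝ) (hp : p = 1 / m)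
    (μ : Measure (ℤ → Bool)) [IsProbabilityMeasure μ]
    (hμ : ∀ (s : Finset ℤ) (f : ℤ → Bool),
      μ {ω | ∀ i ∈ s, ω i = f i}
        = ∏ i ∈ s, (if f i then ENNReal.ofReal p else ENNReal.ofReal (1 - p)))
    (μ₀ : Measure (ℤ → Bool)) (hμ₀ : μ₀ = μ[|{ω | ω 0 = false}])
    (T : (ℤ → Bool) → ℕ)
    (hT : ∀ ω, T ω = sInf {t : ℕ |
      ((Finset.Icc (0 : ℤ) t).filter (fun k => ω k = false)).card
        ≤ (m - 1) * ((Finset.Icc (0 : ℤ) t).filter (fun k => ω k = true)).card}) :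
    ∀ β : ℝ, 0 ≤ β → β < 1 / 2 →
      ∫⁻ ω, (T ω : ℝ≥0∞) ^ β ∂μ₀ < ⊤ := by
  classical
  have hm2 : (2:ℝ) ≤ (m:ℝ) := by exact_mod_cast hm
  have hmpos : (0:ℝ) < m := by linarith
  have hp0 : 0 ≤ p := by rw [hp]; positivity
  have hphalf : p ≤ 1/2 := by
    rw [hp, div_le_div_iff₀ hmpos (by norm_num)]
    linarith
  have hp1 : p ≤ 1 := by linarith
  have h1p : (0:ℝ) < 1 - p := by linarith
  have hT' : ∀ ω, T ω = sInf {t : ℕ | ExtraHeadAux.P m t ω} := hT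
  have hCmeas : MeasurableSet {ω : ℤ → Bool | ω 0 = false} := by
    have he0 : {ω : ℤ → Bool | ω 0 = false} = (fun ω : ℤ → Bool => ω 0) ⁻¹' {false} := rfl
    rw [he0]
    exact (measurable_pi_apply (0:ℤ)) (measurableSet_singleton false)
  have hμC : μ {ω : ℤ → Bool | ω 0 = false} = ENNReal.ofReal (1-p) := by
    have he : {ω : ℤ → Bool | ω 0 = false}
        = {ω : ℤ → Bool | ∀ i ∈ ({0} : Finset ℤ), ω i = (fun _ => false) i} := by
      ext ω; simp
    rw [he, hμ ({0} : Finset ℤ) (fun _ => false), Finset.prod_singleton]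
    simp
  set K : ℝ := (1-p)⁻¹ * Real.sqrt ((m:ℝ)-1) with hK
  have hK0 : 0 ≤ K := by
    rw [hK]
    positivity
  intro β hβ0 hβlt
  have hβ1 : β ≤ 1 := by linarith
  rcases eq_or_lt_of_le hβ0 with hβeq | hβpos
  · -- β = 0 case
    simp only [← hβeq, ENNReal.rpow_zero]
    rw [lintegral_one, hμ₀, ProbabilityTheory.cond_apply hCmeas, Set.inter_univ, hμC]
    rw [ENNReal.inv_mul_cancel (by simp only [ne_eq, ENNReal.ofReal_eq_zero, not_le]; linarith)
      ENNReal.ofReal_ne_top]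
    exact ENNReal.one_lt_top
  · -- 0 < β
    set A : ℕ → ℝ≥0∞ := fun k => ((k+1:ℕ):ℝ≥0∞)^β - ((k:ℕ):ℝ≥0∞)^β with hA
    have hg : Monotone (fun k : ℕ => ((k:ℕ):ℝ≥0∞)^β) := fun a b hab =>
      ENNReal.rpow_le_rpow (by exact_mod_cast hab) hβ0
    have htele : ∀ N : ℕ, (∑ k ∈ Finset.range N, (((k+1:ℕ):ℝ≥0∞)^β - ((k:ℕ):ℝ≥0∞)^β))
        = ((N:ℕ):ℝ≥0∞)^β := by
      intro N
      induction N with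
      | zero => simp [ENNReal.zero_rpow_of_pos hβpos]
      | succ N ih =>
          rw [Finset.sum_range_succ, ih, add_comm, tsub_add_cancel_of_le (hg (Nat.le_succ N))]
    have hpt : ∀ ω, (T ω : ℝ≥0∞)^β
        = ∑' k, Set.indicator {ω' : ℤ → Bool | k < T ω'} (fun _ => A k) ω := by
      intro ω
      rw [tsum_eq_sum (s := Finset.range (T ω))
        (fun k hk => Set.indicator_of_notMem (by simpa using hk) _)]
      rw [Finset.sum_congr rfl (fun k hk => Set.indicator_of_mem (by simpa using hk) _)]
      simp only [hA]
      rw [htele (T ω)]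
    rw [lintegral_congr hpt,
      lintegral_tsum (fun k =>
        (measurable_const.indicator (ExtraHeadAux.measT m T hT' k)).aemeasurable)]
    have hint : ∀ k : ℕ,
        ∫⁻ ω, Set.indicator {ω' : ℤ → Bool | k < T ω'} (fun _ => A k) ω ∂μ₀
          = A k * μ₀ {ω' : ℤ → Bool | k < T ω'} := fun k =>
      lintegral_indicator_const (ExtraHeadAux.measT m T hT' k) _
    rw [tsum_congr hint]
    -- per-term bound
    have hdk : ∀ k : ℕ, (0:ℝ) ≤ ((k:ℝ)+1)^β - (k:ℝ)^β := by
      intro k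
      have := Real.rpow_le_rpow (Nat.cast_nonneg k) (by linarith : (k:ℝ) ≤ (k:ℝ)+1) hβ0
      linarith
    have hAk : ∀ k : ℕ, A k = ENNReal.ofReal (((k:ℝ)+1)^β - (k:ℝ)^β) := by
      intro k
      have e1 : ((k+1:ℕ):ℝ≥0∞) = ENNReal.ofReal ((k:ℝ)+1) := by
        rw [← ENNReal.ofReal_natCast]
        congr 1
        push_cast
        ring
      have e2 : ((k:ℕ):ℝ≥0∞) = ENNReal.ofReal ((k:ℝ)) := (ENNReal.ofReal_natCast k).symm
      rw [hA]
      simp only []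
      rw [e1, e2, ENNReal.ofReal_rpow_of_nonneg (by positivity) hβ0,
        ENNReal.ofReal_rpow_of_nonneg (Nat.cast_nonneg k) hβ0,
        ← ENNReal.ofReal_sub _ (Real.rpow_nonneg (Nat.cast_nonneg k) β)]
    have hterm : ∀ k : ℕ, A k * μ₀ {ω' : ℤ → Bool | k < T ω'}
        ≤ ENNReal.ofReal ((((k:ℝ)+1)^β - (k:ℝ)^β) * (K / Real.sqrt ((k:ℝ)+1))) := by
      intro k
      have htail := ExtraHeadAux.tail_measure m hm p hp μ hμ μ₀ hμ₀ T hT' k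
      calc A k * μ₀ {ω' : ℤ → Bool | k < T ω'}
          ≤ A k * ENNReal.ofReal (K / Real.sqrt ((k:ℝ)+1)) := by
            apply mul_le_mul_right
            exact le_trans htail (by rw [hK])
        _ = ENNReal.ofReal ((((k:ℝ)+1)^β - (k:ℝ)^β) * (K / Real.sqrt ((k:ℝ)+1))) := by
            rw [hAk k, ← ENNReal.ofReal_mul (hdk k)]
    have hsummable := ExtraHeadAux.summable_c K β hK0 hβ0 hβlt
    have hcnn : ∀ k : ℕ, (0:ℝ) ≤ (((k:ℝ)+1)^β - (k:ℝ)^β) * (K / Real.sqrt ((k:ℝ)+1)) := by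
      intro k
      apply mul_nonneg (hdk k)
      positivity
    calc ∑' k, A k * μ₀ {ω' : ℤ → Bool | k < T ω'}
        ≤ ∑' (k : ℕ), ENNReal.ofReal ((((k:ℝ)+1)^β - (k:ℝ)^β) * (K / Real.sqrt ((k:ℝ)+1))) :=
          ENNReal.tsum_le_tsum hterm
      _ = ENNReal.ofReal (∑' (k : ℕ), (((k:ℝ)+1)^β - (k:ℝ)^β) * (K / Real.sqrt ((k:ℝ)+1))) :=
          (ENNReal.ofReal_tsum_of_nonneg hcnn hsummable).symm
      _ < ⊤ := ENNReal.ofReal_lt_top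
end

section
/- Let a : ℕ → [0,∞) be nondecreasing and subadditive (a(m+n) ≤ a(m) + a(n) for all m, n), let S₁, S₂, …, Sₙ be independent identically distributed random variables taking values in ℕ, and let 0 < β ≤ α ≤ 1. Then E[a(S₁ + ⋯ + Sₙ)^β] ≤ n^{β/α} · (E[a(S₁)^α])^{β/α}. -/
open MeasureTheory ProbabilityTheory
open scoped ENNReal

/-- Jensen-type inequality for `rpow` with exponent in `(0,1]` on a probability measure,
obtained from Hölder's inequality. -/
lemma lintegral_rpow_le_rpow_lintegral_aux
    {Ω : Type*} [MeasurableSpace Ω] (μ : Measure Ω) [IsProbabilityMeasure μ]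
    {f : Ω → ℝ≥0∞} (hf : Measurable f) {p : ℝ} (hp : 0 < p) (hp1 : p ≤ 1) :
    ∫⁻ ω, f ω ^ p ∂μ ≤ (∫⁻ ω, f ω ∂μ) ^ p := by
  rcases eq_or_lt_of_le hp1 with rfl | hp1
  · simp
  have hq : (1/p).HolderConjugate (1/(1-p)) := by
    constructor
    · rw [one_div, one_div, inv_inv, inv_inv, inv_one]; ring
    · positivity
    · have : 0 < 1 - p := by linarith
      positivity
  have := ENNReal.lintegral_mul_le_Lp_mul_Lq μ hq (f := fun ω => f ω ^ p)
    (g := fun _ => 1) (hf.pow_const p).aemeasurable aemeasurable_const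
  simpa [← ENNReal.rpow_natCast, ← ENNReal.rpow_mul, mul_one_div, div_div_eq_mul_div,
    div_self hp.ne', mul_inv_cancel₀ hp.ne', one_div_one_div, lintegral_one,
    measure_univ] using this

/-- Subadditivity over a sum, for a nonempty range. -/
lemma a_sum_le_sum_a (a : ℕ → ℝ) (hsub : ∀ j k : ℕ, a (j + k) ≤ a j + a k)
    (x : ℕ → ℕ) : ∀ n : ℕ, 1 ≤ n →
    a (∑ i ∈ Finset.range n, x i) ≤ ∑ i ∈ Finset.range n, a (x i) := by
  intro n hn
  induction n with
  | zero => omega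
  | succ m ih =>
    rcases Nat.eq_or_lt_of_le hn with h | h
    · simp [← h]
    · have hm : 1 ≤ m := by omega
      rw [Finset.sum_range_succ, Finset.sum_range_succ]
      calc a (∑ i ∈ Finset.range m, x i + x m)
          ≤ a (∑ i ∈ Finset.range m, x i) + a (x m) := hsub _ _
        _ ≤ (∑ i ∈ Finset.range m, a (x i)) + a (x m) := by
            gcongr; exact ih hm

/-- `(∑ f i) ^ p ≤ ∑ (f i) ^ p` for `0 ≤ p ≤ 1` in `ℝ≥0∞`. -/
lemma ennreal_sum_rpow_le (f : ℕ → ℝ≥0∞) {p : ℝ} (hp : 0 ≤ p) (hp1 : p ≤ 1) (n : ℕ)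
    (hn : 1 ≤ n) :
    (∑ i ∈ Finset.range n, f i) ^ p ≤ ∑ i ∈ Finset.range n, f i ^ p := by
  induction n with
  | zero => omega
  | succ m ih =>
    rcases Nat.eq_or_lt_of_le hn with h | h
    · simp [← h]
    · have hm : 1 ≤ m := by omega
      rw [Finset.sum_range_succ, Finset.sum_range_succ]
      calc (∑ i ∈ Finset.range m, f i + f m) ^ p
          ≤ (∑ i ∈ Finset.range m, f i) ^ p + f m ^ p :=
            ENNReal.rpow_add_le_add_rpow _ _ hp hp1
        _ ≤ (∑ i ∈ Finset.range m, f i ^ p) + f m ^ p := by gcongr; exact ih hm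

/-- **Key moment estimate in the proof of Theorem 3(ii)**.
Let `a : ℕ → [0,∞)` be nondecreasing and subadditive, let `S 0, …, S (n-1)` be i.i.d.
`ℕ`-valued random variables and `0 < β ≤ α ≤ 1`.  Then
`E[a(S 0 + ⋯ + S (n-1))^β] ≤ n^{β/α} · (E[a(S 0)^α])^{β/α}`. -/
theorem subadditive_green_moment_bound
    {Ω : Type*} [MeasurableSpace Ω] (μ : Measure Ω) [IsProbabilityMeasure μ]
    (a : ℕ → ℝ) (ha0 : ∀ k, 0 ≤ a k) (hmono : Monotone a)
    (hsub : ∀ j k : ℕ, a (j + k) ≤ a j + a k)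
    (S : ℕ → Ω → ℕ) (hmeas : ∀ i, Measurable (S i))
    (hindep : iIndepFun S μ)
    (hident : ∀ i, IdentDistrib (S i) (S 0) μ μ)
    (n : ℕ) (hn : 1 ≤ n)
    (α β : ℝ) (hβ : 0 < β) (hβα : β ≤ α) (hα : α ≤ 1) :
    ∫⁻ ω, ENNReal.ofReal (a (∑ i ∈ Finset.range n, S i ω) ^ β) ∂μ
      ≤ (n : ℝ≥0∞) ^ (β / α)
        * (∫⁻ ω, ENNReal.ofReal (a (S 0 ω) ^ α) ∂μ) ^ (β / α) := by
  have hα0 : 0 < α := hβ.trans_le hβα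
  set p : ℝ := β / α with hp_def
  have hp0 : 0 < p := div_pos hβ hα0
  have hp1 : p ≤ 1 := by
    rw [div_le_one hα0]; exact hβα
  -- the α-power integrand
  set f : Ω → ℝ≥0∞ := fun ω => ENNReal.ofReal (a (∑ i ∈ Finset.range n, S i ω) ^ α) with hf_def
  have hf_meas : Measurable f := by
    apply Measurable.ennreal_ofReal
    exact (measurable_from_top (f := fun k : ℕ => a k ^ α)).comp
      (Finset.measurable_sum _ (fun i _ => hmeas i))
  -- rewrite the β-power integrand as f ^ p
  have h_eq : ∀ ω, ENNReal.ofReal (a (∑ i ∈ Finset.range n, S i ω) ^ β) = f ω ^ p := by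
    intro ω
    show _ = ENNReal.ofReal (a (∑ i ∈ Finset.range n, S i ω) ^ α) ^ p
    rw [ENNReal.ofReal_rpow_of_nonneg (Real.rpow_nonneg (ha0 _) α) hp0.le,
      ← Real.rpow_mul (ha0 _), show α * p = β by rw [hp_def]; field_simp]
  simp only [h_eq]
  -- Jensen
  have hJ : ∫⁻ ω, f ω ^ p ∂μ ≤ (∫⁻ ω, f ω ∂μ) ^ p :=
    lintegral_rpow_le_rpow_lintegral_aux μ hf_meas hp0 hp1
  refine hJ.trans ?_
  -- subadditivity + concavity pointwise
  have h_pt : ∀ ω, f ω ≤ ∑ i ∈ Finset.range n, ENNReal.ofReal (a (S i ω) ^ α) := by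
    intro ω
    have h1 : a (∑ i ∈ Finset.range n, S i ω) ≤ ∑ i ∈ Finset.range n, a (S i ω) :=
      a_sum_le_sum_a a hsub (fun i => S i ω) n hn
    have h2 : f ω ≤ (∑ i ∈ Finset.range n, ENNReal.ofReal (a (S i ω))) ^ α := by
      show ENNReal.ofReal (a (∑ i ∈ Finset.range n, S i ω) ^ α) ≤ _
      rw [← ENNReal.ofReal_sum_of_nonneg (fun i _ => ha0 _),
        ENNReal.ofReal_rpow_of_nonneg (Finset.sum_nonneg (fun i _ => ha0 _)) hα0.le]
      exact ENNReal.ofReal_le_ofReal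
        (Real.rpow_le_rpow (ha0 _) h1 hα0.le)
    refine h2.trans ?_
    calc (∑ i ∈ Finset.range n, ENNReal.ofReal (a (S i ω))) ^ α
        ≤ ∑ i ∈ Finset.range n, ENNReal.ofReal (a (S i ω)) ^ α :=
          ennreal_sum_rpow_le _ hα0.le hα n hn
      _ = ∑ i ∈ Finset.range n, ENNReal.ofReal (a (S i ω) ^ α) := by
          refine Finset.sum_congr rfl fun i _ => ?_
          exact ENNReal.ofReal_rpow_of_nonneg (ha0 _) hα0.le
  -- integrate
  have h_int : ∫⁻ ω, f ω ∂μ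
      ≤ (n : ℝ≥0∞) * ∫⁻ ω, ENNReal.ofReal (a (S 0 ω) ^ α) ∂μ := by
    calc ∫⁻ ω, f ω ∂μ
        ≤ ∫⁻ ω, ∑ i ∈ Finset.range n, ENNReal.ofReal (a (S i ω) ^ α) ∂μ :=
          lintegral_mono h_pt
      _ = ∑ i ∈ Finset.range n, ∫⁻ ω, ENNReal.ofReal (a (S i ω) ^ α) ∂μ := by
          refine lintegral_finset_sum _ fun i _ => ?_
          exact (measurable_from_top (f := fun k : ℕ =>
            ENNReal.ofReal (a k ^ α))).comp (hmeas i)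
      _ = ∑ i ∈ Finset.range n, ∫⁻ ω, ENNReal.ofReal (a (S 0 ω) ^ α) ∂μ := by
          refine Finset.sum_congr rfl fun i _ => ?_
          exact ((hident i).comp
            (measurable_from_top (f := fun k : ℕ => ENNReal.ofReal (a k ^ α)))).lintegral_eq
      _ = (n : ℝ≥0∞) * ∫⁻ ω, ENNReal.ofReal (a (S 0 ω) ^ α) ∂μ := by
          rw [Finset.sum_const, Finset.card_range, nsmul_eq_mul]
  calc (∫⁻ ω, f ω ∂μ) ^ p
      ≤ ((n : ℝ≥0∞) * ∫⁻ ω, ENNReal.ofReal (a (S 0 ω) ^ α) ∂μ) ^ p :=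
        ENNReal.rpow_le_rpow h_int hp0.le
    _ = (n : ℝ≥0∞) ^ p * (∫⁻ ω, ENNReal.ofReal (a (S 0 ω) ^ α) ∂μ) ^ p :=
        ENNReal.mul_rpow_of_nonneg _ _ hp0.le
end
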